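/- arXiv:2204.12871 — 3 statements merged into one kernel-verified Lean document; each statement's English description precedes it below -/
import Mathlib

section
/- Let B be a rare basis in ℝⁿ. Suppose there exist an increasing sequence of natural numbers k_j ≥ n and a sequence of sets Ω_j ⊂ Ω_{n,k_j} such that B is Ω_j-complete for every j ∈ ℕ and inf_{j∈ℕ} card(Ω_j)/k_j^{n−1} > 0. Then for every j ∈ ℕ there exists a bounded set E_j ⊂ ℝⁿ of positive Lebesgue measure such that |{x ∈ ℝⁿ : M_B(χ_{E_j})(x) ≥ 1/2^{k_j}}| ≥ c_B · k_j^{n−1} · 2^{k_j} · |E_j|, where c_B = cₙ · inf_{j∈ℕ} card(Ω_j)/k_j^{n−1} and cₙ > 0 depends only on n. -/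
open MeasureTheory Set
open scoped ENNReal

noncomputable section

/-- An axis-parallel interval (box) in `ℝⁿ`, given by its left and right endpoints. -/
structure BoxInterval (n : ℕ) where
  a : Fin n → ℝ
  b : Fin n → ℝ
  hab : ∀ j, a j < b j

namespace BoxInterval

/-- The underlying set of a box. -/
def toSet {n : ℕ} (R : BoxInterval n) : Set (Fin n → ℝ) :=
  Set.univ.pi fun j => Set.Icc (R.a j) (R.b j)

/-- The side length of a box in direction `j`. -/
def side {n : ℕ} (R : BoxInterval n) (j : Fin n) : ℝ := R.b j - R.a j

/-- Translation of a box by a vector `v`. -/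
def translate {n : ℕ} (R : BoxInterval n) (v : Fin n → ℝ) : BoxInterval n where
  a := fun j => R.a j + v j
  b := fun j => R.b j + v j
  hab := fun j => by linarith [R.hab j]

end BoxInterval

/-- A rare basis in `ℝⁿ`: a nonempty translation-invariant collection of intervals. -/
def IsRareBasis {n : ℕ} (B : Set (BoxInterval n)) : Prop :=
  B.Nonempty ∧ ∀ R ∈ B, ∀ v : Fin n → ℝ, R.translate v ∈ B

/-- The geometric maximal operator `M_B` associated with a collection `B` of boxes:
`M_B f (x) = sup { (1/|R|) ∫_R |f| : x ∈ R ∈ B }`. -/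
def maxOp {n : ℕ} (B : Set (BoxInterval n)) (f : (Fin n → ℝ) → ℝ)
    (x : Fin n → ℝ) : ℝ≥0∞ :=
  ⨆ (R : BoxInterval n) (_ : R ∈ B) (_ : x ∈ R.toSet),
    (∫⁻ y in R.toSet, ENNReal.ofReal |f y| ∂volume) / volume R.toSet

/-- The spectrum `W_B ⊂ ℤⁿ` of a collection of boxes: all tuples
`(⌈log₂ |R₁|⌉, …, ⌈log₂ |Rₙ|⌉)` over boxes `R₁ × ⋯ × Rₙ ∈ B`. -/
def spectrumB {n : ℕ} (B : Set (BoxInterval n)) : Set (Fin n → ℤ) :=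
  {w | ∃ R ∈ B, ∀ j, w j = ⌈Real.logb 2 (R.side j)⌉}

/-- The slice `W_t` of `W ⊂ ℤ^{k+1}` over `t ∈ ℤᵏ`. -/
def sliceZ {k : ℕ} (W : Set (Fin (k + 1) → ℤ)) (t : Fin k → ℤ) : Set ℤ :=
  {τ | Fin.snoc t τ ∈ W}

/-- `W` is a net for `S` in `ℤ^{k+1}`: every slice of `W` is a one-dimensional
net for the corresponding slice of `S`. -/
def IsNetMulti {k : ℕ} (W S : Set (Fin (k + 1) → ℤ)) : Prop :=
  ∀ t : Fin k → ℤ, ∃ N : ℕ, ∀ τ ∈ sliceZ S t, ∃ w ∈ sliceZ W t, |τ - w| ≤ (N : ℤ)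

/-- Projection of `W ⊂ ℤⁿ` onto the first `k` coordinates. -/
def projZ {n : ℕ} (k : ℕ) (hk : k ≤ n) (W : Set (Fin n → ℤ)) : Set (Fin k → ℤ) :=
  (fun w (i : Fin k) => w (Fin.castLE hk i)) '' W

/-- `W ⊂ ℤⁿ` is dense in `S₁ × ⋯ × Sₙ`: for each `k`, `π_{k+1}(W)` is a net for
`π_k(W) × S_{k+1}`. -/
def IsDenseIn {n : ℕ} (W : Set (Fin n → ℤ)) (S : Fin n → Set ℤ) : Prop :=
  ∀ k : Fin n,
    IsNetMulti (projZ (k.val + 1) k.isLt W)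
      {v : Fin (k.val + 1) → ℤ |
        Fin.init v ∈ projZ k.val (Nat.le_of_lt k.isLt) W ∧ v (Fin.last k.val) ∈ S k}

/-- `Ω_{n,k}`: the set of `n`-tuples of positive integers summing to `k`. -/
def OmegaNK (n k : ℕ) : Set (Fin n → ℕ) :=
  {m | (∀ j, 1 ≤ m j) ∧ ∑ j, m j = k}

/-- The smallest box concentric with `R`, containing `R`, with dyadic side lengths. -/
def dyadicHull {n : ℕ} (R : BoxInterval n) : BoxInterval n where
  a := fun j => (R.a j + R.b j) / 2 - (2:ℝ) ^ ⌈Real.logb 2 (R.side j)⌉ / 2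
  b := fun j => (R.a j + R.b j) / 2 + (2:ℝ) ^ ⌈Real.logb 2 (R.side j)⌉ / 2
  hab := fun j => by
    have h : (0:ℝ) < (2:ℝ) ^ ⌈Real.logb 2 (R.side j)⌉ := by positivity
    linarith

/-- The dyadic skeleton `B_d` of a collection `B`. -/
def dyadicSkeleton {n : ℕ} (B : Set (BoxInterval n)) : Set (BoxInterval n) :=
  {Rd | ∃ R ∈ B, Rd = dyadicHull R}

/-- `B` is `Ω`-complete (for `Ω ⊆ Ω_{n,k}`). -/
def OmegaComplete {n : ℕ} (B : Set (BoxInterval n)) (k : ℕ) (Ω : Set (Fin n → ℕ)) : Prop :=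
  ∃ s : Fin n → ℕ → ℤ,
    (∀ j, ∀ m, m < k → s j m < s j (m + 1)) ∧
    ∀ m ∈ Ω, ∃ R ∈ dyadicSkeleton B, ∀ j,
      R.side j ∈ Set.Ioc ((2:ℝ) ^ s j (m j - 1)) ((2:ℝ) ^ s j (m j))

/-- Product of an `n`-dimensional box and a one-dimensional box. -/
def prodBox {n : ℕ} (J1 : BoxInterval n) (J2 : BoxInterval 1) : BoxInterval (n + 1) where
  a := Fin.snoc J1.a (J2.a 0)
  b := Fin.snoc J1.b (J2.b 0)
  hab := fun j => by
    induction j using Fin.lastCases with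
    | last => simpa using J2.hab 0
    | cast i => simpa using J1.hab i

/-- The product basis `B₁ × B₂`. -/
def prodBasis {n : ℕ} (B1 : Set (BoxInterval n)) (B2 : Set (BoxInterval 1)) :
    Set (BoxInterval (n + 1)) :=
  {R | ∃ J1 ∈ B1, ∃ J2 ∈ B2, R = prodBox J1 J2}

/-- The (is)-property of a rare basis in `ℝ²`. -/
def ISProperty (B : Set (BoxInterval 2)) : Prop :=
  ∀ k : ℕ, ∃ R : Fin (k + 1) → BoxInterval 2,
    (∀ i, R i ∈ B) ∧
    (∀ i, (R i).a = fun _ => 0) ∧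
    (∀ i, ∃ pq : Fin 2 → ℤ, ∀ l, (R i).b l = (2:ℝ) ^ pq l) ∧
    (∀ i j, i ≠ j → ∀ v : Fin 2 → ℝ, ¬ ((R i).translate v).toSet ⊆ (R j).toSet) ∧
    (∀ i j, ∃ Q ∈ B, Q.toSet = (R i).toSet ∩ (R j).toSet)


namespace Stmt6




/-- The multiscale set in 1D: points of `[β, β+2^r)` whose binary digit at each
position `p ∈ P` equals 1. -/
def SS (P : Finset ℤ) (β : ℝ) (r : ℤ) : Set ℝ :=
  Ico β (β + 2 ^ r) ∩ {x | ∀ p ∈ P, Odd ⌊x / (2:ℝ) ^ p⌋}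

lemma two_zpow_pos (p : ℤ) : (0:ℝ) < 2 ^ p := zpow_pos (by norm_num) p

lemma measurableSet_SS (P : Finset ℤ) (β : ℝ) (r : ℤ) : MeasurableSet (SS P β r) := by
  apply measurableSet_Ico.inter
  have h : {x : ℝ | ∀ p ∈ P, Odd ⌊x / (2:ℝ) ^ p⌋}
      = ⋂ p ∈ P, {x : ℝ | Odd ⌊x / (2:ℝ) ^ p⌋} := by ext x; simp
  rw [h]
  refine MeasurableSet.biInter P.countable_toSet fun p _ => ?_
  have hm : Measurable fun x : ℝ => ⌊x / (2:ℝ) ^ p⌋ :=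
    Int.measurable_floor.comp (measurable_id.div_const _)
  exact hm (show MeasurableSet {z : ℤ | Odd z} from trivial)

lemma mem_block_iff_floor {w p : ℤ} {x : ℝ} :
    x ∈ Ico ((w:ℝ) * 2 ^ p) (((w:ℝ) + 1) * 2 ^ p) ↔ ⌊x / (2:ℝ) ^ p⌋ = w := by
  have h2 := two_zpow_pos p
  rw [Int.floor_eq_iff, mem_Ico]
  constructor
  · rintro ⟨h1, h3⟩
    exact ⟨by rw [le_div_iff₀ h2]; linarith, by rw [div_lt_iff₀ h2]; push_cast; linarith⟩
  · rintro ⟨h1, h3⟩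
    rw [le_div_iff₀ h2] at h1
    rw [div_lt_iff₀ h2] at h3
    push_cast at h3
    exact ⟨by linarith, by linarith⟩

lemma floor_coarse_const {z t p : ℤ} (hpt : t ≤ p) :
    ∃ q : ℤ, ∀ u : ℝ, u ∈ Ico ((z:ℝ) * 2 ^ t) (((z:ℝ) + 1) * 2 ^ t) →
      ⌊u / (2:ℝ) ^ p⌋ = q := by
  set j : ℕ := (p - t).toNat with hj
  have hpj : p = t + (j:ℤ) := by omega
  set q := z / 2 ^ j with hq
  have hzpos : (0:ℤ) < 2 ^ j := by positivity
  have hz : 2 ^ j * q + z % 2 ^ j = z := Int.mul_ediv_add_emod z (2 ^ j)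
  have h0 : (0:ℤ) ≤ z % 2 ^ j := Int.emod_nonneg z (by positivity)
  have h1 : z % 2 ^ j < 2 ^ j := Int.emod_lt_of_pos z hzpos
  have hcast : ∀ w : ℤ, ((w:ℝ)) * 2 ^ p = ((2 ^ j * w : ℤ) : ℝ) * 2 ^ t := by
    intro w
    rw [hpj, zpow_add₀ (by norm_num : (2:ℝ) ≠ 0)]
    push_cast
    rw [zpow_natCast]
    ring
  refine ⟨q, fun u hu => ?_⟩
  apply mem_block_iff_floor.mp
  constructor
  · calc (q:ℝ) * 2 ^ p = ((2 ^ j * q : ℤ) : ℝ) * 2 ^ t := hcast q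
      _ ≤ (z:ℝ) * 2 ^ t := by
          apply mul_le_mul_of_nonneg_right _ (two_zpow_pos t).le
          exact_mod_cast (by omega : (2 ^ j * q : ℤ) ≤ z)
      _ ≤ u := hu.1
  · have : ((q:ℝ) + 1) * 2 ^ p = ((2 ^ j * (q + 1) : ℤ) : ℝ) * 2 ^ t := by
      have := hcast (q + 1); push_cast at this ⊢; linarith
    rw [this]
    calc u < ((z:ℝ) + 1) * 2 ^ t := hu.2
      _ ≤ ((2 ^ j * (q + 1) : ℤ) : ℝ) * 2 ^ t := by
          apply mul_le_mul_of_nonneg_right _ (two_zpow_pos t).le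
          exact_mod_cast (by rw [mul_add, mul_one]; omega : (z + 1 : ℤ) ≤ 2 ^ j * (q + 1))


lemma two_mul_zpow (r : ℤ) : (2:ℝ) * 2 ^ (r - 1) = 2 ^ r := by
  rw [← zpow_one_add₀ (by norm_num : (2:ℝ) ≠ 0)]
  congr 1; ring

lemma two_zpow_succ (r : ℤ) : (2:ℝ) ^ r = 2 ^ (r - 1) + 2 ^ (r - 1) := by
  rw [← two_mul_zpow r]; ring

lemma align_low (z r : ℤ) : (z:ℝ) * 2 ^ r = ((2 * z : ℤ):ℝ) * 2 ^ (r - 1) := by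
  rw [← two_mul_zpow r]; push_cast; ring

lemma align_high (z r : ℤ) :
    (z:ℝ) * 2 ^ r + 2 ^ (r - 1) = ((2 * z + 1 : ℤ):ℝ) * 2 ^ (r - 1) := by
  have := align_low z r
  push_cast at this ⊢
  linarith

lemma vol_SS (d : ℕ) : ∀ (P : Finset ℤ) (r z : ℤ),
    (∀ p ∈ P, p < r) → (∀ p ∈ P, r ≤ p + d) →
    volume (SS P ((z:ℝ) * 2 ^ r) r) = ENNReal.ofReal ((2:ℝ) ^ (r - P.card)) := by
  induction d with
  | zero =>
    intro P r z hlt hd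
    have hP : P = ∅ := by
      rcases P.eq_empty_or_nonempty with h | h
      · exact h
      · obtain ⟨p, hp⟩ := h
        have h1 := hlt p hp; have h2 := hd p hp; omega
  
    subst hP
    simp only [SS, Finset.notMem_empty, false_implies, implies_true, setOf_true, inter_univ,
      Finset.card_empty, Nat.cast_zero, sub_zero]
    rw [Real.volume_Ico]
    congr 1; ring
  | succ d ih =>
    intro P r z hlt hd
    rcases P.eq_empty_or_nonempty with hP | hP
    · subst hP
      simp only [SS, Finset.notMem_empty, false_implies, implies_true, setOf_true, inter_univ,
        Finset.card_empty, Nat.cast_zero, sub_zero]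
      rw [Real.volume_Ico]
      congr 1; ring
    · set β := (z:ℝ) * 2 ^ r with hβ
      have hIcosplit : Ico β (β + 2 ^ r) = Ico β (β + 2 ^ (r-1)) ∪ Ico (β + 2 ^ (r-1)) (β + 2 ^ r) := by
        rw [Ico_union_Ico_eq_Ico]
        · linarith [two_zpow_pos (r-1)]
        · have := two_zpow_succ r; have := two_zpow_pos (r-1); linarith
      have hup : β + 2 ^ (r-1) + 2 ^ (r-1) = β + 2 ^ r := by
        have := two_zpow_succ r; linarith
      have hsplit : SS P β r = SS P β (r-1) ∪ SS P (β + 2 ^ (r-1)) (r-1) := by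
        unfold SS
        rw [hIcosplit, union_inter_distrib_right, hup]
      have hdisj : Disjoint (SS P β (r-1)) (SS P (β + 2 ^ (r-1)) (r-1)) := by
        apply Disjoint.mono (inter_subset_left) (inter_subset_left)
        rw [hup]
        exact Ico_disjoint_Ico_same
      have hlow_mem : ∀ x ∈ Ico β (β + 2^(r-1)), ⌊x / (2:ℝ) ^ (r-1)⌋ = 2 * z := by
        intro x hx
        apply mem_block_iff_floor.mp
        rw [← align_low]
        have h2 : ((2*z:ℤ):ℝ) + 1 = ((2*z+1:ℤ):ℝ) := by push_cast; ring
        rw [h2, ← align_high]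
        exact hx
      have hhigh_mem : ∀ x ∈ Ico (β + 2^(r-1)) (β + 2^r), ⌊x / (2:ℝ) ^ (r-1)⌋ = 2 * z + 1 := by
        intro x hx
        apply mem_block_iff_floor.mp
        rw [← align_high]
        have h2 : ((2*z+1:ℤ):ℝ) + 1 = ((2*(z+1):ℤ):ℝ) := by push_cast; ring
        rw [h2, ← align_low]
        constructor
        · exact hx.1
        · have : ((z:ℝ)+1) * 2^r = β + 2^r := by rw [hβ]; ring
          push_cast at this ⊢
          linarith [hx.2]
      by_cases hmem : (r - 1) ∈ P
      · -- lower piece is empty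
        have hlowempty : SS P β (r-1) = ∅ := by
          ext x
          simp only [SS, mem_inter_iff, mem_setOf_eq, mem_empty_iff_false, iff_false, not_and]
          intro hx hodd
          have h1 := hodd (r-1) hmem
          rw [hlow_mem x hx] at h1
          exact (Int.not_odd_iff_even.mpr ⟨z, by ring⟩) h1
        have hhigheq : SS P (β + 2 ^ (r-1)) (r-1) = SS (P.erase (r-1)) (β + 2 ^ (r-1)) (r-1) := by
          unfold SS
          rw [hup]
          ext x
          simp only [mem_inter_iff, mem_setOf_eq, and_congr_right_iff]
          intro hx
          constructor
          · intro h p hp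
            exact h p (Finset.mem_of_mem_erase hp)
          · intro h p hp
            rcases eq_or_ne p (r-1) with rfl | hne
            · rw [hhigh_mem x (by exact hx)]
              exact ⟨z, by ring⟩
            · exact h p (Finset.mem_erase.mpr ⟨hne, hp⟩)
        have hih := ih (P.erase (r-1)) (r-1) (2*z+1)
          (fun p hp => by
            have := hlt p (Finset.mem_of_mem_erase hp)
            have := (Finset.mem_erase.mp hp).1
            omega)
          (fun p hp => by have := hd p (Finset.mem_of_mem_erase hp); omega)
        rw [← align_high] at hih
        have hcard : P.card = (P.erase (r-1)).card + 1 := by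
          rw [Finset.card_erase_of_mem hmem]
          have := Finset.card_pos.mpr ⟨r-1, hmem⟩
          omega
        rw [hsplit, measure_union hdisj (measurableSet_SS _ _ _), hlowempty, measure_empty,
          zero_add, hhigheq, hih]
        congr 1
        rw [hcard]
        push_cast
        ring_nf
      · -- both halves
        have hlt' : ∀ p ∈ P, p < r - 1 := by
          intro p hp
          have := hlt p hp
          rcases eq_or_ne p (r-1) with rfl | hne
          · exact absurd hp hmem
          · omega
        have hd' : ∀ p ∈ P, r - 1 ≤ p + d := fun p hp => by have := hd p hp; omega
        have hihL := ih P (r-1) (2*z) hlt' hd'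
        rw [← align_low] at hihL
        have hihH := ih P (r-1) (2*z+1) hlt' hd'
        rw [← align_high] at hihH
        rw [hsplit, measure_union hdisj (measurableSet_SS _ _ _), hihL, hihH,
          ← ENNReal.ofReal_add (by positivity) (by positivity)]
        congr 1
        have h1 : (2:ℝ) ^ (r - 1 - P.card) + 2 ^ (r - 1 - P.card) = 2 ^ (r - P.card) := by
          rw [two_zpow_succ (r - P.card)]
          congr 2 <;> ring
        linarith [h1]


lemma meas_cs {α : Type*} [MeasurableSpace α] (μ : Measure α) {ι : Type*} [DecidableEq ι]
    (F : Finset ι) (A : ι → Set α) (hA : ∀ i ∈ F, MeasurableSet (A i)) :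
    (∑ i ∈ F, μ (A i)) ^ 2 ≤ μ (⋃ i ∈ F, A i) * ∑ i ∈ F, ∑ i' ∈ F, μ (A i ∩ A i') := by
  set f : α → ℝ≥0∞ := fun x => ∑ i ∈ F, (A i).indicator (fun _ => 1) x with hf
  set T := ⋃ i ∈ F, A i with hT
  have hmi : ∀ i ∈ F, Measurable ((A i).indicator (fun _ => (1:ℝ≥0∞))) :=
    fun i hi => measurable_const.indicator (hA i hi)
  have hfm : Measurable f := by
    apply Finset.measurable_sum
    exact hmi
  have hTm : MeasurableSet T := MeasurableSet.biUnion F.countable_toSet hA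
  have h1 : ∫⁻ x, f x ∂μ = ∑ i ∈ F, μ (A i) := by
    rw [hf, lintegral_finset_sum F hmi]
    refine Finset.sum_congr rfl fun i hi => ?_
    rw [lintegral_indicator_const (hA i hi), one_mul]
  have h2 : ∫⁻ x, f x * f x ∂μ = ∑ i ∈ F, ∑ i' ∈ F, μ (A i ∩ A i') := by
    have hpt : ∀ x, f x * f x = ∑ i ∈ F, ∑ i' ∈ F, (A i ∩ A i').indicator (fun _ => (1:ℝ≥0∞)) x := by
      intro x
      rw [hf]
      simp only
      rw [Finset.sum_mul_sum]
      refine Finset.sum_congr rfl fun i _ => Finset.sum_congr rfl fun i' _ => ?_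
      by_cases hx1 : x ∈ A i <;> by_cases hx2 : x ∈ A i' <;>
        simp [Set.indicator_apply, hx1, hx2, Set.mem_inter_iff]
    calc ∫⁻ x, f x * f x ∂μ
        = ∫⁻ x, ∑ i ∈ F, ∑ i' ∈ F, (A i ∩ A i').indicator (fun _ => (1:ℝ≥0∞)) x ∂μ := by
          exact lintegral_congr hpt
      _ = ∑ i ∈ F, ∑ i' ∈ F, μ (A i ∩ A i') := by
          rw [lintegral_finset_sum F (fun i hi => Finset.measurable_sum F
            (fun i' hi' => measurable_const.indicator ((hA i hi).inter (hA i' hi'))))]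
          refine Finset.sum_congr rfl fun i hi => ?_
          rw [lintegral_finset_sum F
            (fun i' hi' => measurable_const.indicator ((hA i hi).inter (hA i' hi')))]
          refine Finset.sum_congr rfl fun i' hi' => ?_
          rw [lintegral_indicator_const ((hA i hi).inter (hA i' hi')), one_mul]
  have h3 : ∀ x, f x = (T.indicator (fun _ => (1:ℝ≥0∞)) * f) x := by
    intro x
    by_cases hx : x ∈ T
    · simp [Set.indicator_of_mem hx]
    · have : f x = 0 := by
        rw [hf]
        refine Finset.sum_eq_zero fun i hi => ?_
        apply Set.indicator_of_notMem
        intro h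
        exact hx (Set.mem_biUnion hi h)
      simp [this]
  have hpq : Real.HolderConjugate 2 2 := Real.HolderConjugate.two_two
  have hcs := ENNReal.lintegral_mul_le_Lp_mul_Lq μ hpq
    (f := T.indicator (fun _ => (1:ℝ≥0∞))) (g := f)
    (measurable_const.indicator hTm).aemeasurable hfm.aemeasurable
  rw [← lintegral_congr h3] at hcs
  have hTsq : ∫⁻ x, (T.indicator (fun _ => (1:ℝ≥0∞)) x) ^ (2:ℝ) ∂μ = μ T := by
    have : ∀ x, (T.indicator (fun _ => (1:ℝ≥0∞)) x) ^ (2:ℝ)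
        = T.indicator (fun _ => (1:ℝ≥0∞)) x := by
      intro x
      by_cases hx : x ∈ T <;>
        simp [Set.indicator_of_mem, Set.indicator_of_notMem, hx,
          ENNReal.one_rpow, ENNReal.zero_rpow_of_pos]
    rw [lintegral_congr this, lintegral_indicator_const hTm, one_mul]
  have hfsq : ∫⁻ x, (f x) ^ (2:ℝ) ∂μ = ∑ i ∈ F, ∑ i' ∈ F, μ (A i ∩ A i') := by
    rw [← h2]
    apply lintegral_congr
    intro x
    rw [show (2:ℝ) = ((2:ℕ):ℝ) by norm_num, ENNReal.rpow_natCast]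
    ring
  rw [h1, hTsq, hfsq] at hcs
  set Y := ∑ i ∈ F, ∑ i' ∈ F, μ (A i ∩ A i') with hY
  calc (∑ i ∈ F, μ (A i)) ^ 2 ≤ (μ T ^ (1/2:ℝ) * Y ^ (1/2:ℝ)) ^ 2 := by
        rw [pow_two, pow_two]; exact mul_le_mul' hcs hcs
    _ = μ T * Y := by
        rw [mul_pow, ← ENNReal.rpow_natCast (μ T ^ (1/2:ℝ)) 2, ← ENNReal.rpow_natCast (Y ^ (1/2:ℝ)) 2,
          ← ENNReal.rpow_mul, ← ENNReal.rpow_mul]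
        norm_num


lemma geom4 (M : ℕ) : ∑ i ∈ Finset.range M, ((3:ℝ)/4) ^ i ≤ 4 := by
  rw [geom_sum_eq (by norm_num : (3:ℝ)/4 ≠ 1)]
  have h1 : (0:ℝ) ≤ ((3:ℝ)/4) ^ M := by positivity
  have h2 : ((3:ℝ)/4) ^ M ≤ 1 := pow_le_one₀ (by norm_num) (by norm_num)
  rw [div_le_iff_of_neg (by norm_num : (3:ℝ)/4 - 1 < 0)]
  linarith

lemma distsum {k m : ℕ} (hm : m ≤ k) :
    ∑ a ∈ Finset.range (k+1), ((3:ℝ)/4) ^ (Nat.dist m a) ≤ 7 := by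
  rw [Finset.range_eq_Ico, ← Finset.sum_Ico_consecutive _ (Nat.zero_le (m+1)) (by omega),
    ← Finset.range_eq_Ico]
  have hA : ∑ a ∈ Finset.range (m+1), ((3:ℝ)/4) ^ (Nat.dist m a) ≤ 4 := by
    have he : ∀ a ∈ Finset.range (m+1), ((3:ℝ)/4) ^ (Nat.dist m a) = ((3:ℝ)/4) ^ (m - a) := by
      intro a ha
      rw [Nat.dist_comm, Nat.dist_eq_sub_of_le (by simpa using Nat.lt_succ_iff.mp (Finset.mem_range.mp ha))]
    rw [Finset.sum_congr rfl he]
    calc ∑ a ∈ Finset.range (m+1), ((3:ℝ)/4) ^ (m - a)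
        = ∑ a ∈ Finset.range (m+1), ((3:ℝ)/4) ^ (m + 1 - 1 - a) := by
          apply Finset.sum_congr rfl; intro a _; congr 1
      _ = ∑ a ∈ Finset.range (m+1), ((3:ℝ)/4) ^ a := Finset.sum_range_reflect _ _
      _ ≤ 4 := geom4 _
  have hB : ∑ a ∈ Finset.Ico (m+1) (k+1), ((3:ℝ)/4) ^ (Nat.dist m a) ≤ 3 := by
    rw [Finset.sum_Ico_eq_sum_range]
    have he : ∀ i ∈ Finset.range (k+1-(m+1)), ((3:ℝ)/4) ^ (Nat.dist m (m+1+i))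
        = ((3:ℝ)/4) ^ (i+1) := by
      intro i _
      congr 1
      rw [Nat.dist_eq_sub_of_le (by omega)]
      omega
    rw [Finset.sum_congr rfl he]
    have : ∑ i ∈ Finset.range (k+1-(m+1)), ((3:ℝ)/4) ^ (i+1)
        = (∑ i ∈ Finset.range (k+1-(m+1)), ((3:ℝ)/4) ^ i) * (3/4) := by
      rw [Finset.sum_mul]
      apply Finset.sum_congr rfl
      intro i _
      rw [pow_succ]
    rw [this]
    have := geom4 (k+1-(m+1))
    have hnn : (0:ℝ) ≤ ∑ i ∈ Finset.range (k+1-(m+1)), ((3:ℝ)/4) ^ i :=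
      Finset.sum_nonneg fun i _ => by positivity
    nlinarith
  linarith

lemma dist_min_sum {n : ℕ} (k : ℕ) (m m' : Fin n → ℕ)
    (hm : ∑ j, m j = k) (hm' : ∑ j, m' j = k) :
    ∑ j, Nat.dist (m j) (m' j) + 2 * (∑ j, min (m j) (m' j)) = 2 * k := by
  have : ∀ j, Nat.dist (m j) (m' j) + 2 * min (m j) (m' j) = m j + m' j := by
    intro j
    have := Nat.dist_eq (m j) (m' j)
    simp [Nat.dist]
    omega
  calc ∑ j, Nat.dist (m j) (m' j) + 2 * (∑ j, min (m j) (m' j))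
      = ∑ j, (Nat.dist (m j) (m' j) + 2 * min (m j) (m' j)) := by
        rw [Finset.sum_add_distrib, Finset.mul_sum]
    _ = ∑ j, (m j + m' j) := Finset.sum_congr rfl fun j _ => this j
    _ = 2 * k := by rw [Finset.sum_add_distrib, hm, hm']; ring

lemma half_pow_le {t D : ℕ} (h : 2 * t = D) : ((1:ℝ)/2) ^ t ≤ (3/4) ^ D := by
  subst h
  rw [pow_mul]
  apply pow_le_pow_left₀ (by norm_num)
  norm_num



lemma prod_two_zpow {ι : Type*} (s : Finset ι) (c : ι → ℤ) :
    ∏ i ∈ s, (2:ℝ) ^ (c i) = 2 ^ (∑ i ∈ s, c i) := by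
  classical
  induction s using Finset.cons_induction with
  | empty => simp
  | cons a s ha ih =>
    rw [Finset.prod_cons, Finset.sum_cons, zpow_add₀ (by norm_num : (2:ℝ) ≠ 0), ih]


lemma prod_ofReal_two_zpow {ι : Type*} (s : Finset ι) (c : ι → ℤ) :
    ∏ i ∈ s, ENNReal.ofReal ((2:ℝ) ^ (c i)) = ENNReal.ofReal ((2:ℝ) ^ (∑ i ∈ s, c i)) := by
  classical
  induction s using Finset.cons_induction with
  | empty => simp
  | cons a s ha ih =>
    rw [Finset.prod_cons, Finset.sum_cons, zpow_add₀ (by norm_num : (2:ℝ) ≠ 0), ih,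
      ← ENNReal.ofReal_mul (two_zpow_pos _).le]

lemma vol_SS' (P : Finset ℤ) (r z : ℤ) (h : ∀ p ∈ P, p < r) :
    volume (SS P ((z:ℝ) * 2 ^ r) r) = ENNReal.ofReal ((2:ℝ) ^ (r - P.card)) := by
  rcases P.eq_empty_or_nonempty with hP | hP
  · exact vol_SS 0 P r z h (by simp [hP])
  · refine vol_SS (r - P.min' hP).toNat P r z h fun p hp => ?_
    have h1 : P.min' hP ≤ p := Finset.min'_le P p hp
    have h2 := h (P.min' hP) (P.min'_mem hP)
    omega

lemma vol_SS0 (P : Finset ℤ) (r : ℤ) (h : ∀ p ∈ P, p < r) :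
    volume (SS P 0 r) = ENNReal.ofReal ((2:ℝ) ^ (r - P.card)) := by
  have := vol_SS' P r 0 h
  simpa using this

set_option maxHeartbeats 2000000 in
lemma main_construction (n : ℕ) (hn : 1 ≤ n) (B : Set (BoxInterval n)) (hB : IsRareBasis B)
    (k : ℕ) (hkn : n ≤ k) (Ω : Set (Fin n → ℕ)) (hΩ : Ω ⊆ OmegaNK n k)
    (hcomp : OmegaComplete B k Ω) :
    ∃ E : Set (Fin n → ℝ), Bornology.IsBounded E ∧ MeasurableSet E ∧ 0 < volume E ∧
      ENNReal.ofReal ((Ω.ncard : ℝ) * 2 ^ k * ((1:ℝ)/56) ^ n) * volume E ≤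
        volume {x | (1:ℝ≥0∞) / 2 ^ k ≤ maxOp B (E.indicator fun _ => (1:ℝ)) x} := by
  classical
  obtain ⟨s, hs, hbox⟩ := hcomp
  have hk1 : 1 ≤ k := le_trans hn hkn
  have hsm : ∀ j : Fin n, ∀ a b : ℕ, a < b → b ≤ k → s j a < s j b := by
    intro j a b hab hbk
    induction b with
    | zero => omega
    | succ b ih =>
      rcases Nat.lt_succ_iff_lt_or_eq.mp hab with h | h
      · exact lt_trans (ih h (by omega)) (hs j b (by omega))
      · subst h; exact hs j a (by omega)
  have hsmle : ∀ j : Fin n, ∀ a b : ℕ, a ≤ b → b ≤ k → s j a ≤ s j b := by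
    intro j a b hab hbk
    rcases eq_or_lt_of_le hab with rfl | h
    · exact le_rfl
    · exact (hsm j a b h hbk).le
  have hinjIcc : ∀ (j : Fin n) (lo hi : ℕ), hi ≤ k → Set.InjOn (s j) ↑(Finset.Icc lo hi) := by
    intro j lo hi hhi a ha b hb hab
    simp only [Finset.coe_Icc, Set.mem_Icc] at ha hb
    rcases lt_trichotomy a b with h | h | h
    · exact absurd hab (hsm j a b h (le_trans hb.2 hhi)).ne
    · exact h
    · exact absurd hab.symm (hsm j b a h (le_trans ha.2 hhi)).ne
  set Sig : ℤ := ∑ j, s j k with hSig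
  -- the set E
  set PE : Fin n → Finset ℤ := fun j => (Finset.Icc 1 (k-1)).image (s j) with hPEdef
  set Ej : Fin n → Set ℝ := fun j => SS (PE j) 0 (s j k) with hEjdef
  set E : Set (Fin n → ℝ) := Set.pi univ Ej with hEdef
  have hPElt : ∀ j, ∀ p ∈ PE j, p < s j k := by
    intro j p hp
    rw [hPEdef] at hp
    obtain ⟨i, hi, rfl⟩ := Finset.mem_image.mp hp
    rw [Finset.mem_Icc] at hi
    exact hsm j i k (by omega) le_rfl
  have hPEcard : ∀ j, (PE j).card = k - 1 := by
    intro j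
    rw [hPEdef]
    rw [Finset.card_image_of_injOn (hinjIcc j 1 (k-1) (by omega))]
    rw [Nat.card_Icc]
    omega
  have hEjvol : ∀ j, volume (Ej j) = ENNReal.ofReal ((2:ℝ) ^ (s j k - ((k:ℤ) - 1))) := by
    intro j
    rw [hEjdef]
    rw [vol_SS0 (PE j) (s j k) (hPElt j), hPEcard j]
    congr 2
    push_cast [Nat.cast_sub hk1]
    ring
  have hEm : MeasurableSet E := MeasurableSet.univ_pi fun j => measurableSet_SS _ _ _
  have hEb : Bornology.IsBounded E := by
    apply Bornology.IsBounded.subset (isCompact_Icc (a := fun _ : Fin n => (0:ℝ))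
      (b := fun j => (2:ℝ) ^ (s j k))).isBounded
    rw [← Set.pi_univ_Icc]
    apply Set.pi_mono
    intro j _
    rw [hEjdef]
    refine subset_trans Set.inter_subset_left ?_
    rw [zero_add]
    exact Set.Ico_subset_Icc_self
  have hEvol : volume E = ENNReal.ofReal ((2:ℝ) ^ (Sig - n * ((k:ℤ) - 1))) := by
    rw [hEdef, volume_pi_pi]
    rw [Finset.prod_congr rfl (fun j _ => hEjvol j)]
    rw [prod_ofReal_two_zpow]
    congr 1
    rw [Finset.sum_sub_distrib, Finset.sum_const, Finset.card_univ, Fintype.card_fin, hSig]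
    push_cast
    ring
  have hEpos : 0 < volume E := by
    rw [hEvol]
    exact ENNReal.ofReal_pos.mpr (two_zpow_pos _)
  refine ⟨E, hEb, hEm, hEpos, ?_⟩
  rcases eq_or_ne Ω.ncard 0 with hN0 | hN0
  · rw [hN0]
    simp
  -- finite, nonempty
  have hΩfin : Ω.Finite := by
    apply Set.Finite.subset (Set.Finite.pi (fun _ : Fin n => Set.finite_Iic k))
    intro m hm
    rw [Set.mem_pi]
    intro j _
    rw [Set.mem_Iic]
    have h2 := (hΩ hm).2
    calc m j ≤ ∑ i, m i := Finset.single_le_sum (fun i _ => Nat.zero_le _) (Finset.mem_univ j)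
      _ = k := h2
  -- data extraction
  obtain ⟨Q₀, hQ₀⟩ := hB.1
  have : Inhabited (BoxInterval n) := ⟨Q₀⟩
  have hdata : ∀ m ∈ Ω, ∃ Q : BoxInterval n, ∃ t : Fin n → ℤ, Q ∈ B ∧
      (∀ j, s j (m j - 1) < t j ∧ t j ≤ s j (m j)) ∧
      (∀ j, (2:ℝ) ^ (t j - 1) < Q.side j ∧ Q.side j ≤ 2 ^ (t j)) := by
    intro m hm
    obtain ⟨R, hR, hside⟩ := hbox m hm
    obtain ⟨Q, hQ, rfl⟩ := hR
    refine ⟨Q, fun j => ⌈Real.logb 2 (Q.side j)⌉, hQ, fun j => ?_, fun j => ?_⟩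
    · have hhull : (dyadicHull Q).side j = (2:ℝ) ^ (⌈Real.logb 2 (Q.side j)⌉) := by
        simp only [dyadicHull, BoxInterval.side]
        ring
      have h1 := (hside j).1
      have h2 := (hside j).2
      rw [hhull] at h1 h2
      constructor
      · exact (zpow_lt_zpow_iff_right₀ (by norm_num : (1:ℝ) < 2)).mp h1
      · exact (zpow_le_zpow_iff_right₀ (by norm_num : (1:ℝ) < 2)).mp h2
    · have hqpos : 0 < Q.side j := sub_pos.mpr (Q.hab j)
      have hlogeq : (2:ℝ) ^ (Real.logb 2 (Q.side j)) = Q.side j :=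
        Real.rpow_logb (by norm_num) (by norm_num) hqpos
      constructor
      · have hceil : ((⌈Real.logb 2 (Q.side j)⌉ - 1 : ℤ) : ℝ) < Real.logb 2 (Q.side j) := by
          have := Int.ceil_lt_add_one (Real.logb 2 (Q.side j))
          push_cast
          push_cast at this
          linarith
        calc (2:ℝ) ^ (⌈Real.logb 2 (Q.side j)⌉ - 1)
            = (2:ℝ) ^ ((⌈Real.logb 2 (Q.side j)⌉ - 1 : ℤ) : ℝ) := by
              rw [Real.rpow_intCast]
          _ < (2:ℝ) ^ (Real.logb 2 (Q.side j)) := by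
              exact (Real.rpow_lt_rpow_left_iff (by norm_num)).mpr hceil
          _ = Q.side j := hlogeq
      · have hceil : Real.logb 2 (Q.side j) ≤ ((⌈Real.logb 2 (Q.side j)⌉ : ℤ) : ℝ) :=
          Int.le_ceil _
        calc Q.side j = (2:ℝ) ^ (Real.logb 2 (Q.side j)) := hlogeq.symm
          _ ≤ (2:ℝ) ^ ((⌈Real.logb 2 (Q.side j)⌉ : ℤ) : ℝ) :=
              (Real.rpow_le_rpow_left_iff (by norm_num)).mpr hceil
          _ = (2:ℝ) ^ (⌈Real.logb 2 (Q.side j)⌉ : ℤ) := by rw [Real.rpow_intCast]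
  choose! Qf tf hQB ht hq using hdata
  -- the U sets
  set PU : (Fin n → ℕ) → Fin n → Finset ℤ :=
    fun m j => insert (tf m j - 1) ((Finset.Icc (m j) (k-1)).image (s j)) with hPUdef
  set U : (Fin n → ℕ) → Set (Fin n → ℝ) :=
    fun m => Set.pi univ (fun j => SS (PU m j) 0 (s j k)) with hUdef
  have hUmeas : ∀ m, MeasurableSet (U m) := fun m =>
    MeasurableSet.univ_pi fun j => measurableSet_SS _ _ _
  have hmj1 : ∀ m ∈ Ω, ∀ j, 1 ≤ m j := fun m hm => (hΩ hm).1
  have hmsum : ∀ m ∈ Ω, ∑ j, m j = k := fun m hm => (hΩ hm).2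
  have hmjk : ∀ m ∈ Ω, ∀ j, m j ≤ k := by
    intro m hm j
    calc m j ≤ ∑ i, m i := Finset.single_le_sum (fun i _ => Nat.zero_le _) (Finset.mem_univ j)
      _ = k := hmsum m hm
  have htk : ∀ m ∈ Ω, ∀ j, tf m j ≤ s j k := by
    intro m hm j
    exact le_trans (ht m hm j).2 (hsmle j (m j) k (hmjk m hm j) le_rfl)
  have hPUlt : ∀ m ∈ Ω, ∀ j, ∀ p ∈ PU m j, p < s j k := by
    intro m hm j p hp
    rw [hPUdef] at hp
    rcases Finset.mem_insert.mp hp with rfl | hp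
    · have := htk m hm j; omega
    · obtain ⟨i, hi, rfl⟩ := Finset.mem_image.mp hp
      rw [Finset.mem_Icc] at hi
      exact hsm j i k (by omega) le_rfl
  have hPUcard : ∀ m ∈ Ω, ∀ j, (PU m j).card = (k - m j) + 1 := by
    intro m hm j
    rw [hPUdef]
    rw [Finset.card_insert_of_notMem, Finset.card_image_of_injOn (hinjIcc j (m j) (k-1) (by omega)), Nat.card_Icc]
    · have := hmjk m hm j; have := hmj1 m hm j; omega
    · intro hmem
      obtain ⟨i, hi, heq⟩ := Finset.mem_image.mp hmem
      rw [Finset.mem_Icc] at hi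
      have h1 : s j (m j) ≤ s j i := hsmle j (m j) i hi.1 (by omega)
      have h2 := (ht m hm j).2
      omega
  set uR : ℝ := (2:ℝ) ^ (Sig - (n * ((k:ℤ) + 1) - k)) with huRdef
  have hUvol : ∀ m ∈ Ω, volume (U m) = ENNReal.ofReal uR := by
    intro m hm
    rw [hUdef]
    simp only
    rw [volume_pi_pi]
    rw [Finset.prod_congr rfl (fun j _ => vol_SS0 (PU m j) (s j k) (hPUlt m hm j))]
    rw [Finset.prod_congr rfl (fun j _ => by rw [hPUcard m hm j] : ∀ j ∈ Finset.univ,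
      ENNReal.ofReal ((2:ℝ) ^ (s j k - ((PU m j).card : ℤ)))
        = ENNReal.ofReal ((2:ℝ) ^ (s j k - (((k - m j) + 1 : ℕ) : ℤ))))]
    rw [prod_ofReal_two_zpow]
    congr 1
    rw [huRdef]
    congr 1
    rw [Finset.sum_sub_distrib, hSig]
    congr 1
    have hcast : ∀ j, (((k - m j) + 1 : ℕ) : ℤ) = (k : ℤ) - m j + 1 := by
      intro j
      have := hmjk m hm j
      push_cast [Nat.cast_sub this]
      ring
    rw [Finset.sum_congr rfl (fun j _ => hcast j)]
    have hsummj : ∑ j, ((m j : ℕ) : ℤ) = (k : ℤ) := by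
      rw [← Nat.cast_sum]
      exact congrArg _ (hmsum m hm)
    rw [Finset.sum_add_distrib, Finset.sum_sub_distrib, Finset.sum_const, Finset.sum_const,
      Finset.card_univ, Fintype.card_fin, hsummj]
    push_cast
    ring
  -- coverage of U m by the level set
  have hcover : ∀ m ∈ Ω, U m ⊆
      {x | (1:ℝ≥0∞) / 2 ^ k ≤ maxOp B (E.indicator fun _ => (1:ℝ)) x} := by
    intro m hm x hx
    rw [hUdef] at hx
    simp only [Set.mem_pi, Set.mem_univ, forall_true_left] at hx
    set t : Fin n → ℤ := tf m with htdef
    have ht1 : ∀ j, s j (m j - 1) < t j := fun j => (ht m hm j).1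
    have ht2 : ∀ j, t j ≤ s j (m j) := fun j => (ht m hm j).2
    set z : Fin n → ℤ := fun j => ⌊x j / (2:ℝ) ^ (t j)⌋ with hzdef
    have hxIco : ∀ j, x j ∈ Ico ((z j : ℝ) * 2 ^ t j) (((z j : ℝ) + 1) * 2 ^ t j) :=
      fun j => mem_block_iff_floor.mpr rfl
    have hx0 : ∀ j, x j ∈ Ico (0:ℝ) (0 + 2 ^ (s j k)) := fun j => (hx j).1
    have hdig : ∀ j, ∀ p ∈ PU m j, Odd ⌊x j / (2:ℝ) ^ p⌋ := fun j => (hx j).2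
    have hz0 : ∀ j, 0 ≤ z j := by
      intro j
      rw [hzdef]
      apply Int.floor_nonneg.mpr
      have h1 := (hx0 j).1
      positivity
    have hα0 : ∀ j, (0:ℝ) ≤ (z j : ℝ) * 2 ^ t j := fun j =>
      mul_nonneg (by exact_mod_cast hz0 j) (two_zpow_pos _).le
    have hztop : ∀ j, ((z j : ℝ) + 1) * 2 ^ t j ≤ 2 ^ (s j k) := by
      intro j
      have hts : t j ≤ s j k := htk m hm j
      set c : ℕ := (s j k - t j).toNat with hc
      have h2c : ((2 ^ c : ℤ) : ℝ) * 2 ^ t j = 2 ^ (s j k) := by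
        push_cast
        rw [← zpow_natCast (2:ℝ) c, ← zpow_add₀ (by norm_num : (2:ℝ) ≠ 0)]
        congr 1
        omega
      have hzlt : z j < 2 ^ c := by
        rw [hzdef]
        simp only
        rw [Int.floor_lt, div_lt_iff₀ (two_zpow_pos _)]
        rw [h2c]
        simpa using (hx0 j).2
      calc ((z j : ℝ) + 1) * 2 ^ t j ≤ ((2 ^ c : ℤ) : ℝ) * 2 ^ t j := by
            apply mul_le_mul_of_nonneg_right _ (two_zpow_pos _).le
            exact_mod_cast hzlt
        _ = 2 ^ (s j k) := h2c
    have hupper : ∀ j, (z j : ℝ) * 2 ^ t j + 2 ^ (t j - 1) ≤ x j := by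
      intro j
      by_contra hlt
      push_neg at hlt
      have hmem : x j ∈ Ico (((2 * z j : ℤ) : ℝ) * 2 ^ (t j - 1))
          ((((2 * z j : ℤ) : ℝ) + 1) * 2 ^ (t j - 1)) := by
        constructor
        · rw [← align_low]
          exact (hxIco j).1
        · have h2 : (((2 * z j : ℤ) : ℝ) + 1) * 2 ^ (t j - 1)
              = (z j : ℝ) * 2 ^ t j + 2 ^ (t j - 1) := by
            have h3 := align_high (z j) (t j)
            push_cast at h3 ⊢
            linarith
          rw [h2]
          exact hlt
      have hfl : ⌊x j / (2:ℝ) ^ (t j - 1)⌋ = 2 * z j := mem_block_iff_floor.mp hmem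
      have hodd := hdig j (t j - 1) (Finset.mem_insert_self _ _)
      rw [hfl] at hodd
      exact (Int.not_odd_iff_even.mpr ⟨z j, by ring⟩) hodd
    set Q' : BoxInterval n := (Qf m).translate
      (fun j => (z j : ℝ) * 2 ^ t j + 2 ^ t j - (Qf m).b j) with hQ'def
    have hQ'B : Q' ∈ B := hB.2 _ (hQB m hm) _
    have hQ'a : ∀ j, Q'.a j = (z j : ℝ) * 2 ^ t j + 2 ^ t j - (Qf m).side j := by
      intro j
      rw [hQ'def]
      simp only [BoxInterval.translate, BoxInterval.side]
      ring
    have hQ'b : ∀ j, Q'.b j = (z j : ℝ) * 2 ^ t j + 2 ^ t j := by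
      intro j
      rw [hQ'def]
      simp only [BoxInterval.translate]
      ring
    have hQ'side : ∀ j, Q'.b j - Q'.a j = (Qf m).side j := by
      intro j; rw [hQ'a j, hQ'b j]; ring
    have hqlo : ∀ j, (2:ℝ) ^ (t j - 1) < (Qf m).side j := fun j => (hq m hm j).1
    have hqhi : ∀ j, (Qf m).side j ≤ 2 ^ t j := fun j => (hq m hm j).2
    have hxmem : x ∈ Q'.toSet := by
      rw [BoxInterval.toSet, Set.mem_pi]
      intro j _
      rw [Set.mem_Icc, hQ'a j, hQ'b j]
      constructor
      · have h1 := hupper j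
        have h2 := hqlo j
        have h3 := two_zpow_succ (t j)
        linarith
      · have hexp : ((z j:ℝ) + 1) * 2 ^ t j = (z j:ℝ) * 2 ^ t j + 2 ^ t j := by ring
        have := (hxIco j).2
        linarith
    set β : Fin n → ℝ := fun j => (z j : ℝ) * 2 ^ t j + 2 ^ (t j - 1) with hβdef
    set PL : Fin n → Finset ℤ := fun j => (PE j).filter (· < t j - 1) with hPLdef
    set V : Set (Fin n → ℝ) := Set.pi univ (fun j => SS (PL j) (β j) (t j - 1)) with hVdef
    have hβval : ∀ j, β j = (z j : ℝ) * 2 ^ t j + 2 ^ (t j - 1) := fun j => rfl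
    have hVblock : ∀ j, ∀ y : ℝ, y ∈ Ico (β j) (β j + 2 ^ (t j - 1)) →
        y ∈ Ico ((z j : ℝ) * 2 ^ t j) (((z j : ℝ) + 1) * 2 ^ t j) := by
      intro j y hy
      have h1 := hy.1
      have h2 := hy.2
      rw [hβval j] at h1 h2
      have h3 := two_zpow_succ (t j)
      have h4 := two_zpow_pos (t j - 1)
      constructor
      · linarith
      · push_cast
        nlinarith [two_zpow_pos (t j)]
    have hVsub : V ⊆ E ∩ Q'.toSet := by
      intro y hy
      rw [hVdef, Set.mem_pi] at hy
      have hyIco : ∀ j, y j ∈ Ico (β j) (β j + 2 ^ (t j - 1)) :=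
        fun j => (hy j (Set.mem_univ j)).1
      have hyd : ∀ j, ∀ p ∈ PL j, Odd ⌊y j / (2:ℝ) ^ p⌋ :=
        fun j => (hy j (Set.mem_univ j)).2
      constructor
      · rw [hEdef, Set.mem_pi]
        intro j _
        have hblk := hVblock j (y j) (hyIco j)
        constructor
        · constructor
          · have h1 := hblk.1
            have h2 := hα0 j
            linarith
          · have h1 := hblk.2
            have h2 := hztop j
            rw [zero_add]
            push_cast at h1
            linarith
        · intro p hp
          rcases lt_trichotomy p (t j - 1) with hplt | hpeq | hpgt
          · exact hyd j p (by
              rw [hPLdef]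
              exact Finset.mem_filter.mpr ⟨hp, by simpa using hplt⟩)
          · subst hpeq
            have hmem2 : y j ∈ Ico (((2 * z j + 1 : ℤ) : ℝ) * 2 ^ (t j - 1))
                ((((2 * z j + 1 : ℤ) : ℝ) + 1) * 2 ^ (t j - 1)) := by
              have hbeq : ((2 * z j + 1 : ℤ) : ℝ) * 2 ^ (t j - 1) = β j := by
                have h3 := align_high (z j) (t j)
                rw [hβval j]
                push_cast at h3 ⊢
                linarith
              constructor
              · rw [hbeq]; exact (hyIco j).1
              · have : (((2 * z j + 1 : ℤ) : ℝ) + 1) * 2 ^ (t j - 1)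
                    = β j + 2 ^ (t j - 1) := by
                  rw [← hbeq]; ring
                rw [this]
                exact (hyIco j).2
            have hfl : ⌊y j / (2:ℝ) ^ (t j - 1)⌋ = 2 * z j + 1 :=
              mem_block_iff_floor.mp hmem2
            rw [hfl]
            exact ⟨z j, by ring⟩
          · have hpt : t j ≤ p := by omega
            obtain ⟨qq, hqq⟩ := floor_coarse_const (z := z j) (t := t j) (p := p) hpt
            have hpPE := hp
            rw [hPEdef] at hpPE
            obtain ⟨i, hi, hpi⟩ := Finset.mem_image.mp hpPE
            rw [Finset.mem_Icc] at hi
            have himj : m j ≤ i := by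
              by_contra hcon
              push_neg at hcon
              have hmk := hmjk m hm j
              have h1 : s j i ≤ s j (m j - 1) := hsmle j i (m j - 1) (by omega) (by omega)
              have h2 := ht1 j
              have h3 : s j i = p := hpi
              omega
            have hodd := hdig j p (Finset.mem_insert_of_mem
              (Finset.mem_image.mpr ⟨i, Finset.mem_Icc.mpr ⟨himj, hi.2⟩, hpi⟩))
            rw [hqq (x j) (hxIco j)] at hodd
            rw [hqq (y j) (hVblock j (y j) (hyIco j))]
            exact hodd
      · rw [BoxInterval.toSet, Set.mem_pi]
        intro j _
        rw [Set.mem_Icc, hQ'a j, hQ'b j]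
        have h4 := (hyIco j).1
        have h5 := (hyIco j).2
        rw [hβval j] at h4 h5
        have h2 := hqlo j
        have h3 := two_zpow_succ (t j)
        constructor
        · linarith
        · linarith
    have hPLlt : ∀ j, ∀ p ∈ PL j, p < t j - 1 := by
      intro j p hp
      rw [hPLdef] at hp
      simpa using (Finset.mem_filter.mp hp).2
    have hPLcard : ∀ j, (PL j).card ≤ m j - 1 := by
      intro j
      have hsubset : PL j ⊆ (Finset.Icc 1 (m j - 1)).image (s j) := by
        intro p hp
        rw [hPLdef] at hp
        obtain ⟨hpPE, hplt⟩ := Finset.mem_filter.mp hp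
        rw [hPEdef] at hpPE
        obtain ⟨i, hi, hpi⟩ := Finset.mem_image.mp hpPE
        rw [Finset.mem_Icc] at hi
        have hilt : i < m j := by
          by_contra hcon
          push_neg at hcon
          have h1 : s j (m j) ≤ s j i := hsmle j (m j) i hcon (by omega)
          have h2 := ht2 j
          omega
        exact Finset.mem_image.mpr ⟨i, Finset.mem_Icc.mpr ⟨hi.1, by omega⟩, hpi⟩
      calc (PL j).card ≤ ((Finset.Icc 1 (m j - 1)).image (s j)).card :=
            Finset.card_le_card hsubset
        _ ≤ (Finset.Icc 1 (m j - 1)).card := Finset.card_image_le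
        _ = m j - 1 := by rw [Nat.card_Icc]; omega
    have hVvolj : ∀ j, ENNReal.ofReal ((2:ℝ) ^ (t j - 1 - ((m j : ℤ) - 1)))
        ≤ volume (SS (PL j) (β j) (t j - 1)) := by
      intro j
      have hβal : β j = ((2 * z j + 1 : ℤ) : ℝ) * 2 ^ (t j - 1) := by
        have h3 := align_high (z j) (t j)
        rw [hβval j]
        push_cast at h3 ⊢
        linarith
      rw [hβal, vol_SS' (PL j) (t j - 1) (2 * z j + 1) (hPLlt j)]
      apply ENNReal.ofReal_le_ofReal
      apply zpow_le_zpow_right₀ (by norm_num : (1:ℝ) ≤ 2)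
      have h1 : ((PL j).card : ℤ) ≤ ((m j - 1 : ℕ) : ℤ) := by exact_mod_cast hPLcard j
      have h2 : ((m j - 1 : ℕ) : ℤ) = (m j : ℤ) - 1 := by
        have := hmj1 m hm j
        push_cast [Nat.cast_sub this]
        ring
      omega
    have hQ'volval : volume Q'.toSet = ENNReal.ofReal (∏ j, (Qf m).side j) := by
      rw [BoxInterval.toSet, volume_pi_pi]
      rw [Finset.prod_congr rfl (fun j _ => by rw [Real.volume_Icc, hQ'side j] :
        ∀ j ∈ Finset.univ, volume (Icc (Q'.a j) (Q'.b j)) = ENNReal.ofReal ((Qf m).side j))]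
      rw [ENNReal.ofReal_prod_of_nonneg (fun j _ => (lt_trans (two_zpow_pos _) (hqlo j)).le)]
    have hQ'prodpos : 0 < ∏ j, (Qf m).side j :=
      Finset.prod_pos (fun j _ => lt_trans (two_zpow_pos _) (hqlo j))
    have hEQlower : ENNReal.ofReal (((1:ℝ)/2) ^ k * ∏ j, (Qf m).side j)
        ≤ volume (E ∩ Q'.toSet) := by
      have hr1 : ((1:ℝ)/2) ^ k * ∏ j, (Qf m).side j
          ≤ (2:ℝ) ^ (∑ j, (t j - 1 - ((m j : ℤ) - 1))) := by
        have hTsum : ∑ j, (t j - 1 - ((m j : ℤ) - 1)) = (∑ j, t j) - k := by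
          have : ∀ j, t j - 1 - ((m j : ℤ) - 1) = t j - (m j : ℤ) := fun j => by ring
          rw [Finset.sum_congr rfl (fun j _ => this j), Finset.sum_sub_distrib]
          congr 1
          rw [← Nat.cast_sum]
          exact_mod_cast congrArg (Nat.cast : ℕ → ℤ) (hmsum m hm)
        have hsideprod : ∏ j, (Qf m).side j ≤ (2:ℝ) ^ (∑ j, t j) := by
          rw [← prod_two_zpow]
          exact Finset.prod_le_prod (fun j _ => (lt_trans (two_zpow_pos _) (hqlo j)).le)
            (fun j _ => hqhi j)
        have hhalf : ((1:ℝ)/2) ^ k = (2:ℝ) ^ (-(k:ℤ)) := by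
          rw [one_div, inv_pow, ← zpow_natCast, ← zpow_neg]
        rw [hhalf, hTsum]
        calc (2:ℝ) ^ (-(k:ℤ)) * ∏ j, (Qf m).side j
            ≤ (2:ℝ) ^ (-(k:ℤ)) * (2:ℝ) ^ (∑ j, t j) := by
              apply mul_le_mul_of_nonneg_left hsideprod (two_zpow_pos _).le
          _ = (2:ℝ) ^ ((∑ j, t j) - k) := by
              rw [← zpow_add₀ (by norm_num : (2:ℝ) ≠ 0)]
              congr 1
              ring
      calc ENNReal.ofReal (((1:ℝ)/2) ^ k * ∏ j, (Qf m).side j)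
          ≤ ENNReal.ofReal ((2:ℝ) ^ (∑ j, (t j - 1 - ((m j : ℤ) - 1)))) :=
            ENNReal.ofReal_le_ofReal hr1
        _ = ∏ j, ENNReal.ofReal ((2:ℝ) ^ (t j - 1 - ((m j : ℤ) - 1))) :=
            (prod_ofReal_two_zpow Finset.univ _).symm
        _ ≤ ∏ j, volume (SS (PL j) (β j) (t j - 1)) :=
            Finset.prod_le_prod' (fun j _ => hVvolj j)
        _ = volume V := by rw [hVdef, volume_pi_pi]
        _ ≤ volume (E ∩ Q'.toSet) := measure_mono hVsub
    have hintegral : ∫⁻ y in Q'.toSet, ENNReal.ofReal |E.indicator (fun _ => (1:ℝ)) y| ∂volume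
        = volume (E ∩ Q'.toSet) := by
      have hpt : ∀ y, ENNReal.ofReal |E.indicator (fun _ => (1:ℝ)) y|
          = E.indicator (fun _ => (1:ℝ≥0∞)) y := by
        intro y
        by_cases hy : y ∈ E <;>
          simp [Set.indicator_of_mem, Set.indicator_of_notMem, hy]
      rw [lintegral_congr hpt, lintegral_indicator hEm, setLIntegral_one,
        Measure.restrict_apply hEm]
    have hvol0 : volume Q'.toSet ≠ 0 := by
      rw [hQ'volval]
      exact (ENNReal.ofReal_pos.mpr hQ'prodpos).ne'
    have hvoltop : volume Q'.toSet ≠ ⊤ := by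
      rw [hQ'volval]
      exact ENNReal.ofReal_ne_top
    have h2i : ENNReal.ofReal ((1:ℝ)/2) = (2:ℝ≥0∞)⁻¹ := by
      rw [one_div, ENNReal.ofReal_inv_of_pos (by norm_num : (0:ℝ) < 2)]
      norm_num
    have h12 : ENNReal.ofReal (((1:ℝ)/2) ^ k) = (1:ℝ≥0∞) / 2 ^ k := by
      rw [ENNReal.ofReal_pow (by norm_num : (0:ℝ) ≤ 1/2), h2i, one_div, ← ENNReal.inv_pow]
    have hlevel : (1:ℝ≥0∞) / 2 ^ k ≤
        (∫⁻ y in Q'.toSet, ENNReal.ofReal |E.indicator (fun _ => (1:ℝ)) y| ∂volume)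
          / volume Q'.toSet := by
      rw [ENNReal.le_div_iff_mul_le (Or.inl hvol0) (Or.inl hvoltop), hintegral]
      calc (1:ℝ≥0∞) / 2 ^ k * volume Q'.toSet
          = ENNReal.ofReal (((1:ℝ)/2) ^ k) * ENNReal.ofReal (∏ j, (Qf m).side j) := by
            rw [h12, hQ'volval]
        _ = ENNReal.ofReal (((1:ℝ)/2) ^ k * ∏ j, (Qf m).side j) := by
            rw [← ENNReal.ofReal_mul (by positivity)]
        _ ≤ volume (E ∩ Q'.toSet) := hEQlower
    refine Set.mem_setOf.mpr (le_trans hlevel ?_)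
    rw [maxOp]
    exact le_iSup_of_le Q' (le_iSup_of_le hQ'B (le_iSup_of_le hxmem le_rfl))
  -- overlap bound
  have hover : ∀ m ∈ Ω, ∀ m' ∈ Ω, volume (U m ∩ U m') ≤
      ENNReal.ofReal (uR * 2 ^ n * ∏ j, ((3:ℝ)/4) ^ (Nat.dist (m j) (m' j))) := by
    intro m hm m' hm'
    set Pm : Fin n → Finset ℤ :=
      fun j => (Finset.Icc (min (m j) (m' j)) (k-1)).image (s j) with hPmdef
    have hPmlt : ∀ j, ∀ p ∈ Pm j, p < s j k := by
      intro j p hp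
      rw [hPmdef] at hp
      obtain ⟨i, hi, rfl⟩ := Finset.mem_image.mp hp
      rw [Finset.mem_Icc] at hi
      exact hsm j i k (by omega) le_rfl
    have hPmcard : ∀ j, (Pm j).card = k - min (m j) (m' j) := by
      intro j
      rw [hPmdef, Finset.card_image_of_injOn
        (hinjIcc j (min (m j) (m' j)) (k-1) (by omega)), Nat.card_Icc]
      have h1 := hmjk m hm j
      have h2 := hmjk m' hm' j
      have h3 := hmj1 m hm j
      omega
    have hsub : U m ∩ U m' ⊆ Set.pi univ (fun j => SS (Pm j) 0 (s j k)) := by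
      intro y hy
      obtain ⟨hy1, hy2⟩ := hy
      rw [hUdef, Set.mem_pi] at hy1 hy2
      rw [Set.mem_pi]
      intro j hj
      refine ⟨((hy1 j hj).1 : y j ∈ Ico 0 (0 + 2 ^ (s j k))), ?_⟩
      intro p hp
      rw [hPmdef] at hp
      obtain ⟨i, hi, hpi⟩ := Finset.mem_image.mp hp
      rw [Finset.mem_Icc] at hi
      rcases le_total (m j) (m' j) with hmin | hmin
      · have himem : p ∈ PU m j := by
          rw [hPUdef]
          apply Finset.mem_insert_of_mem
          exact Finset.mem_image.mpr ⟨i, Finset.mem_Icc.mpr ⟨by omega, hi.2⟩, hpi⟩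
        exact (hy1 j hj).2 p himem
      · have himem : p ∈ PU m' j := by
          rw [hPUdef]
          apply Finset.mem_insert_of_mem
          exact Finset.mem_image.mpr ⟨i, Finset.mem_Icc.mpr ⟨by omega, hi.2⟩, hpi⟩
        exact (hy2 j hj).2 p himem
    set S : ℕ := ∑ j, min (m j) (m' j) with hSdef
    have hSk : S ≤ k := by
      rw [hSdef]
      calc ∑ j, min (m j) (m' j) ≤ ∑ j, m j :=
            Finset.sum_le_sum (fun j _ => min_le_left _ _)
        _ = k := hmsum m hm
    have hvol1 : volume (U m ∩ U m') ≤ ENNReal.ofReal ((2:ℝ) ^ (Sig - ((n:ℤ) * k - S))) := by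
      calc volume (U m ∩ U m') ≤ volume (Set.pi univ (fun j => SS (Pm j) 0 (s j k))) :=
            measure_mono hsub
        _ = ∏ j, volume (SS (Pm j) 0 (s j k)) := volume_pi_pi _
        _ = ∏ j, ENNReal.ofReal ((2:ℝ) ^ (s j k - ((Pm j).card : ℤ))) :=
            Finset.prod_congr rfl (fun j _ => vol_SS0 (Pm j) (s j k) (hPmlt j))
        _ = ENNReal.ofReal ((2:ℝ) ^ (∑ j, (s j k - ((Pm j).card : ℤ)))) :=
            prod_ofReal_two_zpow _ _
        _ = ENNReal.ofReal ((2:ℝ) ^ (Sig - ((n:ℤ) * k - S))) := by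
            congr 2
            rw [Finset.sum_sub_distrib, hSig]
            congr 1
            rw [Finset.sum_congr rfl (fun j _ => by rw [hPmcard j] :
              ∀ j ∈ Finset.univ, ((Pm j).card : ℤ) = ((k - min (m j) (m' j) : ℕ) : ℤ))]
            have hc : ∀ j, ((k - min (m j) (m' j) : ℕ) : ℤ) = (k:ℤ) - min (m j) (m' j) := by
              intro j
              have h1 := hmjk m hm j
              have : min (m j) (m' j) ≤ k := le_trans (min_le_left _ _) h1
              push_cast [Nat.cast_sub this]
              ring
            rw [Finset.sum_congr rfl (fun j _ => hc j), Finset.sum_sub_distrib,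
              Finset.sum_const, Finset.card_univ, Fintype.card_fin]
            have : ∑ j, ((min (m j) (m' j) : ℕ) : ℤ) = ((S : ℕ) : ℤ) := by
              rw [hSdef]
              push_cast
              rfl
            rw [this]
            push_cast
            ring
    refine le_trans hvol1 (ENNReal.ofReal_le_ofReal ?_)
    have hdistsum : 2 * (k - S) = ∑ j, Nat.dist (m j) (m' j) := by
      have := dist_min_sum k m m' (hmsum m hm) (hmsum m' hm')
      rw [← hSdef] at this
      omega
    have hhalf : ((1:ℝ)/2) ^ (k - S) ≤ ∏ j, ((3:ℝ)/4) ^ (Nat.dist (m j) (m' j)) := by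
      rw [Finset.prod_pow_eq_pow_sum]
      exact half_pow_le hdistsum
    have hid : (2:ℝ) ^ (Sig - ((n:ℤ) * k - S)) = uR * 2 ^ n * ((1:ℝ)/2) ^ (k - S) := by
      rw [huRdef]
      have h1 : ((1:ℝ)/2) ^ (k - S) = (2:ℝ) ^ (-(((k - S : ℕ) : ℤ))) := by
        rw [one_div, inv_pow, ← zpow_natCast, ← zpow_neg]
      have h2 : (2:ℝ) ^ n = (2:ℝ) ^ ((n : ℤ)) := by
        rw [← zpow_natCast]
      rw [h1, h2, ← zpow_add₀ (by norm_num : (2:ℝ) ≠ 0),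
        ← zpow_add₀ (by norm_num : (2:ℝ) ≠ 0)]
      congr 1
      have h3 : (((k - S : ℕ)) : ℤ) = (k : ℤ) - S := by
        push_cast [Nat.cast_sub hSk]
        ring
      rw [h3]
      ring
    calc (2:ℝ) ^ (Sig - ((n:ℤ) * k - S))
        = uR * 2 ^ n * ((1:ℝ)/2) ^ (k - S) := hid
      _ ≤ uR * 2 ^ n * ∏ j, ((3:ℝ)/4) ^ (Nat.dist (m j) (m' j)) := by
          apply mul_le_mul_of_nonneg_left hhalf
          have := two_zpow_pos (Sig - ((n:ℤ) * (k+1) - k))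
          positivity
  -- Cauchy-Schwarz and conclusion
  set F : Finset (Fin n → ℕ) := hΩfin.toFinset with hFdef
  have hFmem : ∀ m, m ∈ F ↔ m ∈ Ω := fun m => Set.Finite.mem_toFinset hΩfin
  have hNF : F.card = Ω.ncard := (Set.ncard_eq_toFinset_card Ω hΩfin).symm
  have hcs := meas_cs volume F U (fun m _ => hUmeas m)
  have hsum1 : ∑ m ∈ F, volume (U m) = (Ω.ncard : ℝ≥0∞) * ENNReal.ofReal uR := by
    rw [Finset.sum_congr rfl (fun m hmF => hUvol m ((hFmem m).mp hmF))]
    rw [Finset.sum_const, hNF, nsmul_eq_mul]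
  have hsum2 : ∑ m ∈ F, ∑ m' ∈ F, volume (U m ∩ U m')
      ≤ (Ω.ncard : ℝ≥0∞) * ENNReal.ofReal (uR * 2 ^ n * 7 ^ n) := by
    calc ∑ m ∈ F, ∑ m' ∈ F, volume (U m ∩ U m')
        ≤ ∑ _m ∈ F, ENNReal.ofReal (uR * 2 ^ n * 7 ^ n) := by
          apply Finset.sum_le_sum
          intro m hmF
          have hmΩ := (hFmem m).mp hmF
          calc ∑ m' ∈ F, volume (U m ∩ U m')
              ≤ ∑ m' ∈ F, ENNReal.ofReal
                  (uR * 2 ^ n * ∏ j, ((3:ℝ)/4) ^ (Nat.dist (m j) (m' j))) :=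
                Finset.sum_le_sum (fun m' hm'F => hover m hmΩ m' ((hFmem m').mp hm'F))
            _ = ENNReal.ofReal (∑ m' ∈ F,
                  uR * 2 ^ n * ∏ j, ((3:ℝ)/4) ^ (Nat.dist (m j) (m' j))) := by
                rw [ENNReal.ofReal_sum_of_nonneg]
                intro m' _
                have := two_zpow_pos (Sig - ((n:ℤ) * (k+1) - k))
                positivity
            _ ≤ ENNReal.ofReal (uR * 2 ^ n * 7 ^ n) := by
                apply ENNReal.ofReal_le_ofReal
                rw [← Finset.mul_sum]
                apply mul_le_mul_of_nonneg_left
                · calc ∑ m' ∈ F, ∏ j, ((3:ℝ)/4) ^ (Nat.dist (m j) (m' j))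
                      ≤ ∑ m' ∈ Fintype.piFinset (fun _ : Fin n => Finset.range (k+1)),
                          ∏ j, ((3:ℝ)/4) ^ (Nat.dist (m j) (m' j)) := by
                        apply Finset.sum_le_sum_of_subset_of_nonneg
                        · intro m' hm'F
                          rw [Fintype.mem_piFinset]
                          intro j
                          rw [Finset.mem_range]
                          have := hmjk m' ((hFmem m').mp hm'F) j
                          omega
                        · intro m' _ _
                          positivity
                    _ = ∏ j, ∑ a ∈ Finset.range (k+1), ((3:ℝ)/4) ^ (Nat.dist (m j) a) :=
                        (Finset.prod_univ_sum (fun _ : Fin n => Finset.range (k+1))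
                          (fun j a => ((3:ℝ)/4) ^ (Nat.dist (m j) a))).symm
                    _ ≤ ∏ _j : Fin n, (7:ℝ) := by
                        apply Finset.prod_le_prod
                        · intro j _
                          apply Finset.sum_nonneg
                          intro a _
                          positivity
                        · intro j _
                          exact distsum (hmjk m hmΩ j)
                    _ = 7 ^ n := by rw [Finset.prod_const, Finset.card_univ, Fintype.card_fin]
                · have := two_zpow_pos (Sig - ((n:ℤ) * (k+1) - k))
                  positivity
      _ = (Ω.ncard : ℝ≥0∞) * ENNReal.ofReal (uR * 2 ^ n * 7 ^ n) := by
          rw [Finset.sum_const, hNF, nsmul_eq_mul]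
  have hunion : volume (⋃ m ∈ F, U m)
      ≤ volume {x | (1:ℝ≥0∞) / 2 ^ k ≤ maxOp B (E.indicator fun _ => (1:ℝ)) x} :=
    measure_mono (Set.iUnion₂_subset fun m hmF => hcover m ((hFmem m).mp hmF))
  set A := volume {x | (1:ℝ≥0∞) / 2 ^ k ≤ maxOp B (E.indicator fun _ => (1:ℝ)) x} with hAdef
  set D : ℝ≥0∞ := (Ω.ncard : ℝ≥0∞) * ENNReal.ofReal (uR * 2 ^ n * 7 ^ n) with hDdef
  have huRpos : 0 < uR := two_zpow_pos _
  have hD0 : D ≠ 0 := by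
    rw [hDdef]
    apply mul_ne_zero
    · exact_mod_cast hN0
    · apply (ENNReal.ofReal_pos.mpr _).ne'
      positivity
  have hDtop : D ≠ ⊤ := by
    rw [hDdef]
    exact ENNReal.mul_ne_top (ENNReal.natCast_ne_top _) ENNReal.ofReal_ne_top
  have h1 : ((Ω.ncard : ℝ≥0∞) * ENNReal.ofReal uR) ^ 2 ≤ A * D := by
    rw [← hsum1]
    calc (∑ m ∈ F, volume (U m)) ^ 2
        ≤ volume (⋃ m ∈ F, U m) * (∑ m ∈ F, ∑ m' ∈ F, volume (U m ∩ U m')) := hcs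
      _ ≤ A * D := mul_le_mul' hunion hsum2
  -- key real identity
  set eR : ℝ := (2:ℝ) ^ (Sig - (n:ℤ) * ((k:ℤ) - 1)) with heRdef
  have heRpos : 0 < eR := two_zpow_pos _
  have hkey : ((1:ℝ)/56) ^ n * 2 ^ k * eR * (2 ^ n * 7 ^ n) = uR := by
    have hc1 : ((1:ℝ)/56) ^ n * (2 ^ n * 7 ^ n) = ((1:ℝ)/4) ^ n := by
      calc ((1:ℝ)/56) ^ n * (2 ^ n * 7 ^ n) = (((1:ℝ)/56) * (2 * 7)) ^ n := by
            rw [mul_pow ((1:ℝ)/56) (2*7), mul_pow (2:ℝ) 7]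
        _ = ((1:ℝ)/4) ^ n := by norm_num
    have hc2 : ((1:ℝ)/4) ^ n = (2:ℝ) ^ (-(2 * (n:ℤ))) := by
      rw [show ((1:ℝ)/4) = (2:ℝ) ^ (-2 : ℤ) by norm_num, ← zpow_natCast ((2:ℝ) ^ (-2:ℤ)) n,
        ← zpow_mul, show (-2:ℤ) * (n:ℤ) = -(2 * (n:ℤ)) by ring]
    have hc3 : (2:ℝ) ^ k = (2:ℝ) ^ ((k:ℤ)) := by rw [← zpow_natCast]
    calc ((1:ℝ)/56) ^ n * 2 ^ k * eR * (2 ^ n * 7 ^ n)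
        = (((1:ℝ)/56) ^ n * (2 ^ n * 7 ^ n)) * (2 ^ k * eR) := by ring
      _ = (2:ℝ) ^ (-(2 * (n:ℤ))) * ((2:ℝ) ^ ((k:ℤ)) * eR) := by rw [hc1, hc2, hc3]
      _ = uR := by
          rw [heRdef, huRdef, ← zpow_add₀ (by norm_num : (2:ℝ) ≠ 0),
            ← zpow_add₀ (by norm_num : (2:ℝ) ≠ 0)]
          congr 1
          ring
  have hEvol' : volume E = ENNReal.ofReal eR := by rw [hEvol, heRdef]
  have hmain : ENNReal.ofReal ((Ω.ncard : ℝ) * 2 ^ k * ((1:ℝ)/56) ^ n) * volume E * D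
      ≤ A * D := by
    refine le_trans ?_ h1
    have hNcast : ((Ω.ncard : ℝ≥0∞)) = ENNReal.ofReal ((Ω.ncard : ℝ)) :=
      (ENNReal.ofReal_natCast _).symm
    have heq : ENNReal.ofReal ((Ω.ncard : ℝ) * 2 ^ k * ((1:ℝ)/56) ^ n) * volume E * D
        = ((Ω.ncard : ℝ≥0∞) * ENNReal.ofReal uR) ^ 2 := by
      have hrhs : ((Ω.ncard : ℝ≥0∞) * ENNReal.ofReal uR) ^ 2
          = ENNReal.ofReal (((Ω.ncard : ℝ) * uR) ^ 2) := by
        rw [hNcast, ← ENNReal.ofReal_mul (by positivity),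
          ← ENNReal.ofReal_pow (by positivity)]
      have hlhs : ENNReal.ofReal ((Ω.ncard : ℝ) * 2 ^ k * ((1:ℝ)/56) ^ n) * volume E * D
          = ENNReal.ofReal ((Ω.ncard : ℝ) * 2 ^ k * ((1:ℝ)/56) ^ n * eR *
              ((Ω.ncard : ℝ) * (uR * 2 ^ n * 7 ^ n))) := by
        rw [hEvol', hDdef, hNcast, ← ENNReal.ofReal_mul (by positivity),
          ← ENNReal.ofReal_mul (by positivity), ← ENNReal.ofReal_mul (by positivity)]
      rw [hlhs, hrhs]
      congr 1
      calc (Ω.ncard : ℝ) * 2 ^ k * ((1:ℝ)/56) ^ n * eR * ((Ω.ncard : ℝ) * (uR * 2 ^ n * 7 ^ n))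
          = ((Ω.ncard : ℝ) * (Ω.ncard : ℝ)) * uR *
              (((1:ℝ)/56) ^ n * 2 ^ k * eR * (2 ^ n * 7 ^ n)) := by ring
        _ = ((Ω.ncard : ℝ) * uR) ^ 2 := by rw [hkey]; ring
    rw [heq]
  have hfinal := (ENNReal.mul_le_mul_iff_left hD0 hDtop).mp hmain
  rw [hAdef] at hfinal
  exact hfinal

end Stmt6

/-- Theorem 2: if `B` is `Ω_j`-complete for sets `Ω_j ⊆ Ω_{n,k_j}` with
`inf_j card(Ω_j)/k_j^{n-1} > 0`, then for every `j` there is a bounded set `E_j` of positive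
measure with `|{M_B χ_{E_j} ≥ 2^{-k_j}}| ≥ c_B k_j^{n-1} 2^{k_j} |E_j|`, where
`c_B = cₙ · inf_j card(Ω_j)/k_j^{n-1}`. -/
theorem statement6 (n : ℕ) (hn : 1 ≤ n) (B : Set (BoxInterval n)) (hB : IsRareBasis B)
    (k : ℕ → ℕ) (hk : StrictMono k) (hkn : ∀ j, n ≤ k j)
    (Ω : ℕ → Set (Fin n → ℕ)) (hΩ : ∀ j, Ω j ⊆ OmegaNK n (k j))
    (hcomp : ∀ j, OmegaComplete B (k j) (Ω j))
    (hinf : 0 < ⨅ j : ℕ, ((Ω j).ncard : ℝ) / (k j : ℝ) ^ (n - 1)) :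
    ∃ c : ℝ, 0 < c ∧ ∀ j : ℕ,
      ∃ E : Set (Fin n → ℝ), Bornology.IsBounded E ∧ MeasurableSet E ∧ 0 < volume E ∧
        ENNReal.ofReal ((c * ⨅ i : ℕ, ((Ω i).ncard : ℝ) / (k i : ℝ) ^ (n - 1)) *
              ((k j : ℝ) ^ (n - 1) * 2 ^ k j)) * volume E ≤
          volume {x | (1:ℝ≥0∞) / 2 ^ k j ≤ maxOp B (E.indicator fun _ => (1:ℝ)) x} := by
  classical
  refine ⟨((1:ℝ)/56) ^ n, by positivity, fun j => ?_⟩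
  obtain ⟨E, hEb, hEm, hEpos, hEineq⟩ :=
    Stmt6.main_construction n hn B hB (k j) (hkn j) (Ω j) (hΩ j) (hcomp j)
  refine ⟨E, hEb, hEm, hEpos, le_trans (mul_le_mul_left (ENNReal.ofReal_le_ofReal ?_) _) hEineq⟩
  set I := ⨅ i : ℕ, ((Ω i).ncard : ℝ) / (k i : ℝ) ^ (n - 1) with hIdef
  have hI0 : 0 < I := hinf
  have hP : (0:ℝ) < (k j : ℝ) ^ (n - 1) := by
    have : (1:ℕ) ≤ k j := le_trans hn (hkn j)
    positivity
  have hIle : I ≤ ((Ω j).ncard : ℝ) / (k j : ℝ) ^ (n - 1) := by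
    apply ciInf_le
    refine ⟨0, ?_⟩
    rintro y ⟨i, rfl⟩
    positivity
  have hmul : I * (k j : ℝ) ^ (n - 1) ≤ ((Ω j).ncard : ℝ) := by
    have := mul_le_mul_of_nonneg_right hIle hP.le
    rwa [div_mul_cancel₀ _ hP.ne'] at this
  calc ((1:ℝ)/56) ^ n * I * ((k j : ℝ) ^ (n - 1) * 2 ^ k j)
      = (I * (k j : ℝ) ^ (n - 1)) * (((1:ℝ)/56) ^ n * 2 ^ k j) := by ring
    _ ≤ ((Ω j).ncard : ℝ) * (((1:ℝ)/56) ^ n * 2 ^ k j) := by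
        apply mul_le_mul_of_nonneg_right hmul
        positivity
    _ = ((Ω j).ncard : ℝ) * 2 ^ k j * ((1:ℝ)/56) ^ n := by ring

end
end

section
/- Let B₁ be a rare basis of two-dimensional intervals satisfying the (is)-property and let B₂ be a translation-invariant collection of one-dimensional intervals whose lengths form an infinite set of dyadic numbers, and set B = B₁×B₂ = {J₁×J₂ : J₁ ∈ B₁, J₂ ∈ B₂} in ℝ³. Then there is a constant c > 0 such that for every α ∈ (0,1) there exists a bounded measurable set E ⊂ ℝ³ of positive Lebesgue measure with |{x ∈ ℝ³ : M_B(χ_E)(x) > α}| ≥ c · (1/α) · (1 + log(1/α))² · |E|. -/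
open MeasureTheory Set
open scoped ENNReal

noncomputable section

-- ### Auxiliary machinery for the proof ###
namespace RareAux

/-- One refinement step: `2^(m'-m-1)` copies of `S` spaced `2^(m+1)` apart. -/
def cstep (m m' : ℤ) (S : Set ℝ) : Set ℝ :=
  ⋃ t ∈ Finset.range (2 ^ (m' - m - 1).toNat), (fun y => y + (t : ℝ) * (2:ℝ) ^ (m + 1)) '' S

def citer (p : ℕ → ℤ) (i : ℕ) (S : Set ℝ) : ℕ → Set ℝ
  | 0 => S
  | n + 1 => cstep (p (i + n)) (p (i + n + 1)) (citer p i S n)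

lemma image_add_eq_preimage (c : ℝ) (S : Set ℝ) :
    (fun y => y + c) '' S = (fun y => y + (-c)) ⁻¹' S := by
  ext x
  constructor
  · rintro ⟨y, hy, rfl⟩; simpa using hy
  · intro h; exact ⟨x + -c, h, by ring⟩

lemma volume_image_add (c : ℝ) (S : Set ℝ) :
    volume ((fun y => y + c) '' S) = volume S := by
  rw [image_add_eq_preimage]
  exact measure_preimage_add_right volume (-c) S

lemma measurableSet_image_add (c : ℝ) {S : Set ℝ} (hS : MeasurableSet S) :
    MeasurableSet ((fun y => y + c) '' S) := by
  rw [image_add_eq_preimage]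
  exact hS.preimage (measurable_add_const _)

lemma npow_toNat_eq {m m' : ℤ} (h : m < m') :
    ((2 ^ (m' - m - 1).toNat : ℕ) : ℝ) = (2:ℝ) ^ (m' - m - 1) := by
  push_cast
  rw [← zpow_natCast (2:ℝ), Int.toNat_of_nonneg (by omega)]

lemma cstep_subset {m m' : ℤ} (h : m < m') {S : Set ℝ}
    (hS : S ⊆ Icc 0 ((2:ℝ) ^ m)) : cstep m m' S ⊆ Icc 0 ((2:ℝ) ^ m') := by
  intro x hx
  simp only [cstep, Set.mem_iUnion, Finset.mem_range] at hx
  obtain ⟨t, ht, y, hy, rfl⟩ := hx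
  have hy' := hS hy
  rw [Set.mem_Icc] at hy' ⊢
  dsimp only
  have h2 : (0:ℝ) < 2 := by norm_num
  have hpow : ∀ z : ℤ, (0:ℝ) < 2 ^ z := fun z => zpow_pos h2 z
  constructor
  · have : (0:ℝ) ≤ (t:ℝ) * 2 ^ (m+1) := by positivity
    have := hy'.1; linarith
  · have htle : (t:ℝ) ≤ (2 ^ (m' - m - 1).toNat : ℕ) - 1 := by
      have : (t:ℝ) + 1 ≤ ((2 ^ (m' - m - 1).toNat : ℕ) : ℝ) := by exact_mod_cast ht
      linarith
    have hN : ((2 ^ (m' - m - 1).toNat : ℕ) : ℝ) * 2 ^ (m+1) = 2 ^ m' := by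
      rw [npow_toNat_eq h, ← zpow_add₀ (by norm_num : (2:ℝ) ≠ 0)]
      ring_nf
    have h1 : (t:ℝ) * 2 ^ (m+1) ≤ 2 ^ m' - 2 ^ (m+1) := by
      have := mul_le_mul_of_nonneg_right htle (le_of_lt (hpow (m+1)))
      rw [sub_mul, one_mul, hN] at this
      linarith
    have h2m : (2:ℝ) ^ (m+1) = 2 * 2 ^ m := by
      rw [zpow_add₀ (by norm_num : (2:ℝ) ≠ 0)]; ring
    have := hy'.2
    have hm := hpow m
    nlinarith [hpow (m+1)]

end RareAux

namespace RareAux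

lemma copy_subset {m : ℤ} {S : Set ℝ} (hS : S ⊆ Icc 0 ((2:ℝ) ^ m)) (c : ℝ) :
    (fun y => y + c) '' S ⊆ Icc c (c + 2 ^ m) := by
  rintro x ⟨y, hy, rfl⟩
  have := hS hy
  rw [Set.mem_Icc] at this ⊢
  dsimp only
  constructor <;> linarith [this.1, this.2]

lemma cstep_mono {m m' : ℤ} {S S' : Set ℝ} (h : S ⊆ S') : cstep m m' S ⊆ cstep m m' S' := by
  apply Set.iUnion₂_mono
  intro t _
  exact Set.image_mono h

lemma cstep_meas {m m' : ℤ} {S : Set ℝ} (hS : MeasurableSet S) : MeasurableSet (cstep m m' S) :=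
  MeasurableSet.biUnion (Finset.range _).countable_toSet
    (fun t _ => measurableSet_image_add _ hS)

lemma copies_disjoint {m : ℤ} {S : Set ℝ} (hS : S ⊆ Icc 0 ((2:ℝ) ^ m)) {t t' : ℕ} (h : t ≠ t') :
    Disjoint ((fun y => y + (t:ℝ) * (2:ℝ)^(m+1)) '' S) ((fun y => y + (t':ℝ) * (2:ℝ)^(m+1)) '' S) := by
  have hm : (0:ℝ) < 2 ^ m := by positivity
  have h2m : (2:ℝ) ^ (m+1) = 2 * 2 ^ m := by
    rw [zpow_add₀ (by norm_num : (2:ℝ) ≠ 0)]; ring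
  have key : ∀ a b : ℕ, a < b →
      Disjoint ((fun y => y + (a:ℝ) * (2:ℝ)^(m+1)) '' S) ((fun y => y + (b:ℝ) * (2:ℝ)^(m+1)) '' S) := by
    intro a b hab
    apply Set.disjoint_of_subset (copy_subset hS _) (copy_subset hS _)
    rw [Set.disjoint_left]
    rintro x ⟨_, h1⟩ ⟨h2, _⟩
    have hab' : (a:ℝ) + 1 ≤ (b:ℝ) := by exact_mod_cast hab
    nlinarith
  rcases h.lt_or_gt with hlt | hlt
  · exact key _ _ hlt
  · exact (key _ _ hlt).symm

lemma cstep_volume {m m' : ℤ} {S : Set ℝ} (hS : S ⊆ Icc 0 ((2:ℝ) ^ m)) (hm : MeasurableSet S) :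
    volume (cstep m m' S) = ((2 ^ (m' - m - 1).toNat : ℕ) : ℝ≥0∞) * volume S := by
  rw [cstep, measure_biUnion_finset]
  · simp only [volume_image_add]
    rw [Finset.sum_const, Finset.card_range, nsmul_eq_mul]
  · intro t _ t' _ h
    exact copies_disjoint hS h
  · exact fun t _ => measurableSet_image_add _ hm

variable {p : ℕ → ℤ}

lemma citer_subset (hp : ∀ n, p n < p (n+1)) {i : ℕ} {S : Set ℝ}
    (hS : S ⊆ Icc 0 ((2:ℝ) ^ (p i))) : ∀ n, citer p i S n ⊆ Icc 0 ((2:ℝ) ^ (p (i+n)))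
  | 0 => hS
  | n + 1 => cstep_subset (hp (i+n)) (citer_subset hp hS n)

lemma citer_meas {i : ℕ} {S : Set ℝ} (hS : MeasurableSet S) :
    ∀ n, MeasurableSet (citer p i S n)
  | 0 => hS
  | n + 1 => cstep_meas (citer_meas hS n)

lemma citer_mono {i : ℕ} {S S' : Set ℝ} (h : S ⊆ S') :
    ∀ n, citer p i S n ⊆ citer p i S' n
  | 0 => h
  | n + 1 => cstep_mono (citer_mono h n)

lemma citer_volume (hp : ∀ n, p n < p (n+1)) {i : ℕ} {S : Set ℝ}
    (hS : S ⊆ Icc 0 ((2:ℝ) ^ (p i))) (hm : MeasurableSet S) : ∀ n,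
    volume (citer p i S n) = ENNReal.ofReal ((2:ℝ) ^ (p (i+n) - p i - n)) * volume S
  | 0 => by simp [citer]
  | n + 1 => by
    rw [citer, cstep_volume (citer_subset hp hS n) (citer_meas hm n), citer_volume hp hS hm n,
      ← mul_assoc]
    congr 1
    rw [← ENNReal.ofReal_natCast, ← ENNReal.ofReal_mul (by positivity),
      npow_toNat_eq (hp (i+n)), ← zpow_add₀ (by norm_num : (2:ℝ) ≠ 0)]
    congr 1
    push_cast
    ring

lemma citer_comp {S : Set ℝ} (i : ℕ) : ∀ n, citer p 0 S (i + n) = citer p i (citer p 0 S i) n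
  | 0 => rfl
  | n + 1 => by
    show citer p 0 S ((i + n) + 1) = _
    rw [citer, citer, citer_comp i n, Nat.zero_add]

end RareAux

namespace RareAux

lemma N_mul {m m' : ℤ} (h : m < m') :
    ((2 ^ (m' - m - 1).toNat : ℕ) : ℝ) * (2:ℝ) ^ (m + 1) = 2 ^ m' := by
  rw [npow_toNat_eq h, ← zpow_add₀ (by norm_num : (2:ℝ) ≠ 0)]
  congr 1
  ring

lemma window_eq {m : ℤ} {t t' : ℕ} {z : ℝ}
    (h1 : z ∈ Icc ((t:ℝ) * 2^(m+1)) ((t:ℝ) * 2^(m+1) + 2^m))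
    (h2 : z ∈ Icc ((t':ℝ) * 2^(m+1)) ((t':ℝ) * 2^(m+1) + 2^m)) : t = t' := by
  by_contra hne
  rw [Set.mem_Icc] at h1 h2
  have hm : (0:ℝ) < 2^m := by positivity
  have h2m : (2:ℝ)^(m+1) = 2*2^m := by
    rw [zpow_add₀ (by norm_num : (2:ℝ) ≠ 0)]; ring
  rcases Ne.lt_or_gt hne with hlt | hlt
  · have hc : (t:ℝ)+1 ≤ (t':ℝ) := by exact_mod_cast hlt
    nlinarith [h1.1, h1.2, h2.1, h2.2]
  · have hc : (t':ℝ)+1 ≤ (t:ℝ) := by exact_mod_cast hlt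
    nlinarith [h1.1, h1.2, h2.1, h2.2]

variable {p : ℕ → ℤ}

lemma citer_window (hp : ∀ n, p n < p (n+1)) {i : ℕ} {S : Set ℝ}
    (hm : MeasurableSet S) (hSsub : S ⊆ Icc 0 ((2:ℝ) ^ p i)) :
    ∀ n, ∀ x ∈ citer p i (Icc 0 ((2:ℝ) ^ p i)) n, ∃ τ : ℝ, 0 ≤ τ ∧
      τ + 2 ^ p i ≤ 2 ^ p (i + n) ∧ x ∈ Icc τ (τ + 2 ^ p i) ∧
      volume (citer p i S n ∩ Icc τ (τ + 2 ^ p i)) = volume S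
  | 0 => by
    intro x hx
    refine ⟨0, le_refl _, by simpa using le_refl _, by simpa [citer] using hx, ?_⟩
    rw [citer, zero_add, Set.inter_eq_left.mpr hSsub]
  | n + 1 => by
    intro x hx
    simp only [citer, cstep, Set.mem_iUnion, Finset.mem_range] at hx
    obtain ⟨t, ht, y, hy, rfl⟩ := hx
    obtain ⟨τy, hτ0, hτtop, hymem, hvol⟩ := citer_window hp hm hSsub n y hy
    rw [Set.mem_Icc] at hymem
    set c := (t:ℝ) * 2 ^ (p (i+n) + 1) with hc
    have hc0 : 0 ≤ c := by positivity
    have hpn : (0:ℝ) < 2 ^ p (i+n) := by positivity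
    have hpi : (0:ℝ) < 2 ^ p i := by positivity
    have h2m : (2:ℝ)^(p (i+n)+1) = 2*2^(p (i+n)) := by
      rw [zpow_add₀ (by norm_num : (2:ℝ) ≠ 0)]; ring
    have hcb : c + 2^(p (i+n)+1) ≤ 2^(p (i+n+1)) := by
      have h1 : (t:ℝ) + 1 ≤ ((2 ^ (p (i+n+1) - p (i+n) - 1).toNat : ℕ) : ℝ) := by
        exact_mod_cast ht
      have := mul_le_mul_of_nonneg_right h1 (le_of_lt (by positivity : (0:ℝ) < 2^(p (i+n)+1)))
      rw [add_mul, one_mul, N_mul (hp (i+n))] at this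
      linarith
    refine ⟨τy + c, by linarith, ?_, ?_, ?_⟩
    · show τy + c + 2 ^ p i ≤ 2 ^ p ((i+n) + 1)
      linarith
    · rw [Set.mem_Icc]; constructor <;> dsimp only <;> linarith
    · have hWsub : Icc (τy + c) (τy + c + 2^(p i)) ⊆ Icc c (c + 2^(p (i+n))) :=
        Set.Icc_subset_Icc (by linarith) (by linarith)
      have hIccimg : Icc (τy + c) (τy + c + 2^(p i)) =
          (fun y => y + c) '' Icc τy (τy + 2^(p i)) := by
        rw [Set.image_add_const_Icc]
        congr 1
        ring
      have hset : citer p i S (n+1) ∩ Icc (τy+c) (τy+c+2^(p i)) =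
          (fun y => y + c) '' (citer p i S n ∩ Icc τy (τy + 2^(p i))) := by
        rw [Set.image_inter (add_left_injective c), ← hIccimg]
        apply Set.Subset.antisymm
        · rintro z ⟨hz1, hz2⟩
          simp only [citer, cstep, Set.mem_iUnion, Finset.mem_range] at hz1
          obtain ⟨t', ht', w, hw, rfl⟩ := hz1
          have hw' := citer_subset hp hSsub n hw
          rw [Set.mem_Icc] at hw'
          have hmem1 : w + (t':ℝ) * 2^(p (i+n)+1) ∈
              Icc ((t':ℝ) * 2^(p (i+n)+1)) ((t':ℝ) * 2^(p (i+n)+1) + 2^(p (i+n))) := by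
            rw [Set.mem_Icc]
            constructor <;> linarith [hw'.1, hw'.2]
          have hmem2 : w + (t':ℝ) * 2^(p (i+n)+1) ∈
              Icc ((t:ℝ) * 2^(p (i+n)+1)) ((t:ℝ) * 2^(p (i+n)+1) + 2^(p (i+n))) :=
            hWsub hz2
          have hteq : t' = t := window_eq hmem1 hmem2
          subst hteq
          exact ⟨Set.mem_image_of_mem _ hw, hz2⟩
        · rintro z ⟨hz1, hz2⟩
          refine ⟨?_, hz2⟩
          simp only [citer, cstep, Set.mem_iUnion, Finset.mem_range]
          exact ⟨t, ht, hz1⟩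
      rw [hset, volume_image_add, hvol]

end RareAux

namespace RareAux
variable {p : ℕ → ℤ}

/-- The Cantor-type set built on scales `2^(p 0) < … < 2^(p k)`. -/
def Aset (p : ℕ → ℤ) (k : ℕ) : Set ℝ := citer p 0 (Icc 0 ((2:ℝ)^(p 0))) k

/-- The union of the level-`i` windows. -/
def Gset (p : ℕ → ℤ) (k i : ℕ) : Set ℝ := citer p i (Icc 0 ((2:ℝ)^(p i))) (k - i)

lemma Aset_meas (k : ℕ) : MeasurableSet (Aset p k) := citer_meas measurableSet_Icc k

lemma Gset_meas (k i : ℕ) : MeasurableSet (Gset p k i) := citer_meas measurableSet_Icc _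

lemma Aset_sub (hp : ∀ n, p n < p (n+1)) (k : ℕ) : Aset p k ⊆ Icc 0 ((2:ℝ)^(p k)) := by
  have := citer_subset hp (le_refl (Icc 0 ((2:ℝ)^(p 0)))) k
  rwa [Nat.zero_add] at this

lemma Gset_sub (hp : ∀ n, p n < p (n+1)) {k i : ℕ} (h : i ≤ k) :
    Gset p k i ⊆ Icc 0 ((2:ℝ)^(p k)) := by
  have := citer_subset hp (le_refl (Icc 0 ((2:ℝ)^(p i)))) (k - i)
  rwa [show i + (k - i) = k by omega] at this

lemma vol_Icc_pow (z : ℤ) : volume (Icc 0 ((2:ℝ)^z)) = ENNReal.ofReal ((2:ℝ)^z) := by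
  rw [Real.volume_Icc, sub_zero]

lemma Aset_vol (hp : ∀ n, p n < p (n+1)) (k : ℕ) :
    volume (Aset p k) = ENNReal.ofReal ((2:ℝ)^(p k - k)) := by
  rw [Aset, citer_volume hp (le_refl _) measurableSet_Icc, vol_Icc_pow,
    ← ENNReal.ofReal_mul (by positivity), ← zpow_add₀ (by norm_num : (2:ℝ) ≠ 0), Nat.zero_add]
  congr 1
  ring

lemma Gset_vol (hp : ∀ n, p n < p (n+1)) {k i : ℕ} (h : i ≤ k) :
    volume (Gset p k i) = ENNReal.ofReal ((2:ℝ)^(p k - k + i)) := by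
  rw [Gset, citer_volume hp (le_refl _) measurableSet_Icc, vol_Icc_pow,
    ← ENNReal.ofReal_mul (by positivity), ← zpow_add₀ (by norm_num : (2:ℝ) ≠ 0),
    show i + (k - i) = k by omega]
  congr 1
  push_cast [show ((k - i : ℕ) : ℤ) = (k : ℤ) - i by omega]
  ring

lemma citer_shift (hp : ∀ n, p n < p (n+1)) (i : ℕ) :
    ∀ n, citer p i (Icc 0 ((2:ℝ)^(p i))) (n+1) ⊆ citer p (i+1) (Icc 0 ((2:ℝ)^(p (i+1)))) n
  | 0 => by
    show cstep (p (i+0)) (p (i+0+1)) _ ⊆ Icc 0 ((2:ℝ)^(p (i+1)))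
    exact cstep_subset (hp i) (le_refl _)
  | n + 1 => by
    show cstep (p (i+(n+1))) (p (i+(n+1)+1)) _ ⊆ cstep (p ((i+1)+n)) (p ((i+1)+n+1)) _
    rw [show i + (n+1) = (i+1) + n by omega]
    exact cstep_mono (citer_shift hp i n)

lemma Gset_succ_subset (hp : ∀ n, p n < p (n+1)) {k i : ℕ} (h : i < k) :
    Gset p k i ⊆ Gset p k (i+1) := by
  rw [Gset, Gset, show k - i = (k - (i+1)) + 1 by omega]
  exact citer_shift hp i _

lemma Gset_mono (hp : ∀ n, p n < p (n+1)) {k i j : ℕ} (hij : i ≤ j) (hj : j ≤ k) :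
    Gset p k i ⊆ Gset p k j := by
  induction j, hij using Nat.le_induction with
  | base => exact le_refl _
  | succ m him ih =>
    exact (ih (by omega)).trans (Gset_succ_subset hp (by omega))

lemma Gset_window (hp : ∀ n, p n < p (n+1)) {k i : ℕ} (h : i ≤ k) :
    ∀ x ∈ Gset p k i, ∃ τ : ℝ, x ∈ Icc τ (τ + 2^(p i)) ∧
      volume (Aset p k ∩ Icc τ (τ + 2^(p i))) = ENNReal.ofReal ((2:ℝ)^(p i - i)) := by
  intro x hx
  have hS : citer p 0 (Icc 0 ((2:ℝ)^(p 0))) i ⊆ Icc 0 ((2:ℝ)^(p i)) := by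
    have := citer_subset hp (le_refl (Icc 0 ((2:ℝ)^(p 0)))) i
    rwa [Nat.zero_add] at this
  obtain ⟨τ, _, _, hmem, hvol⟩ :=
    citer_window hp (citer_meas measurableSet_Icc i) hS (k - i) x hx
  refine ⟨τ, hmem, ?_⟩
  have hcomp : citer p i (citer p 0 (Icc 0 ((2:ℝ)^(p 0))) i) (k - i) = Aset p k := by
    rw [← citer_comp, show i + (k - i) = k by omega]; rfl
  rw [hcomp] at hvol
  rw [hvol, citer_volume hp (le_refl _) measurableSet_Icc, vol_Icc_pow,
    ← ENNReal.ofReal_mul (by positivity), ← zpow_add₀ (by norm_num : (2:ℝ) ≠ 0), Nat.zero_add]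
  congr 1
  ring

end RareAux

namespace RareAux

lemma box_ext {n : ℕ} {R S : BoxInterval n} (ha : R.a = S.a) (hb : R.b = S.b) : R = S := by
  cases R; cases S
  simp only at ha hb
  subst ha; subst hb
  rfl

lemma box_toSet_inj {n : ℕ} {R S : BoxInterval n} (h : R.toSet = S.toSet) : R = S := by
  have key : ∀ j, Icc (R.a j) (R.b j) = Icc (S.a j) (S.b j) := by
    intro j
    have sub : ∀ (P Q : BoxInterval n), P.toSet = Q.toSet →
        Icc (P.a j) (P.b j) ⊆ Icc (Q.a j) (Q.b j) := by
      intro P Q hPQ t ht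
      have hx : (fun l => Function.update P.a j t l) ∈ P.toSet := by
        rw [BoxInterval.toSet, Set.mem_univ_pi]
        intro l
        by_cases hl : l = j
        · subst hl; simpa using ht
        · simp only [Function.update_of_ne hl]
          exact ⟨le_refl _, le_of_lt (P.hab l)⟩
      rw [hPQ, BoxInterval.toSet, Set.mem_univ_pi] at hx
      have := hx j
      simpa using this
    exact Set.Subset.antisymm (sub R S h) (sub S R h.symm)
  have h1 : ∀ j, R.a j = S.a j ∧ R.b j = S.b j := by
    intro j
    have hab := le_of_lt (R.hab j)
    have hab' := le_of_lt (S.hab j)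
    have h1 : R.a j ∈ Icc (S.a j) (S.b j) := by rw [← key j]; exact ⟨le_rfl, hab⟩
    have h2 : S.a j ∈ Icc (R.a j) (R.b j) := by rw [key j]; exact ⟨le_rfl, hab'⟩
    have h3 : R.b j ∈ Icc (S.a j) (S.b j) := by rw [← key j]; exact ⟨hab, le_rfl⟩
    have h4 : S.b j ∈ Icc (R.a j) (R.b j) := by rw [key j]; exact ⟨hab', le_rfl⟩
    exact ⟨le_antisymm h2.1 h1.1, le_antisymm h3.2 h4.2⟩
  exact box_ext (funext fun j => (h1 j).1) (funext fun j => (h1 j).2)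

lemma prodBox_translate (J1 : BoxInterval 2) (J2 : BoxInterval 1) (v : Fin 3 → ℝ) :
    (prodBox J1 J2).translate v =
      prodBox (J1.translate (Fin.init v)) (J2.translate (fun _ => v (Fin.last 2))) := by
  apply box_ext
  · funext j
    induction j using Fin.lastCases with
    | last => simp only [BoxInterval.translate, prodBox, Fin.snoc_last]
    | cast i => simp [BoxInterval.translate, prodBox, Fin.init]
  · funext j
    induction j using Fin.lastCases with
    | last => simp only [BoxInterval.translate, prodBox, Fin.snoc_last]
    | cast i => simp [BoxInterval.translate, prodBox, Fin.init]

end RareAux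


namespace RareAux

/-- Sides vector for a 3D dyadic box. -/
def sides3 (u v w : ℤ) : Fin 3 → ℝ := Fin.snoc ![(2:ℝ)^u, (2:ℝ)^v] ((2:ℝ)^w)

def box2 (u v : ℤ) : BoxInterval 2 :=
  ⟨fun _ => 0, ![(2:ℝ)^u, (2:ℝ)^v], by
    intro j
    fin_cases j <;> simp <;> positivity⟩

def box1 (w : ℤ) : BoxInterval 1 :=
  ⟨fun _ => 0, fun _ => (2:ℝ)^w, fun _ => by positivity⟩

lemma prodBox_box_a (u v w : ℤ) : (prodBox (box2 u v) (box1 w)).a = fun _ => 0 := by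
  funext j
  induction j using Fin.lastCases with
  | last => simp only [prodBox, box2, box1, Fin.snoc_last]
  | cast i => simp [prodBox, box2, box1]

lemma prodBox_box_b (u v w : ℤ) : (prodBox (box2 u v) (box1 w)).b = sides3 u v w := rfl

lemma boxT_toSet (u v w : ℤ) (τ : Fin 3 → ℝ) :
    ((prodBox (box2 u v) (box1 w)).translate τ).toSet =
      Set.univ.pi fun j => Icc (τ j) (τ j + sides3 u v w j) := by
  simp only [BoxInterval.toSet, BoxInterval.translate]
  refine congrArg Set.univ.pi (funext fun j => ?_)
  rw [congrFun (prodBox_box_a u v w) j, congrFun (prodBox_box_b u v w) j, zero_add, add_comm]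

lemma boxT_mem {B1 : Set (BoxInterval 2)} {B2 : Set (BoxInterval 1)}
    (hB1 : ∀ R ∈ B1, ∀ v : Fin 2 → ℝ, R.translate v ∈ B1)
    (hB2 : ∀ I ∈ B2, ∀ v : Fin 1 → ℝ, I.translate v ∈ B2)
    {u v w : ℤ} (h1 : box2 u v ∈ B1) (h2 : box1 w ∈ B2) (τ : Fin 3 → ℝ) :
    (prodBox (box2 u v) (box1 w)).translate τ ∈ prodBasis B1 B2 := by
  rw [prodBox_translate]
  exact ⟨_, hB1 _ h1 _, _, hB2 _ h2 _, rfl⟩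

lemma vol_toSet {n : ℕ} (R : BoxInterval n) :
    volume R.toSet = ∏ j, ENNReal.ofReal (R.b j - R.a j) := by
  rw [BoxInterval.toSet, volume_pi_pi]
  simp [Real.volume_Icc]

lemma le_maxOp {B : Set (BoxInterval 3)} {E : Set (Fin 3 → ℝ)} (hE : MeasurableSet E)
    {R : BoxInterval 3} (hR : R ∈ B) {x : Fin 3 → ℝ} (hx : x ∈ R.toSet) :
    volume (E ∩ R.toSet) / volume R.toSet ≤ maxOp B (E.indicator fun _ => (1:ℝ)) x := by
  have hint : (∫⁻ y in R.toSet, ENNReal.ofReal |E.indicator (fun _ => (1:ℝ)) y| ∂volume)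
      = volume (E ∩ R.toSet) := by
    have hpt : ∀ y, ENNReal.ofReal |E.indicator (fun _ => (1:ℝ)) y| =
        E.indicator (fun _ => (1:ℝ≥0∞)) y := by
      intro y; by_cases hy : y ∈ E <;> simp [hy]
    calc (∫⁻ y in R.toSet, ENNReal.ofReal |E.indicator (fun _ => (1:ℝ)) y| ∂volume)
        = ∫⁻ y in R.toSet, E.indicator (fun _ => (1:ℝ≥0∞)) y ∂volume :=
          lintegral_congr fun y => hpt y
      _ = volume (E ∩ R.toSet) := by
          rw [lintegral_indicator hE, setLIntegral_one, Measure.restrict_apply hE]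
  rw [← hint]
  exact le_iSup_of_le R (le_iSup_of_le hR (le_iSup_of_le hx (le_refl _)))

end RareAux


namespace RareAux

lemma is_extract {B1 : Set (BoxInterval 2)} (his : ISProperty B1) (k : ℕ) :
    ∃ p q : Fin (k+1) → ℤ, StrictMono p ∧ StrictAnti q ∧
      ∀ i j : Fin (k+1), i ≤ j → box2 (p i) (q j) ∈ B1 := by
  obtain ⟨R, hmem, ha, hb, hinc, hint⟩ := his k
  choose pq hpq using hb
  set p0 : Fin (k+1) → ℤ := fun i => pq i 0 with hp0
  set q0 : Fin (k+1) → ℤ := fun i => pq i 1 with hq0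
  have hRset : ∀ i, (R i).toSet = Set.univ.pi fun l => Icc 0 ((2:ℝ)^(pq i l)) := by
    intro i
    rw [BoxInterval.toSet]
    refine congrArg Set.univ.pi (funext fun l => ?_)
    rw [congrFun (ha i) l, hpq i l]
  have hkey : ∀ i j, i ≠ j → ¬(p0 i ≤ p0 j ∧ q0 i ≤ q0 j) := by
    rintro i j hne ⟨h1, h2⟩
    apply hinc i j hne 0
    have htr : (R i).translate 0 = R i := by
      apply box_ext <;> funext l <;> simp [BoxInterval.translate]
    rw [htr, hRset i, hRset j]
    intro x hx
    rw [Set.mem_univ_pi] at hx ⊢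
    intro l
    refine Icc_subset_Icc le_rfl ?_ (hx l)
    fin_cases l
    · exact zpow_le_zpow_right₀ one_le_two h1
    · exact zpow_le_zpow_right₀ one_le_two h2
  have hp0inj : Function.Injective p0 := by
    intro i j hij
    by_contra hne
    rcases le_total (q0 i) (q0 j) with h | h
    · exact hkey i j hne ⟨le_of_eq hij, h⟩
    · exact hkey j i (Ne.symm hne) ⟨le_of_eq hij.symm, h⟩
  set σ := Tuple.sort p0 with hσ
  have hmono : Monotone (p0 ∘ σ) := Tuple.monotone_sort p0
  have hsm : StrictMono (p0 ∘ σ) :=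
    hmono.strictMono_of_injective (hp0inj.comp σ.injective)
  refine ⟨p0 ∘ σ, q0 ∘ σ, hsm, ?_, ?_⟩
  · intro i j hij
    have hne : σ i ≠ σ j := fun h => absurd (σ.injective h) (ne_of_lt hij)
    have h1 : p0 (σ i) ≤ p0 (σ j) := le_of_lt (hsm hij)
    have := hkey (σ i) (σ j) hne
    simp only [not_and] at this
    exact lt_of_not_ge (this h1)
  · intro i j hij
    obtain ⟨Q, hQ, hQset⟩ := hint (σ i) (σ j)
    have hpij : p0 (σ i) ≤ p0 (σ j) := hsm.monotone hij
    have hqij : q0 (σ j) ≤ q0 (σ i) := by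
      rcases eq_or_lt_of_le hij with h | h
      · rw [h]
      · have hne : σ i ≠ σ j := fun hc => absurd (σ.injective hc) (ne_of_lt h)
        have := hkey (σ i) (σ j) hne
        simp only [not_and] at this
        exact le_of_lt (lt_of_not_ge (this hpij))
    have : Q = box2 (p0 (σ i)) (q0 (σ j)) := by
      apply box_toSet_inj
      rw [hQset, hRset, hRset]
      rw [← Set.pi_inter_distrib]
      refine congrArg Set.univ.pi (funext fun l => ?_)
      rw [Set.Icc_inter_Icc]
      show Icc (0 ⊔ 0) _ = Icc 0 (![(2:ℝ)^(p0 (σ i)), (2:ℝ)^(q0 (σ j))] l)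
      fin_cases l
      · show Icc ((0:ℝ) ⊔ 0) ((2:ℝ) ^ p0 (σ i) ⊓ (2:ℝ) ^ p0 (σ j)) =
            Icc 0 ((2:ℝ) ^ p0 (σ i))
        rw [sup_idem, inf_eq_left.mpr (zpow_le_zpow_right₀ one_le_two hpij)]
      · show Icc ((0:ℝ) ⊔ 0) ((2:ℝ) ^ q0 (σ i) ⊓ (2:ℝ) ^ q0 (σ j)) =
            Icc 0 ((2:ℝ) ^ q0 (σ j))
        rw [sup_idem, inf_eq_right.mpr (zpow_le_zpow_right₀ one_le_two hqij)]
    show box2 (p0 (σ i)) (q0 (σ j)) ∈ B1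
    rw [← this]
    exact hQ

end RareAux


namespace RareAux

lemma b2_extract {B2 : Set (BoxInterval 1)}
    (htrans : ∀ I ∈ B2, ∀ v : Fin 1 → ℝ, I.translate v ∈ B2)
    (hinf : {l : ℝ | ∃ I ∈ B2, I.side 0 = l}.Infinite)
    (hdy : {l : ℝ | ∃ I ∈ B2, I.side 0 = l} ⊆ {x | ∃ s : ℤ, x = (2:ℝ) ^ s}) (k : ℕ) :
    ∃ s : Fin (k+1) → ℤ, StrictMono s ∧ ∀ l, box1 (s l) ∈ B2 := by
  set Z : Set ℤ := {z : ℤ | box1 z ∈ B2} with hZ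
  have hLZ : {l : ℝ | ∃ I ∈ B2, I.side 0 = l} ⊆ (fun z : ℤ => (2:ℝ)^z) '' Z := by
    rintro x ⟨I, hI, hside⟩
    obtain ⟨z, hz⟩ := hdy ⟨I, hI, hside⟩
    refine ⟨z, ?_, hz.symm⟩
    have : I.translate (fun _ => -I.a 0) = box1 z := by
      apply box_ext
      · funext l
        rw [Subsingleton.elim l 0]
        simp [BoxInterval.translate, box1]
      · funext l
        rw [Subsingleton.elim l 0]
        show I.b 0 + -I.a 0 = (2:ℝ)^z
        have : I.side 0 = (2:ℝ)^z := hside.trans hz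
        rw [BoxInterval.side] at this
        linarith
    rw [hZ, Set.mem_setOf_eq, ← this]
    exact htrans I hI _
  have hZinf : Z.Infinite := by
    by_contra hfin
    rw [Set.not_infinite] at hfin
    exact hinf (Set.Finite.subset (hfin.image _) hLZ)
  obtain ⟨t, htZ, hcard⟩ := hZinf.exists_subset_card_eq (k+1)
  refine ⟨fun i => (t.orderIsoOfFin hcard i : ℤ), ?_, ?_⟩
  · intro a b hab
    exact_mod_cast (t.orderIsoOfFin hcard).strictMono hab
  · intro l
    exact htZ (t.orderIsoOfFin hcard l).2

def extZ {k : ℕ} (f : Fin (k+1) → ℤ) : ℕ → ℤ :=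
  fun n => if h : n < k+1 then f ⟨n, h⟩ else f (Fin.last k) + ((n:ℤ) - k)

lemma extZ_eq {k : ℕ} (f : Fin (k+1) → ℤ) (i : Fin (k+1)) : extZ f i = f i := by
  rw [extZ, dif_pos i.isLt]

lemma extZ_succ {k : ℕ} {f : Fin (k+1) → ℤ} (hf : StrictMono f) (n : ℕ) :
    extZ f n < extZ f (n+1) := by
  rw [extZ, extZ]
  rcases lt_trichotomy (n+1) (k+1) with h | h | h
  · rw [dif_pos (by omega : n < k+1), dif_pos h]
    exact hf (Fin.mk_lt_mk.mpr (Nat.lt_succ_self n))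
  · have hn : n < k+1 := by omega
    rw [dif_pos hn, dif_neg (by omega)]
    have : (⟨n, hn⟩ : Fin (k+1)) = Fin.last k := by
      apply Fin.ext; simp; omega
    rw [this]
    have : ((n:ℤ) + 1 - k) = 1 := by omega
    omega
  · rw [dif_neg (by omega), dif_neg (by omega)]
    omega

end RareAux


namespace RareAux

lemma sides3_zero (u v w : ℤ) : sides3 u v w 0 = (2:ℝ)^u := by norm_num [sides3, Fin.snoc]
lemma sides3_one (u v w : ℤ) : sides3 u v w 1 = (2:ℝ)^v := by norm_num [sides3, Fin.snoc]; rfl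
lemma sides3_two (u v w : ℤ) : sides3 u v w 2 = (2:ℝ)^w := by norm_num [sides3, Fin.snoc]

/-- The `i`-th annulus `G_i \ G_{i-1}`. -/
def ann (p : ℕ → ℤ) (k i : ℕ) : Set ℝ :=
  if i = 0 then Gset p k 0 else Gset p k i \ Gset p k (i-1)

lemma ann_sub (p : ℕ → ℤ) (k i : ℕ) : ann p k i ⊆ Gset p k i := by
  rw [ann]
  split
  · subst ‹i = 0›; exact le_refl _
  · exact Set.diff_subset

lemma ann_meas (p : ℕ → ℤ) (k i : ℕ) : MeasurableSet (ann p k i) := by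
  rw [ann]
  split
  · exact Gset_meas k 0
  · exact (Gset_meas k i).diff (Gset_meas k (i-1))

variable {p : ℕ → ℤ}

lemma ann_disj (hp : ∀ n, p n < p (n+1)) {k i i' : ℕ} (h : i < i') (hi' : i' ≤ k) :
    Disjoint (ann p k i) (ann p k i') := by
  have h0 : i' ≠ 0 := by omega
  have hsub : ann p k i ⊆ Gset p k (i'-1) :=
    (ann_sub p k i).trans (Gset_mono hp (by omega) (by omega))
  rw [Set.disjoint_left]
  intro x hx hx'
  rw [ann, if_neg h0] at hx'
  exact hx'.2 (hsub hx)

lemma ann_vol_ge (hp : ∀ n, p n < p (n+1)) {k i : ℕ} (h : i ≤ k) :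
    ENNReal.ofReal ((2:ℝ)^(p k - k + i - 1)) ≤ volume (ann p k i) := by
  rw [ann]
  split
  · subst ‹i = 0›
    rw [Gset_vol hp (Nat.zero_le k)]
    apply ENNReal.ofReal_le_ofReal
    apply zpow_le_zpow_right₀ one_le_two
    omega
  · have h1 : 1 ≤ i := by omega
    have hsub : Gset p k (i-1) ⊆ Gset p k i := Gset_mono hp (by omega) h
    rw [measure_diff hsub (Gset_meas k (i-1)).nullMeasurableSet
        (by rw [Gset_vol hp (by omega)]; exact ENNReal.ofReal_ne_top),
      Gset_vol hp h, Gset_vol hp (by omega : i - 1 ≤ k)]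
    have hcast : ((i - 1 : ℕ) : ℤ) = (i : ℤ) - 1 := by omega
    rw [hcast]
    have hsplit : (2:ℝ)^(p k - k + i) = 2^(p k - k + i - 1) + 2^(p k - k + (i - 1)) := by
      rw [show p k - k + (i:ℤ) = (p k - k + i - 1) + 1 by ring,
        zpow_add₀ (by norm_num : (2:ℝ) ≠ 0), zpow_one,
        show p k - k + ((i:ℤ) - 1) = p k - k + i - 1 by ring]
      ring
    rw [← ENNReal.ofReal_sub _ (by positivity), hsplit]
    apply ENNReal.ofReal_le_ofReal
    ring_nf
    exact le_refl _

lemma pi3_disjoint {S T : Fin 3 → Set ℝ} (j0 : Fin 3) (h : Disjoint (S j0) (T j0)) :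
    Disjoint (Set.univ.pi S) (Set.univ.pi T) := by
  rw [Set.disjoint_left]
  intro x hxS hxT
  rw [Set.mem_univ_pi] at hxS hxT
  exact Set.disjoint_left.mp h (hxS j0) (hxT j0)

end RareAux


namespace RareAux

lemma vol_Icc_add (τ c : ℝ) : volume (Icc τ (τ + c)) = ENNReal.ofReal c := by
  rw [Real.volume_Icc, add_sub_cancel_left]

lemma core {B1 : Set (BoxInterval 2)} (hB1 : IsRareBasis B1) (his : ISProperty B1)
    {B2 : Set (BoxInterval 1)}
    (hB2trans : ∀ I ∈ B2, ∀ v : Fin 1 → ℝ, I.translate v ∈ B2)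
    (hB2inf : {l : ℝ | ∃ I ∈ B2, I.side 0 = l}.Infinite)
    (hB2dyadic : {l : ℝ | ∃ I ∈ B2, I.side 0 = l} ⊆ {x | ∃ s : ℤ, x = (2:ℝ) ^ s})
    (k : ℕ) :
    ∃ E : Set (Fin 3 → ℝ), Bornology.IsBounded E ∧ MeasurableSet E ∧
      0 < volume E ∧ volume E ≠ ⊤ ∧
      (((k/2+1)^2 : ℕ) : ℝ≥0∞) * ENNReal.ofReal ((2:ℝ)^((k:ℤ)-2)) * volume E ≤
        volume {x | ENNReal.ofReal ((2:ℝ)^(-(k:ℤ))) ≤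
          maxOp (prodBasis B1 B2) (E.indicator fun _ => (1:ℝ)) x} := by
  classical
  obtain ⟨p, q, hpm, hqa, hgrid⟩ := is_extract his k
  obtain ⟨sf, hsm, hsmem⟩ := b2_extract hB2trans hB2inf hB2dyadic k
  set r : Fin (k+1) → ℤ := fun j => q (Fin.rev j) with hrdef
  have hrm : StrictMono r := fun i j hij => hqa (Fin.rev_lt_rev.mpr hij)
  set P : ℕ → ℤ := extZ p with hPdef
  set Rr : ℕ → ℤ := extZ r with hRdef
  set Sf : ℕ → ℤ := extZ sf with hSdef
  have hP : ∀ n, P n < P (n+1) := extZ_succ hpm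
  have hR : ∀ n, Rr n < Rr (n+1) := extZ_succ hrm
  have hS : ∀ n, Sf n < Sf (n+1) := extZ_succ hsm
  set A1 : Set ℝ := Aset P k with hA1
  set A2 : Set ℝ := Aset Rr k with hA2
  set A3 : Set ℝ := Aset Sf k with hA3
  set E : Set (Fin 3 → ℝ) := Set.univ.pi ![A1, A2, A3] with hE
  have hEm : MeasurableSet E := by
    apply MeasurableSet.univ_pi
    intro j
    fin_cases j
    · exact Aset_meas k
    · exact Aset_meas k
    · exact Aset_meas k
  have hEb : Bornology.IsBounded E := by
    apply Bornology.IsBounded.pi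
    intro j
    fin_cases j
    · exact (Metric.isBounded_Icc _ _).subset (Aset_sub hP k)
    · exact (Metric.isBounded_Icc _ _).subset (Aset_sub hR k)
    · exact (Metric.isBounded_Icc _ _).subset (Aset_sub hS k)
  have hvolE : volume E = ENNReal.ofReal ((2:ℝ)^(P k + Rr k + Sf k - 3*k)) := by
    rw [hE, volume_pi_pi, Fin.prod_univ_three]
    show volume A1 * volume A2 * volume A3 = _
    rw [hA1, hA2, hA3, Aset_vol hP, Aset_vol hR, Aset_vol hS,
      ← ENNReal.ofReal_mul (by positivity), ← ENNReal.ofReal_mul (by positivity),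
      ← zpow_add₀ (by norm_num : (2:ℝ) ≠ 0), ← zpow_add₀ (by norm_num : (2:ℝ) ≠ 0)]
    congr 1
    ring
  refine ⟨E, hEb, hEm, ?_, ?_, ?_⟩
  · rw [hvolE]
    exact ENNReal.ofReal_pos.mpr (by positivity)
  · rw [hvolE]
    exact ENNReal.ofReal_ne_top
  set MS : Set (Fin 3 → ℝ) :=
    {x | ENNReal.ofReal ((2:ℝ)^(-(k:ℤ))) ≤
      maxOp (prodBasis B1 B2) (E.indicator fun _ => (1:ℝ)) x} with hMS
  set pc : ℕ × ℕ → Set (Fin 3 → ℝ) := fun ij =>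
    Set.univ.pi ![ann P k ij.1, ann Rr k ij.2, Gset Sf k (k - ij.1 - ij.2)] with hpcdef
  set sfin : Finset (ℕ × ℕ) := Finset.range (k/2+1) ×ˢ Finset.range (k/2+1) with hsfin
  have hbounds : ∀ ij ∈ sfin, ij.1 ≤ k ∧ ij.2 ≤ k ∧ ij.1 + ij.2 ≤ k := by
    intro ij hij
    rw [hsfin, Finset.mem_product, Finset.mem_range, Finset.mem_range] at hij
    omega
  have hpcmeas : ∀ ij : ℕ × ℕ, MeasurableSet (pc ij) := by
    intro ij
    apply MeasurableSet.univ_pi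
    intro j
    fin_cases j
    · exact ann_meas P k ij.1
    · exact ann_meas Rr k ij.2
    · exact Gset_meas k _
  have hdisj : (↑sfin : Set (ℕ × ℕ)).PairwiseDisjoint pc := by
    intro x hx y hy hxy
    have hxb := hbounds x (by exact_mod_cast hx)
    have hyb := hbounds y (by exact_mod_cast hy)
    rcases Prod.ext_iff.not.mp hxy |> not_and_or.mp with h1 | h2
    · rcases Ne.lt_or_gt h1 with hlt | hlt
      · refine pi3_disjoint 0 ?_
        show Disjoint (ann P k x.1) (ann P k y.1)
        exact ann_disj hP hlt hyb.1
      · refine Disjoint.symm (pi3_disjoint 0 ?_)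
        show Disjoint (ann P k y.1) (ann P k x.1)
        exact ann_disj hP hlt hxb.1
    · rcases Ne.lt_or_gt h2 with hlt | hlt
      · refine pi3_disjoint 1 ?_
        show Disjoint (ann Rr k x.2) (ann Rr k y.2)
        exact ann_disj hR hlt hyb.2.1
      · refine Disjoint.symm (pi3_disjoint 1 ?_)
        show Disjoint (ann Rr k y.2) (ann Rr k x.2)
        exact ann_disj hR hlt hxb.2.1
  have hpcvol : ∀ ij ∈ sfin,
      ENNReal.ofReal ((2:ℝ)^(P k + Rr k + Sf k - 2*k - 2)) ≤ volume (pc ij) := by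
    intro ij hij
    obtain ⟨hi, hj, hij2⟩ := hbounds ij hij
    have hvol : volume (pc ij) = volume (ann P k ij.1) * volume (ann Rr k ij.2) *
        volume (Gset Sf k (k - ij.1 - ij.2)) := by
      rw [hpcdef, volume_pi_pi, Fin.prod_univ_three]
      rfl
    rw [hvol, Gset_vol hS (by omega)]
    have hcast : ((k - ij.1 - ij.2 : ℕ) : ℤ) = (k:ℤ) - ij.1 - ij.2 := by omega
    have hsplit : ENNReal.ofReal ((2:ℝ)^(P k + Rr k + Sf k - 2*k - 2)) =
        ENNReal.ofReal ((2:ℝ)^(P k - k + ij.1 - 1)) *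
        ENNReal.ofReal ((2:ℝ)^(Rr k - k + ij.2 - 1)) *
        ENNReal.ofReal ((2:ℝ)^(Sf k - k + ((k - ij.1 - ij.2 : ℕ) : ℤ))) := by
      rw [← ENNReal.ofReal_mul (by positivity), ← ENNReal.ofReal_mul (by positivity),
        ← zpow_add₀ (by norm_num : (2:ℝ) ≠ 0), ← zpow_add₀ (by norm_num : (2:ℝ) ≠ 0), hcast]
      congr 1
      ring
    rw [hsplit]
    exact mul_le_mul' (mul_le_mul' (ann_vol_ge hP hi) (ann_vol_ge hR hj)) (le_refl _)
  have hpcsub : ∀ ij ∈ sfin, pc ij ⊆ MS := by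
    intro ij hij x hx
    obtain ⟨hi, hj, hij2⟩ := hbounds ij hij
    have hx0 : x 0 ∈ Gset P k ij.1 := ann_sub _ _ _ (hx 0 (Set.mem_univ _))
    have hx1 : x 1 ∈ Gset Rr k ij.2 := ann_sub _ _ _ (hx 1 (Set.mem_univ _))
    have hx2 : x 2 ∈ Gset Sf k (k - ij.1 - ij.2) := hx 2 (Set.mem_univ _)
    obtain ⟨τ1, hmem1, hvol1⟩ := Gset_window hP hi (x 0) hx0
    obtain ⟨τ2, hmem2, hvol2⟩ := Gset_window hR hj (x 1) hx1
    obtain ⟨τ3, hmem3, hvol3⟩ := Gset_window hS (by omega : k - ij.1 - ij.2 ≤ k) (x 2) hx2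
    set u : ℤ := P ij.1 with hu
    set v : ℤ := Rr ij.2 with hv
    set w : ℤ := Sf (k - ij.1 - ij.2) with hw
    set τv : Fin 3 → ℝ := ![τ1, τ2, τ3] with hτv
    set BB : BoxInterval 3 := (prodBox (box2 u v) (box1 w)).translate τv with hBB
    have h1mem : box2 u v ∈ B1 := by
      have hiu : u = p ⟨ij.1, by omega⟩ := extZ_eq p ⟨ij.1, by omega⟩
      have hjv : v = q (Fin.rev ⟨ij.2, by omega⟩) := extZ_eq r ⟨ij.2, by omega⟩
      rw [hiu, hjv]
      apply hgrid
      rw [Fin.le_def, Fin.val_rev]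
      simp only
      omega
    have h2mem : box1 w ∈ B2 := by
      have : w = sf ⟨k - ij.1 - ij.2, by omega⟩ := extZ_eq sf ⟨k - ij.1 - ij.2, by omega⟩
      rw [this]
      exact hsmem _
    have hBBmem : BB ∈ prodBasis B1 B2 := boxT_mem hB1.2 hB2trans h1mem h2mem τv
    have hxBB : x ∈ BB.toSet := by
      rw [hBB, boxT_toSet, Set.mem_univ_pi]
      intro l
      fin_cases l
      · show x 0 ∈ Icc τ1 (τ1 + sides3 u v w 0)
        rw [sides3_zero]
        exact hmem1
      · show x 1 ∈ Icc τ2 (τ2 + sides3 u v w 1)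
        rw [sides3_one]
        exact hmem2
      · show x 2 ∈ Icc τ3 (τ3 + sides3 u v w 2)
        rw [sides3_two]
        exact hmem3
    have hEBB : volume (E ∩ BB.toSet) =
        ENNReal.ofReal ((2:ℝ)^(u + v + w - k)) := by
      rw [hBB, boxT_toSet, hE, ← Set.pi_inter_distrib, volume_pi_pi, Fin.prod_univ_three]
      have e0 : volume ((![A1, A2, A3] 0) ∩ Icc (τv 0) (τv 0 + sides3 u v w 0)) =
          ENNReal.ofReal ((2:ℝ)^(u - ij.1)) := by
        show volume (A1 ∩ Icc τ1 (τ1 + sides3 u v w 0)) = _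
        rw [sides3_zero]
        exact hvol1
      have e1 : volume ((![A1, A2, A3] 1) ∩ Icc (τv 1) (τv 1 + sides3 u v w 1)) =
          ENNReal.ofReal ((2:ℝ)^(v - ij.2)) := by
        show volume (A2 ∩ Icc τ2 (τ2 + sides3 u v w 1)) = _
        rw [sides3_one]
        exact hvol2
      have e2 : volume ((![A1, A2, A3] 2) ∩ Icc (τv 2) (τv 2 + sides3 u v w 2)) =
          ENNReal.ofReal ((2:ℝ)^(w - ((k - ij.1 - ij.2 : ℕ) : ℤ))) := by
        show volume (A3 ∩ Icc τ3 (τ3 + sides3 u v w 2)) = _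
        rw [sides3_two]
        exact hvol3
      rw [e0, e1, e2, ← ENNReal.ofReal_mul (by positivity),
        ← ENNReal.ofReal_mul (by positivity),
        ← zpow_add₀ (by norm_num : (2:ℝ) ≠ 0), ← zpow_add₀ (by norm_num : (2:ℝ) ≠ 0)]
      congr 1
      have hcast : ((k - ij.1 - ij.2 : ℕ) : ℤ) = (k:ℤ) - ij.1 - ij.2 := by omega
      rw [hcast]
      ring
    have hvolBB : volume BB.toSet = ENNReal.ofReal ((2:ℝ)^(u + v + w)) := by
      rw [hBB, boxT_toSet, volume_pi_pi, Fin.prod_univ_three]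
      have e0 : volume (Icc (τv 0) (τv 0 + sides3 u v w 0)) = ENNReal.ofReal ((2:ℝ)^u) := by
        show volume (Icc τ1 (τ1 + sides3 u v w 0)) = _
        rw [sides3_zero, vol_Icc_add]
      have e1 : volume (Icc (τv 1) (τv 1 + sides3 u v w 1)) = ENNReal.ofReal ((2:ℝ)^v) := by
        show volume (Icc τ2 (τ2 + sides3 u v w 1)) = _
        rw [sides3_one, vol_Icc_add]
      have e2 : volume (Icc (τv 2) (τv 2 + sides3 u v w 2)) = ENNReal.ofReal ((2:ℝ)^w) := by
        show volume (Icc τ3 (τ3 + sides3 u v w 2)) = _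
        rw [sides3_two, vol_Icc_add]
      rw [e0, e1, e2, ← ENNReal.ofReal_mul (by positivity),
        ← ENNReal.ofReal_mul (by positivity),
        ← zpow_add₀ (by norm_num : (2:ℝ) ≠ 0), ← zpow_add₀ (by norm_num : (2:ℝ) ≠ 0)]
    show ENNReal.ofReal ((2:ℝ)^(-(k:ℤ))) ≤
      maxOp (prodBasis B1 B2) (E.indicator fun _ => (1:ℝ)) x
    refine le_trans (le_of_eq ?_) (le_maxOp hEm hBBmem hxBB)
    rw [hEBB, hvolBB, ← ENNReal.ofReal_div_of_pos (by positivity),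
      ← zpow_sub₀ (by norm_num : (2:ℝ) ≠ 0)]
    congr 1
    ring
  have hcard : sfin.card = (k/2+1)^2 := by
    rw [hsfin, Finset.card_product, Finset.card_range, sq]
  calc (((k/2+1)^2 : ℕ) : ℝ≥0∞) * ENNReal.ofReal ((2:ℝ)^((k:ℤ)-2)) * volume E
      = (sfin.card : ℝ≥0∞) * ENNReal.ofReal ((2:ℝ)^(P k + Rr k + Sf k - 2*k - 2)) := by
        rw [hcard, hvolE, mul_assoc, ← ENNReal.ofReal_mul (by positivity),
          ← zpow_add₀ (by norm_num : (2:ℝ) ≠ 0)]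
        congr 2
        ring
    _ = ∑ _ij ∈ sfin, ENNReal.ofReal ((2:ℝ)^(P k + Rr k + Sf k - 2*k - 2)) := by
        rw [Finset.sum_const, nsmul_eq_mul]
    _ ≤ ∑ ij ∈ sfin, volume (pc ij) := Finset.sum_le_sum hpcvol
    _ = volume (⋃ ij ∈ sfin, pc ij) :=
        (measure_biUnion_finset hdisj (fun ij _ => hpcmeas ij)).symm
    _ ≤ volume MS := measure_mono (Set.iUnion₂_subset hpcsub)

end RareAux

/-- Application VII (estimate part): sharp weak type `L(1+log⁺L)²` lower bound for the
product basis `B₁ × B₂` where `B₁` has the (is)-property. -/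
theorem statement17 (B1 : Set (BoxInterval 2)) (hB1 : IsRareBasis B1)
    (his : ISProperty B1)
    (B2 : Set (BoxInterval 1))
    (hB2trans : ∀ I ∈ B2, ∀ v : Fin 1 → ℝ, I.translate v ∈ B2)
    (hB2inf : {l : ℝ | ∃ I ∈ B2, I.side 0 = l}.Infinite)
    (hB2dyadic : {l : ℝ | ∃ I ∈ B2, I.side 0 = l} ⊆ {x | ∃ s : ℤ, x = (2:ℝ) ^ s}) :
    ∃ c : ℝ, 0 < c ∧ ∀ α : ℝ, 0 < α → α < 1 →
      ∃ E : Set (Fin 3 → ℝ), Bornology.IsBounded E ∧ MeasurableSet E ∧ 0 < volume E ∧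
        ENNReal.ofReal (c * (1 / α) * (1 + Real.logb 2 (1 / α)) ^ 2) * volume E ≤
          volume {x | ENNReal.ofReal α <
            maxOp (prodBasis B1 B2) (E.indicator fun _ => (1:ℝ)) x} := by
  classical
  refine ⟨(2:ℝ)^(-7 : ℤ), by positivity, ?_⟩
  intro α hα0 hα1
  have hα1' : 1 < 1/α := by rw [lt_div_iff₀ hα0]; linarith
  set L : ℝ := Real.logb 2 (1/α) with hLdef
  have hL0 : 0 < L := Real.logb_pos one_lt_two hα1'
  have hceil1 : 1 ≤ ⌈L⌉ := Int.ceil_pos.mpr hL0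
  set k : ℕ := (⌈L⌉ - 1).toNat with hkdef
  have hkz : (k:ℤ) = ⌈L⌉ - 1 := Int.toNat_of_nonneg (by omega)
  have h2L : (2:ℝ) ^ L = 1/α := Real.rpow_logb (by norm_num) (by norm_num) (by positivity)
  have hαk : α < (2:ℝ)^(-(k:ℤ)) := by
    have hconv : (2:ℝ)^(-(k:ℤ)) = (2:ℝ) ^ ((-(k:ℤ) : ℤ) : ℝ) :=
      (Real.rpow_intCast 2 (-(k:ℤ))).symm
    rw [hconv]
    have hlt : -L < ((-(k:ℤ) : ℤ) : ℝ) := by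
      have hcl : (⌈L⌉ : ℝ) < L + 1 := Int.ceil_lt_add_one L
      have : ((-(k:ℤ) : ℤ) : ℝ) = 1 - (⌈L⌉ : ℝ) := by push_cast [hkz]; ring
      linarith
    calc α = (2:ℝ) ^ (-L) := by
          rw [Real.rpow_neg (by norm_num), h2L, one_div, inv_inv]
      _ < (2:ℝ) ^ ((-(k:ℤ) : ℤ) : ℝ) :=
          (Real.rpow_lt_rpow_left_iff (by norm_num : (1:ℝ) < 2)).mpr hlt
  have h1α : 1/α ≤ (2:ℝ)^((k:ℤ)+1) := by
    rw [show (k:ℤ)+1 = ⌈L⌉ by omega, ← Real.rpow_intCast, ← h2L]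
    exact (Real.rpow_le_rpow_left_iff (by norm_num : (1:ℝ) < 2)).mpr (Int.le_ceil L)
  have hLk : 1 + L ≤ (k:ℝ) + 2 := by
    have h1 := Int.le_ceil L
    have hk' : ((k:ℝ)) = (⌈L⌉:ℝ) - 1 := by exact_mod_cast hkz
    have h2 : L ≤ (⌈L⌉:ℝ) := by exact_mod_cast h1
    linarith
  obtain ⟨E, hEb, hEm, hEpos, hEfin, hcore⟩ :=
    RareAux.core hB1 his hB2trans hB2inf hB2dyadic k
  refine ⟨E, hEb, hEm, hEpos, ?_⟩
  have hsub : {x | ENNReal.ofReal ((2:ℝ)^(-(k:ℤ))) ≤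
        maxOp (prodBasis B1 B2) (E.indicator fun _ => (1:ℝ)) x} ⊆
      {x | ENNReal.ofReal α <
        maxOp (prodBasis B1 B2) (E.indicator fun _ => (1:ℝ)) x} := by
    intro x hx
    exact lt_of_lt_of_le ((ENNReal.ofReal_lt_ofReal_iff (by positivity)).mpr hαk) hx
  refine le_trans ?_ (le_trans hcore (measure_mono hsub))
  refine mul_le_mul_left ?_ (volume E)
  rw [← ENNReal.ofReal_natCast ((k/2+1)^2), ← ENNReal.ofReal_mul (by positivity)]
  apply ENNReal.ofReal_le_ofReal
  have hX : (0:ℝ) < 2^((k:ℤ)-2) := by positivity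
  have h8X : (2:ℝ)^((k:ℤ)+1) = 8 * 2^((k:ℤ)-2) := by
    rw [show (k:ℤ)+1 = ((k:ℤ)-2) + 3 by ring, zpow_add₀ (by norm_num : (2:ℝ) ≠ 0)]
    norm_num
    ring
  have hY : (k:ℝ) + 2 ≤ 4 * (((k/2+1 : ℕ)):ℝ) := by
    have h1 : k ≤ 2*(k/2) + 1 := by omega
    have h2 : (k:ℝ) ≤ 2*((k/2 : ℕ):ℝ) + 1 := by exact_mod_cast h1
    push_cast
    linarith
  have hM : (0:ℝ) ≤ 1 + L := by linarith
  have hM2 : (1+L)^2 ≤ (4*((k/2+1:ℕ):ℝ))^2 := pow_le_pow_left₀ hM (by linarith) 2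
  have hc7 : (2:ℝ)^(-7:ℤ) = 1/128 := by norm_num
  calc (2:ℝ)^(-7:ℤ) * (1/α) * (1+L)^2
      ≤ (2:ℝ)^(-7:ℤ) * (2^((k:ℤ)+1)) * (4*((k/2+1:ℕ):ℝ))^2 := by
        apply mul_le_mul (mul_le_mul le_rfl h1α (by positivity) (by positivity)) hM2
          (by positivity) (by positivity)
    _ = ((k/2+1:ℕ):ℝ)^2 * 2^((k:ℤ)-2) := by rw [hc7, h8X]; ring
    _ = (((k/2+1)^2 : ℕ):ℝ) * 2^((k:ℤ)-2) := by push_cast; ring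


end
end

section
/- Let B₁ be a rare basis in ℝⁿ with the following property: for every k ∈ ℕ there exist increasing integer sequences (s_{1,m})_{m=0}^k,…,(s_{n,m})_{m=0}^k such that for every n-tuple of integers (m₁,…,mₙ) with k ≥ m₁ ≥ m₂ ≥ ⋯ ≥ mₙ ≥ 0 the interval [0,2^{s_{1,m₁}}]×[0,2^{s_{2,m₂}}]×⋯×[0,2^{s_{n,mₙ}}] belongs to B₁. Let B₂ be a translation-invariant collection of one-dimensional intervals whose lengths form an infinite set of dyadic numbers, and set B = B₁×B₂ = {J₁×J₂ : J₁ ∈ B₁, J₂ ∈ B₂} in ℝ^{n+1}. Then there is a constant c > 0 such that for every α ∈ (0,1) there exists a bounded measurable set E ⊂ ℝ^{n+1} of positive Lebesgue measure with |{x ∈ ℝ^{n+1} : M_B(χ_E)(x) > α}| ≥ c · (1/α) · (1 + log(1/α))ⁿ · |E|. -/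
open MeasureTheory Set
open scoped ENNReal

noncomputable section

namespace ST19


/-- kept set: floor of `x / 2^v` is even; half-length `2^v`, period `2^(v+1)`. -/
def keepH (v : ℤ) : Set ℝ := {x | Even ⌊x / (2:ℝ) ^ v⌋}

lemma measurableSet_keepH (v : ℤ) : MeasurableSet (keepH v) := by
  have : keepH v = (fun x : ℝ => ⌊x / (2:ℝ) ^ v⌋) ⁻¹' {k | Even k} := rfl
  rw [this]
  exact (Int.measurable_floor.comp (measurable_id.div_const _)) .of_discrete

lemma two_zpow_pos (v : ℤ) : (0:ℝ) < 2 ^ v := zpow_pos two_pos v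

/-- floor of `x / 2^u` equals `k` when `x ∈ [k·2^u, k·2^u + 2^u)`. -/
lemma floor_div_eq {u : ℤ} {k : ℤ} {x : ℝ} (h1 : (k:ℝ) * 2 ^ u ≤ x)
    (h2 : x < (k:ℝ) * 2 ^ u + 2 ^ u) : ⌊x / (2:ℝ) ^ u⌋ = k := by
  have hp := two_zpow_pos u
  rw [Int.floor_eq_iff]
  constructor
  · rw [le_div_iff₀ hp]; exact h1
  · rw [div_lt_iff₀ hp]; push_cast; nlinarith

lemma two_zpow_split (u : ℤ) : (2:ℝ) ^ u = 2 ^ (u - 1) + 2 ^ (u - 1) := by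
  have h : (2:ℝ) ^ (u - 1) * 2 = 2 ^ u := by
    rw [← zpow_add_one₀ (two_ne_zero : (2:ℝ) ≠ 0)]
    norm_num
  linarith

/-- dichotomy of the cell `[z·2^u, z·2^u + 2^u)` w.r.t. `keepH (u-1)`. -/
lemma cell_inter_keepH (u z : ℤ) :
    Ico ((z:ℝ) * 2 ^ u) ((z:ℝ) * 2 ^ u + 2 ^ u) ∩ keepH (u - 1)
      = Ico ((z:ℝ) * 2 ^ u) ((z:ℝ) * 2 ^ u + 2 ^ (u - 1)) := by
  have hp := two_zpow_pos (u - 1)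
  have hsplit := two_zpow_split u
  have hz : (z:ℝ) * 2 ^ u = ((2 * z : ℤ) : ℝ) * 2 ^ (u - 1) := by
    push_cast; rw [hsplit]; ring
  have e1 : ((2 * z + 1 : ℤ) : ℝ) * 2 ^ (u - 1) = (z:ℝ) * 2 ^ u + 2 ^ (u - 1) := by
    push_cast; rw [hsplit]; ring
  have e2 : ((2 * z + 1 : ℤ) : ℝ) * 2 ^ (u - 1) + 2 ^ (u - 1)
      = (z:ℝ) * 2 ^ u + 2 ^ u := by
    push_cast; rw [hsplit]; ring
  ext x
  simp only [mem_inter_iff, mem_Ico, keepH, mem_setOf_eq]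
  constructor
  · rintro ⟨⟨hxl, hxr⟩, heven⟩
    refine ⟨hxl, ?_⟩
    by_contra hc
    push_neg at hc
    have hfl : ⌊x / (2:ℝ) ^ (u - 1)⌋ = 2 * z + 1 := by
      apply floor_div_eq
      · rw [e1]; exact hc
      · rw [e2]; exact hxr
    rw [hfl] at heven
    exact (Int.even_add_one.mp heven) (even_two_mul z)
  · rintro ⟨hxl, hxr⟩
    have hfl : ⌊x / (2:ℝ) ^ (u - 1)⌋ = 2 * z := by
      apply floor_div_eq
      · rw [← hz]; exact hxl
      · rw [← hz]; exact hxr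
    refine ⟨⟨hxl, by linarith⟩, by rw [hfl]; exact even_two_mul z⟩

lemma cell_inter_keepH_compl (u z : ℤ) :
    Ico ((z:ℝ) * 2 ^ u) ((z:ℝ) * 2 ^ u + 2 ^ u) ∩ (keepH (u - 1))ᶜ
      = Ico ((z:ℝ) * 2 ^ u + 2 ^ (u - 1)) ((z:ℝ) * 2 ^ u + 2 ^ u) := by
  have hp := two_zpow_pos (u - 1)
  have hsplit := two_zpow_split u
  have h := cell_inter_keepH u z
  ext x
  constructor
  · rintro ⟨hcell, hns⟩
    have hx' : x ∉ Ico ((z:ℝ) * 2 ^ u) ((z:ℝ) * 2 ^ u + 2 ^ (u - 1)) := by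
      rw [← h]; rintro ⟨-, hk⟩; exact hns hk
    simp only [mem_Ico, not_and, not_lt] at hx' ⊢
    exact ⟨hx' hcell.1, hcell.2⟩
  · rintro ⟨hxl, hxr⟩
    have hcell : x ∈ Ico ((z:ℝ) * 2 ^ u) ((z:ℝ) * 2 ^ u + 2 ^ u) :=
      ⟨by linarith, hxr⟩
    refine ⟨hcell, fun hk => ?_⟩
    have hmem : x ∈ Ico ((z:ℝ) * 2 ^ u) ((z:ℝ) * 2 ^ u + 2 ^ (u - 1)) := by
      rw [← h]; exact ⟨hcell, hk⟩
    have := hmem.2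
    linarith

/-- `keepH v` is constant on cells of the coarser scale `2^u`, `u ≤ v`. -/
lemma keepH_const_on_cell {u v : ℤ} (huv : u ≤ v) (z : ℤ) {x y : ℝ}
    (hx : x ∈ Ico ((z:ℝ) * 2 ^ u) ((z:ℝ) * 2 ^ u + 2 ^ u))
    (hy : y ∈ Ico ((z:ℝ) * 2 ^ u) ((z:ℝ) * 2 ^ u + 2 ^ u)) :
    (y ∈ keepH v ↔ x ∈ keepH v) := by
  have hpu := two_zpow_pos u
  have hpv := two_zpow_pos v
  set K : ℤ := 2 ^ (v - u).toNat with hK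
  have hKpos : (0:ℤ) < K := pow_pos two_pos _
  have hKposR : (0:ℝ) < (K:ℝ) := by exact_mod_cast hKpos
  have hKv : (2:ℝ) ^ v = (K : ℝ) * 2 ^ u := by
    rw [hK]
    push_cast
    rw [← zpow_natCast (2:ℝ) (v - u).toNat, ← zpow_add₀ (two_ne_zero : (2:ℝ) ≠ 0)]
    congr 1
    omega
  set w : ℤ := ⌊x / (2:ℝ) ^ v⌋ with hw
  have hwx1 : (w:ℝ) * 2 ^ v ≤ x := (le_div_iff₀ hpv).mp (Int.floor_le _)
  have hwx2 : x < (w:ℝ) * 2 ^ v + 2 ^ v := by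
    have := Int.lt_floor_add_one (x / (2:ℝ) ^ v)
    rw [div_lt_iff₀ hpv] at this
    nlinarith
  obtain ⟨hx1, hx2⟩ := hx
  obtain ⟨hy1, hy2⟩ := hy
  have ew : (w:ℝ) * 2 ^ v = ((w:ℝ) * K) * 2 ^ u := by rw [hKv]; ring
  have ew2 : (w:ℝ) * 2 ^ v + 2 ^ v = ((w:ℝ) * K + K) * 2 ^ u := by rw [hKv]; ring
  -- w*K ≤ z < (w+1)*K  (integers)
  have h1 : w * K ≤ z := by
    have hlt : ((w:ℝ) * K) * 2 ^ u < ((z:ℝ) + 1) * 2 ^ u := by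
      rw [← ew]; nlinarith
    have := (mul_lt_mul_iff_of_pos_right hpu).mp hlt
    have : ((w * K : ℤ) : ℝ) < ((z + 1 : ℤ) : ℝ) := by push_cast; linarith
    exact_mod_cast Int.lt_add_one_iff.mp (by exact_mod_cast this)
  have h2 : z + 1 ≤ (w + 1) * K := by
    have hlt : (z:ℝ) * 2 ^ u < ((w:ℝ) + 1) * K * 2 ^ u := by
      have : ((w:ℝ) + 1) * K * 2 ^ u = (w:ℝ) * 2 ^ v + 2 ^ v := by rw [hKv]; ring
      rw [this]; linarith
    have := (mul_lt_mul_iff_of_pos_right hpu).mp hlt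
    have : ((z : ℤ) : ℝ) < (((w + 1) * K : ℤ) : ℝ) := by push_cast; linarith
    exact_mod_cast Int.add_one_le_iff.mpr (by exact_mod_cast this)
  have hcell_l : (w:ℝ) * 2 ^ v ≤ (z:ℝ) * 2 ^ u := by
    have : ((w * K : ℤ) : ℝ) * 2 ^ u ≤ (z:ℝ) * 2 ^ u :=
      mul_le_mul_of_nonneg_right (by exact_mod_cast h1) hpu.le
    push_cast at this
    rw [ew]; linarith
  have hcell_r : (z:ℝ) * 2 ^ u + 2 ^ u ≤ (w:ℝ) * 2 ^ v + 2 ^ v := by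
    have : ((z + 1 : ℤ) : ℝ) * 2 ^ u ≤ (((w + 1) * K : ℤ) : ℝ) * 2 ^ u :=
      mul_le_mul_of_nonneg_right (by exact_mod_cast h2) hpu.le
    push_cast at this
    rw [ew2]; nlinarith
  have hfy : ⌊y / (2:ℝ) ^ v⌋ = w := floor_div_eq (by linarith) (by linarith)
  simp only [keepH, mem_setOf_eq, hfy, ← hw]


/-- `2^v` as a multiple of the finer dyadic `2^u`. -/
lemma two_zpow_as_mul {u v : ℤ} (h : u ≤ v) :
    (2:ℝ) ^ v = ((2 ^ (v - u).toNat : ℕ) : ℝ) * 2 ^ u := by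
  push_cast
  rw [← zpow_natCast (2:ℝ) (v - u).toNat, ← zpow_add₀ (two_ne_zero : (2:ℝ) ≠ 0)]
  congr 1
  omega

def Kt (p : ℕ → ℤ) (ε : ℕ → Option Bool) (t : ℕ) : Set ℝ :=
  match ε t with
  | none => univ
  | some true => keepH (p t - 1)
  | some false => (keepH (p t - 1))ᶜ

lemma measurableSet_Kt (p : ℕ → ℤ) (ε : ℕ → Option Bool) (t : ℕ) :
    MeasurableSet (Kt p ε t) := by
  unfold Kt
  rcases ε t with - | b
  · exact MeasurableSet.univ
  · cases b
    · exact (measurableSet_keepH _).compl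
    · exact measurableSet_keepH _

def CSet (p : ℕ → ℤ) (ε : ℕ → Option Bool) (m : ℕ) : Set ℝ :=
  {x | ∀ t, 1 ≤ t → t ≤ m → x ∈ Kt p ε t}

lemma measurableSet_CSet (p : ℕ → ℤ) (ε : ℕ → Option Bool) (m : ℕ) :
    MeasurableSet (CSet p ε m) := by
  have : CSet p ε m = ⋂ t ∈ Finset.Icc 1 m, Kt p ε t := by
    ext x; simp [CSet, Finset.mem_Icc]
  rw [this]
  exact MeasurableSet.biInter (Finset.Icc 1 m).countable_toSet
    fun t _ => measurableSet_Kt p ε t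

def wt (ε : ℕ → Option Bool) (t : ℕ) : ℝ := if (ε t).isSome then 1/2 else 1

def Wt (ε : ℕ → Option Bool) (m : ℕ) : ℝ := ∏ t ∈ Finset.Icc 1 m, wt ε t

lemma wt_pos (ε : ℕ → Option Bool) (t : ℕ) : 0 < wt ε t := by
  unfold wt; split <;> norm_num

lemma Wt_pos (ε : ℕ → Option Bool) (m : ℕ) : 0 < Wt ε m :=
  Finset.prod_pos fun t _ => wt_pos ε t

lemma cells_of_cell {S : Set ℝ} {q : ℝ} {V : ℝ≥0∞} (hS : MeasurableSet S) (hq : 0 < q)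
    (hcell : ∀ z : ℤ, volume (S ∩ Ico ((z:ℝ) * q) ((z:ℝ) * q + q)) = V) :
    ∀ (z : ℤ) (G : ℕ),
      volume (S ∩ Ico ((z:ℝ) * q) ((z:ℝ) * q + (G:ℝ) * q)) = (G : ℝ≥0∞) * V := by
  intro z G
  induction G with
  | zero => simp
  | succ G ih =>
    have hGq : (0:ℝ) ≤ (G:ℝ) * q := by positivity
    have hsplit : Ico ((z:ℝ) * q) ((z:ℝ) * q + ((G:ℕ)+1:ℝ) * q)
        = Ico ((z:ℝ) * q) ((z:ℝ) * q + (G:ℝ) * q)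
          ∪ Ico ((z:ℝ) * q + (G:ℝ) * q) ((z:ℝ) * q + ((G:ℝ)+1) * q) := by
      rw [Ico_union_Ico_eq_Ico] <;> nlinarith
    have e1 : (z:ℝ) * q + (G:ℝ) * q = ((z + G : ℤ) : ℝ) * q := by push_cast; ring
    have e2 : (z:ℝ) * q + ((G:ℝ)+1) * q = ((z + G : ℤ) : ℝ) * q + q := by push_cast; ring
    have hdisj : Disjoint (S ∩ Ico ((z:ℝ) * q) ((z:ℝ) * q + (G:ℝ) * q))
        (S ∩ Ico ((z:ℝ) * q + (G:ℝ) * q) ((z:ℝ) * q + ((G:ℝ)+1) * q)) :=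
      (Set.Ico_disjoint_Ico_same).mono inter_subset_right inter_subset_right
    have hm2 : MeasurableSet (S ∩ Ico ((z:ℝ) * q + (G:ℝ) * q) ((z:ℝ) * q + ((G:ℝ)+1) * q)) :=
      hS.inter measurableSet_Ico
    calc volume (S ∩ Ico ((z:ℝ) * q) ((z:ℝ) * q + ((G+1:ℕ):ℝ) * q))
        = volume ((S ∩ Ico ((z:ℝ) * q) ((z:ℝ) * q + (G:ℝ) * q))
            ∪ (S ∩ Ico ((z:ℝ) * q + (G:ℝ) * q) ((z:ℝ) * q + ((G:ℝ)+1) * q))) := by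
          rw [← inter_union_distrib_left]
          congr 1
          push_cast at hsplit ⊢
          rw [← hsplit]
      _ = (G : ℝ≥0∞) * V + V := by
          rw [measure_union hdisj hm2, ih]
          congr 1
          rw [e1, e2]
          exact hcell _
      _ = ((G + 1 : ℕ) : ℝ≥0∞) * V := by push_cast; ring

theorem cset_cell (p : ℕ → ℤ) (T : ℕ) (hp : ∀ m, m < T → p m < p (m+1))
    (ε : ℕ → Option Bool) :
    ∀ m, m ≤ T → ∀ z : ℤ,
      volume (CSet p ε m ∩ Ico ((z:ℝ) * 2 ^ (p m)) ((z:ℝ) * 2 ^ (p m) + 2 ^ (p m)))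
        = ENNReal.ofReal (2 ^ (p m) * Wt ε m) := by
  intro m
  induction m with
  | zero =>
    intro _ z
    have hC : CSet p ε 0 = univ := by
      ext x; simp only [CSet, mem_setOf_eq, mem_univ, iff_true]
      intro t h1 h0; omega
    have hW : Wt ε 0 = 1 := by simp [Wt]
    rw [hC, hW, univ_inter, Real.volume_Ico]
    simp
  | succ m ih =>
    intro hm1 z
    have hmT : m ≤ T := by omega
    have hpm : p m < p (m+1) := hp m (by omega)
    set u : ℤ := p (m+1) with hu
    set q : ℝ := (2:ℝ) ^ (p m) with hqdef
    have hqpos : 0 < q := two_zpow_pos _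
    have ih' : ∀ w : ℤ,
        volume (CSet p ε m ∩ Ico ((w:ℝ) * q) ((w:ℝ) * q + q))
          = ENNReal.ofReal (q * Wt ε m) := fun w => ih hmT w
    have hCS : CSet p ε (m+1) = CSet p ε m ∩ Kt p ε (m+1) := by
      ext x
      simp only [CSet, mem_setOf_eq, mem_inter_iff]
      constructor
      · intro h
        exact ⟨fun t h1 h2 => h t h1 (by omega), h (m+1) (by omega) le_rfl⟩
      · rintro ⟨h1, h2⟩ t ht1 ht2
        rcases Nat.lt_or_ge t (m+1) with h | h
        · exact h1 t ht1 (by omega)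
        · have : t = m + 1 := by omega
          rw [this]; exact h2
    have hWsucc : Wt ε (m+1) = Wt ε m * wt ε (m+1) :=
      Finset.prod_Icc_succ_top (by omega) _
    have hWpos := Wt_pos ε m
    -- big dyadic multiples
    have hD1 : p m ≤ u - 1 := by omega
    set D : ℕ := (u - 1 - p m).toNat with hDdef
    have hDD : (u - p m).toNat = D + 1 := by omega
    have hbig : (2:ℝ) ^ u = ((2 ^ (D+1) : ℕ) : ℝ) * q := by
      rw [← hDD]; exact two_zpow_as_mul (by omega)
    have hhalf : (2:ℝ) ^ (u-1) = ((2 ^ D : ℕ) : ℝ) * q := by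
      rw [hDdef]; exact two_zpow_as_mul hD1
    have hzo : (2:ℝ) ^ (u-1) = 2 ^ u * (1/2) := by
      rw [zpow_sub₀ (two_ne_zero : (2:ℝ) ≠ 0)]
      rw [zpow_one]
      ring
    have hmeas := measurableSet_CSet p ε m
    have hval : ∀ G : ℕ, (G : ℝ≥0∞) * ENNReal.ofReal (q * Wt ε m)
        = ENNReal.ofReal ((G:ℝ) * q * Wt ε m) := by
      intro G
      rw [← ENNReal.ofReal_natCast G, ← ENNReal.ofReal_mul (by positivity)]
      ring_nf
    rcases hε : ε (m+1) with - | b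
    · -- no constraint at scale m+1
      have hK : Kt p ε (m+1) = univ := by simp [Kt, hε]
      have hw : wt ε (m+1) = 1 := by simp [wt, hε]
      have elen : (z:ℝ) * 2 ^ u + 2 ^ u
          = ((z * 2 ^ (D+1) : ℤ) : ℝ) * q + ((2 ^ (D+1) : ℕ) : ℝ) * q := by
        rw [hbig]; push_cast; ring
      have estart : (z:ℝ) * 2 ^ u = ((z * 2 ^ (D+1) : ℤ) : ℝ) * q := by
        rw [hbig]; push_cast; ring
      rw [hCS, hK, inter_univ, elen, estart,
        cells_of_cell hmeas hqpos ih' _ (2 ^ (D+1)), hval, hbig, hWsucc, hw]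
      ring_nf
    · -- constraint at scale m+1
      have hw : wt ε (m+1) = 1/2 := by simp [wt, hε]
      cases b
      · -- some false : upper half
        have hK : Kt p ε (m+1) = (keepH (u-1))ᶜ := by simp [Kt, hε, hu]
        have hIco : Ico ((z:ℝ) * 2 ^ u) ((z:ℝ) * 2 ^ u + 2 ^ u) ∩ Kt p ε (m+1)
            = Ico ((z:ℝ) * 2 ^ u + 2 ^ (u-1)) ((z:ℝ) * 2 ^ u + 2 ^ u) := by
          rw [hK]; exact cell_inter_keepH_compl u z
        have eend : (z:ℝ) * 2 ^ u + 2 ^ u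
            = ((z * 2 ^ (D+1) + 2 ^ D : ℤ) : ℝ) * q + ((2 ^ D : ℕ) : ℝ) * q := by
          rw [hbig]; push_cast; ring
        have estart : (z:ℝ) * 2 ^ u + 2 ^ (u-1)
            = ((z * 2 ^ (D+1) + 2 ^ D : ℤ) : ℝ) * q := by
          rw [hbig, hhalf]; push_cast; ring
        calc volume (CSet p ε (m+1) ∩ Ico ((z:ℝ) * 2 ^ u) ((z:ℝ) * 2 ^ u + 2 ^ u))
            = volume (CSet p ε m ∩ (Ico ((z:ℝ) * 2 ^ u) ((z:ℝ) * 2 ^ u + 2 ^ u)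
                ∩ Kt p ε (m+1))) := by
              rw [hCS]
              congr 1
              rw [inter_assoc, inter_comm (Kt p ε (m+1))]
          _ = ENNReal.ofReal (2 ^ u * Wt ε (m+1)) := by
              rw [hIco, eend, estart, cells_of_cell hmeas hqpos ih' _ (2 ^ D), hval,
                hWsucc, hw]
              rw [show ((2 ^ D : ℕ) : ℝ) * q = (2:ℝ) ^ (u-1) from hhalf.symm, hzo]
              ring_nf
      · -- some true : lower half
        have hK : Kt p ε (m+1) = keepH (u-1) := by simp [Kt, hε, hu]
        have hIco : Ico ((z:ℝ) * 2 ^ u) ((z:ℝ) * 2 ^ u + 2 ^ u) ∩ Kt p ε (m+1)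
            = Ico ((z:ℝ) * 2 ^ u) ((z:ℝ) * 2 ^ u + 2 ^ (u-1)) := by
          rw [hK]; exact cell_inter_keepH u z
        have eend : (z:ℝ) * 2 ^ u + 2 ^ (u-1)
            = ((z * 2 ^ (D+1) : ℤ) : ℝ) * q + ((2 ^ D : ℕ) : ℝ) * q := by
          rw [hbig, hhalf]; push_cast; ring
        have estart : (z:ℝ) * 2 ^ u = ((z * 2 ^ (D+1) : ℤ) : ℝ) * q := by
          rw [hbig]; push_cast; ring
        calc volume (CSet p ε (m+1) ∩ Ico ((z:ℝ) * 2 ^ u) ((z:ℝ) * 2 ^ u + 2 ^ u))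
            = volume (CSet p ε m ∩ (Ico ((z:ℝ) * 2 ^ u) ((z:ℝ) * 2 ^ u + 2 ^ u)
                ∩ Kt p ε (m+1))) := by
              rw [hCS]
              congr 1
              rw [inter_assoc, inter_comm (Kt p ε (m+1))]
          _ = ENNReal.ofReal (2 ^ u * Wt ε (m+1)) := by
              rw [hIco, eend, estart, cells_of_cell hmeas hqpos ih' _ (2 ^ D), hval,
                hWsucc, hw]
              rw [show ((2 ^ D : ℕ) : ℝ) * q = (2:ℝ) ^ (u-1) from hhalf.symm, hzo]
              ring_nf

/-! ### the Cantor set and the depth events -/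

def Xset (p : ℕ → ℤ) (T : ℕ) : Set ℝ :=
  CSet p (fun _ => some true) T ∩ Ico 0 ((2:ℝ) ^ (p T))

def Ueps (T m : ℕ) : ℕ → Option Bool := fun t =>
  if m + 1 ≤ t ∧ t ≤ T then some true
  else if t = m ∧ 1 ≤ m then some false else none

def Uset (p : ℕ → ℤ) (T m : ℕ) : Set ℝ :=
  CSet p (Ueps T m) T ∩ Ico 0 ((2:ℝ) ^ (p T))

lemma measurableSet_Xset (p : ℕ → ℤ) (T : ℕ) : MeasurableSet (Xset p T) :=
  (measurableSet_CSet _ _ _).inter measurableSet_Ico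

lemma measurableSet_Uset (p : ℕ → ℤ) (T m : ℕ) : MeasurableSet (Uset p T m) :=
  (measurableSet_CSet _ _ _).inter measurableSet_Ico

lemma Uset_subset (p : ℕ → ℤ) (T m : ℕ) : Uset p T m ⊆ Ico 0 ((2:ℝ) ^ (p T)) :=
  inter_subset_right

lemma Xset_subset (p : ℕ → ℤ) (T : ℕ) : Xset p T ⊆ Ico 0 ((2:ℝ) ^ (p T)) :=
  inter_subset_right

lemma Wt_allTrue (m : ℕ) : Wt (fun _ => some true) m = (1/2 : ℝ) ^ m := by
  unfold Wt
  rw [Finset.prod_congr rfl (fun t _ => show wt (fun _ => some true) t = (1/2:ℝ) by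
    simp [wt]), Finset.prod_const, Nat.card_Icc]
  norm_num

lemma mem_keepH_of_UsetEps {p : ℕ → ℤ} {T m : ℕ} {x : ℝ}
    (hx : x ∈ CSet p (Ueps T m) T) {t : ℕ} (h1 : m + 1 ≤ t) (h2 : t ≤ T) :
    x ∈ keepH (p t - 1) := by
  have := hx t (by omega) h2
  unfold Kt Ueps at this
  rw [if_pos ⟨h1, h2⟩] at this
  exact this

lemma Uset_disjoint (p : ℕ → ℤ) (T : ℕ) {m m' : ℕ} (hmm : m' < m) (hm : m ≤ T) :
    Disjoint (Uset p T m') (Uset p T m) := by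
  rw [Set.disjoint_left]
  rintro x ⟨hx1, -⟩ ⟨hx2, -⟩
  have hkeep : x ∈ keepH (p m - 1) := mem_keepH_of_UsetEps hx1 (by omega) hm
  have hnot := hx2 m (by omega) hm
  unfold Kt Ueps at hnot
  rw [if_neg (by omega), if_pos ⟨rfl, by omega⟩] at hnot
  exact hnot hkeep

lemma p_mono {p : ℕ → ℤ} {T : ℕ} (hp : ∀ m, m < T → p m < p (m+1)) :
    ∀ {a b : ℕ}, a ≤ b → b ≤ T → p a ≤ p b := by
  intro a b hab hbT
  induction b with
  | zero => simp_all
  | succ b ih =>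
    rcases Nat.lt_or_ge a (b+1) with h | h
    · have : p a ≤ p b := ih (by omega) (by omega)
      have := hp b (by omega)
      omega
    · have : a = b + 1 := by omega
      rw [this]

lemma p_strict {p : ℕ → ℤ} {T : ℕ} (hp : ∀ m, m < T → p m < p (m+1)) {a b : ℕ}
    (hab : a < b) (hbT : b ≤ T) : p a < p b := by
  have h1 : p a ≤ p (b-1) := p_mono hp (by omega) (by omega)
  have h2 : p (b-1) < p b := by
    have := hp (b-1) (by omega)
    have hb : b - 1 + 1 = b := by omega
    rwa [hb] at this
  omega

lemma volume_Xset (p : ℕ → ℤ) (T : ℕ) (hp : ∀ m, m < T → p m < p (m+1)) :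
    volume (Xset p T) = ENNReal.ofReal ((2:ℝ) ^ (p T) * (1/2) ^ T) := by
  have h := cset_cell p T hp (fun _ => some true) T le_rfl 0
  rw [Int.cast_zero, zero_mul, zero_add] at h
  unfold Xset
  rw [h, Wt_allTrue]

lemma volume_Uset_ge (p : ℕ → ℤ) (T : ℕ) (hp : ∀ m, m < T → p m < p (m+1))
    {m : ℕ} (hm : m ≤ T) :
    ENNReal.ofReal ((2:ℝ) ^ (p T) * (1/2) ^ (T + 1 - m)) ≤ volume (Uset p T m) := by
  have h := cset_cell p T hp (Ueps T m) T le_rfl 0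
  rw [Int.cast_zero, zero_mul, zero_add] at h
  unfold Uset
  rw [h]
  apply ENNReal.ofReal_le_ofReal
  apply mul_le_mul_of_nonneg_left _ (two_zpow_pos (p T)).le
  -- (1/2)^(T+1-m) ≤ Wt (Ueps T m) T
  have hW : Wt (Ueps T m) T ≥ ∏ t ∈ Finset.Icc 1 T, (if t < m then (1:ℝ) else 1/2) := by
    unfold Wt
    apply Finset.prod_le_prod
    · intro t _; split <;> norm_num
    · intro t ht
      rcases Nat.lt_or_ge t m with h' | h'
      · rw [if_pos h']
        have hnone : Ueps T m t = none := by
          unfold Ueps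
          rw [if_neg (by omega), if_neg (by omega)]
        unfold wt
        rw [hnone]
        norm_num
      · rw [if_neg (by omega)]
        unfold wt
        split <;> norm_num
  calc ((1:ℝ)/2) ^ (T + 1 - m) ≤ ∏ t ∈ Finset.Icc 1 T, (if t < m then (1:ℝ) else 1/2) := by
        rw [Finset.prod_ite, Finset.prod_const, Finset.prod_const, one_pow, one_mul]
        have hcard : (Finset.Icc 1 T).filter (fun t => ¬ t < m) = Finset.Icc (max 1 m) T := by
          ext t
          simp only [Finset.mem_filter, Finset.mem_Icc, not_lt, le_max_iff, max_le_iff]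
          omega
        rw [hcard]
        apply pow_le_pow_of_le_one (by norm_num) (by norm_num)
        rw [Nat.card_Icc]
        omega
    _ ≤ Wt (Ueps T m) T := hW

lemma Uset_avg_cell (p : ℕ → ℤ) (T : ℕ) (hp : ∀ m, m < T → p m < p (m+1))
    {m : ℕ} (hm : m ≤ T) {x : ℝ} (hx : x ∈ Uset p T m) :
    ∃ z : ℤ,
      x ∈ Ico ((z:ℝ) * 2 ^ (p m)) ((z:ℝ) * 2 ^ (p m) + 2 ^ (p m)) ∧
      (0:ℝ) ≤ (z:ℝ) * 2 ^ (p m) ∧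
      (z:ℝ) * 2 ^ (p m) + 2 ^ (p m) ≤ (2:ℝ) ^ (p T) ∧
      volume (Xset p T ∩ Ico ((z:ℝ) * 2 ^ (p m)) ((z:ℝ) * 2 ^ (p m) + 2 ^ (p m)))
        = ENNReal.ofReal ((2:ℝ) ^ (p m) * (1/2) ^ m) := by
  have hxC := hx.1
  have hx0 : (0:ℝ) ≤ x := hx.2.1
  have hxT : x < (2:ℝ) ^ (p T) := hx.2.2
  set q : ℝ := (2:ℝ) ^ (p m) with hq
  have hqpos : 0 < q := two_zpow_pos _
  set z : ℤ := ⌊x / q⌋ with hz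
  have hz1 : (z:ℝ) * q ≤ x := (le_div_iff₀ hqpos).mp (Int.floor_le _)
  have hz2 : x < (z:ℝ) * q + q := by
    have := Int.lt_floor_add_one (x / q)
    rw [div_lt_iff₀ hqpos] at this
    push_cast at this
    nlinarith
  have hznn : 0 ≤ z := Int.floor_nonneg.mpr (by positivity)
  have hcell_low : (0:ℝ) ≤ (z:ℝ) * q := by
    have : (0:ℝ) ≤ (z:ℝ) := by exact_mod_cast hznn
    positivity
  -- upper bound
  have hK : (2:ℝ) ^ (p T) = ((2 ^ (p T - p m).toNat : ℕ) : ℝ) * q :=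
    two_zpow_as_mul (p_mono hp hm le_rfl)
  have hcell_high : (z:ℝ) * q + q ≤ (2:ℝ) ^ (p T) := by
    have hzK : z + 1 ≤ (2 ^ (p T - p m).toNat : ℤ) := by
      have hlt : (z:ℝ) * q < ((2 ^ (p T - p m).toNat : ℕ) : ℝ) * q := by
        calc (z:ℝ) * q ≤ x := hz1
          _ < (2:ℝ) ^ (p T) := hxT
          _ = _ := hK
      have := (mul_lt_mul_iff_of_pos_right hqpos).mp hlt
      have : z < ((2 ^ (p T - p m).toNat : ℕ) : ℤ) := by exact_mod_cast this
      push_cast at this ⊢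
      omega
    have hle : ((z + 1 : ℤ) : ℝ) * q ≤ ((2 ^ (p T - p m).toNat : ℕ) : ℝ) * q := by
      apply mul_le_mul_of_nonneg_right _ hqpos.le
      push_cast
      exact_mod_cast hzK
    have e : ((z + 1 : ℤ) : ℝ) * q = (z:ℝ) * q + q := by push_cast; ring
    rw [hK]
    linarith [hle, e]
  refine ⟨z, ⟨hz1, hz2⟩, hcell_low, hcell_high, ?_⟩
  -- the measure computation
  have hsub : Ico ((z:ℝ) * q) ((z:ℝ) * q + q) ⊆ Ico 0 ((2:ℝ) ^ (p T)) :=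
    fun y hy => ⟨le_trans hcell_low hy.1, lt_of_lt_of_le hy.2 hcell_high⟩
  have h1 : Xset p T ∩ Ico ((z:ℝ) * q) ((z:ℝ) * q + q)
      = CSet p (fun _ => some true) T ∩ Ico ((z:ℝ) * q) ((z:ℝ) * q + q) := by
    unfold Xset
    rw [inter_assoc]
    congr 1
    rw [inter_eq_right.mpr hsub]
  have h2 : CSet p (fun _ => some true) T ∩ Ico ((z:ℝ) * q) ((z:ℝ) * q + q)
      = CSet p (fun _ => some true) m ∩ Ico ((z:ℝ) * q) ((z:ℝ) * q + q) := by
    ext y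
    simp only [mem_inter_iff, CSet, mem_setOf_eq]
    constructor
    · rintro ⟨hC, hcell⟩
      exact ⟨fun t h1t h2t => hC t h1t (le_trans h2t hm), hcell⟩
    · rintro ⟨hC, hcell⟩
      refine ⟨fun t h1t h2t => ?_, hcell⟩
      rcases Nat.lt_or_ge m t with h' | h'
      · -- use constancy on the cell
        have hkx : x ∈ keepH (p t - 1) := mem_keepH_of_UsetEps hxC (by omega) h2t
        have hpt : p m ≤ p t - 1 := by
          have := p_strict hp h' h2t
          omega
        have hcst := keepH_const_on_cell (v := p t - 1) hpt z ⟨hz1, hz2⟩ hcell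
        have : y ∈ keepH (p t - 1) := hcst.mpr hkx
        unfold Kt
        exact this
      · exact hC t h1t h'
  rw [h1, h2, cset_cell p T hp _ m hm z, Wt_allTrue]

/-! ### the combinatorial family of exponent tuples -/

def mfun {n : ℕ} (g : Fin n → ℕ) (j : ℕ) : ℕ :=
  ∑ l : Fin n, if j ≤ (l:ℕ) then g l else 0

lemma mfun_zero_of_ge {n : ℕ} (g : Fin n → ℕ) {j : ℕ} (hj : n ≤ j) : mfun g j = 0 := by
  apply Finset.sum_eq_zero
  intro l _
  rw [if_neg (by omega)]

lemma mfun_succ {n : ℕ} (g : Fin n → ℕ) (j : ℕ) :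
    mfun g j = (if h : j < n then g ⟨j, h⟩ else 0) + mfun g (j+1) := by
  unfold mfun
  have hsplit : ∀ l : Fin n, (if j ≤ (l:ℕ) then g l else 0)
      = (if (l:ℕ) = j then g l else 0) + (if j+1 ≤ (l:ℕ) then g l else 0) := by
    intro l
    split_ifs <;> omega
  rw [Finset.sum_congr rfl (fun l _ => hsplit l)]
  rw [Finset.sum_add_distrib]
  congr 1
  by_cases h : j < n
  · rw [dif_pos h]
    rw [Finset.sum_eq_single ⟨j, h⟩]
    · simp
    · intro l _ hl
      rw [if_neg]
      intro hc
      exact hl (Fin.ext hc)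
    · intro hc
      exact absurd (Finset.mem_univ _) hc
  · rw [dif_neg h]
    apply Finset.sum_eq_zero
    intro l _
    rw [if_neg (by omega)]

lemma mfun_antitone {n : ℕ} (g : Fin n → ℕ) {j j' : ℕ} (h : j ≤ j') :
    mfun g j' ≤ mfun g j := by
  apply Finset.sum_le_sum
  intro l _
  split_ifs <;> omega

lemma sum_mfun {n : ℕ} (g : Fin n → ℕ) :
    ∑ j : Fin n, mfun g (j:ℕ) = ∑ l : Fin n, ((l:ℕ)+1) * g l := by
  unfold mfun
  rw [Finset.sum_comm]
  apply Finset.sum_congr rfl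
  intro l _
  rw [← Finset.sum_filter]
  have hfil : Finset.univ.filter (fun j : Fin n => (j:ℕ) ≤ (l:ℕ)) = Finset.Iic l := by
    ext j
    simp only [Finset.mem_filter, Finset.mem_univ, true_and, Finset.mem_Iic, Fin.le_def]
  rw [hfil, Finset.sum_const, Fin.card_Iic]
  simp [mul_comm]

lemma mfun_le_sum {n : ℕ} (g : Fin n → ℕ) (j : ℕ) :
    mfun g j ≤ ∑ l : Fin n, ((l:ℕ)+1) * g l := by
  apply Finset.sum_le_sum
  intro l _
  have h1 : (if j ≤ (l:ℕ) then g l else 0) ≤ g l := by split_ifs <;> omega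
  have h2 : g l ≤ ((l:ℕ)+1) * g l := Nat.le_mul_of_pos_left _ (by omega)
  omega

lemma mfun_inj {n : ℕ} {g g' : Fin n → ℕ} (h : ∀ j, mfun g j = mfun g' j) : g = g' := by
  funext l
  have e1 := mfun_succ g (l:ℕ)
  have e2 := mfun_succ g' (l:ℕ)
  rw [dif_pos l.isLt] at e1 e2
  have hl : (⟨(l:ℕ), l.isLt⟩ : Fin n) = l := rfl
  rw [hl] at e1 e2
  have h1 := h (l:ℕ)
  have h2 := h ((l:ℕ)+1)
  omega

end ST19

open ST19

set_option maxHeartbeats 1000000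

/-- Application VIII (estimate part): sharp weak type `L(1+log⁺L)ⁿ` lower bound in
`ℝ^{n+1}` for the product basis `B₁ × B₂`. -/
theorem statement19 (n : ℕ) (hn : 1 ≤ n) (B1 : Set (BoxInterval n)) (hB1 : IsRareBasis B1)
    (hprop : ∀ k : ℕ, ∃ s : Fin n → ℕ → ℤ,
      (∀ j, ∀ m, m < k → s j m < s j (m + 1)) ∧
      ∀ m : Fin n → ℕ, (∀ j, m j ≤ k) → (∀ i j : Fin n, i ≤ j → m j ≤ m i) →
        (⟨fun _ => 0, fun j => (2:ℝ) ^ s j (m j),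
          fun j => by positivity⟩ : BoxInterval n) ∈ B1)
    (B2 : Set (BoxInterval 1))
    (hB2trans : ∀ I ∈ B2, ∀ v : Fin 1 → ℝ, I.translate v ∈ B2)
    (hB2inf : {l : ℝ | ∃ I ∈ B2, I.side 0 = l}.Infinite)
    (hB2dyadic : {l : ℝ | ∃ I ∈ B2, I.side 0 = l} ⊆ {x | ∃ s : ℤ, x = (2:ℝ) ^ s}) :
    ∃ c : ℝ, 0 < c ∧ ∀ α : ℝ, 0 < α → α < 1 →
      ∃ E : Set (Fin (n + 1) → ℝ), Bornology.IsBounded E ∧ MeasurableSet E ∧ 0 < volume E ∧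
        ENNReal.ofReal (c * (1 / α) * (1 + Real.logb 2 (1 / α)) ^ n) * volume E ≤
          volume {x | ENNReal.ofReal α <
            maxOp (prodBasis B1 B2) (E.indicator fun _ => (1:ℝ)) x} := by
  have hn' : (1:ℝ) ≤ (n:ℝ) := by exact_mod_cast hn
  refine ⟨((2 * (n:ℝ)^2)^n * 2^(n+2))⁻¹, by
    apply inv_pos.mpr
    exact mul_pos (pow_pos (by nlinarith) n) (by positivity), ?_⟩
  intro α hα0 hα1
  set c : ℝ := ((2 * (n:ℝ)^2)^n * 2^(n+2))⁻¹ with hcdef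
  set L : ℝ := Real.logb 2 (1/α) with hLdef
  have h1α : 1 < 1/α := by rw [lt_div_iff₀ hα0]; linarith
  have hLpos : 0 < L := Real.logb_pos (by norm_num) h1α
  have hαL : 1/α = (2:ℝ) ^ L := (Real.rpow_logb two_pos (by norm_num) (by positivity)).symm
  set T : ℕ := (⌈L⌉ - 1).toNat with hTdef
  have hTint : (T:ℤ) = ⌈L⌉ - 1 := Int.toNat_of_nonneg (by
    have := Int.ceil_pos.mpr hLpos; omega)
  have hTR : ((T:ℕ):ℝ) = (⌈L⌉:ℝ) - 1 := by
    have : (((T:ℕ):ℤ):ℝ) = ((⌈L⌉ - 1 : ℤ):ℝ) := by rw [hTint]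
    push_cast at this
    linarith
  have hTL : (T:ℝ) < L := by
    have h2 := Int.ceil_lt_add_one L
    have h2' : ((⌈L⌉:ℤ):ℝ) < L + 1 := by exact_mod_cast h2
    linarith [hTR]
  have hLT1 : L ≤ (T:ℝ) + 1 := by
    have h2 : L ≤ ((⌈L⌉:ℤ):ℝ) := Int.le_ceil L
    linarith [hTR]
  obtain ⟨s, hs_incr, hs_mem⟩ := hprop T
  -- heights from B2
  have hSexp : {σ : ℤ | ∃ I ∈ B2, I.side 0 = (2:ℝ)^σ}.Infinite := by
    intro hfin
    apply hB2inf
    apply Set.Finite.subset (hfin.image (fun σ : ℤ => (2:ℝ)^σ))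
    intro l hl
    obtain ⟨σ, hσ⟩ := hB2dyadic hl
    refine ⟨σ, ?_, hσ.symm⟩
    show ∃ I ∈ B2, I.side 0 = (2:ℝ)^σ
    rw [← hσ]
    exact hl
  obtain ⟨F, hFsub, hFcard⟩ := hSexp.exists_subset_card_eq (T+1)
  set qe := F.orderEmbOfFin hFcard with hqe
  have hqeB2 : ∀ i : Fin (T+1), ∃ I ∈ B2, I.side 0 = (2:ℝ) ^ (qe i) :=
    fun i => hFsub (Finset.orderEmbOfFin_mem F hFcard i)
  -- scale exponents for all n+1 coordinates
  set p : Fin (n+1) → ℕ → ℤ := fun j t =>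
    if h : (j:ℕ) < n then s ⟨(j:ℕ), h⟩ (min t T) else qe ⟨min t T, by omega⟩ with hpdef
  have hp : ∀ j : Fin (n+1), ∀ m, m < T → p j m < p j (m+1) := by
    intro j m hm
    have h1 : min m T = m := by omega
    have h2 : min (m+1) T = m+1 := by omega
    by_cases h : (j:ℕ) < n
    · simp only [hpdef, dif_pos h, h1, h2]
      exact hs_incr ⟨(j:ℕ), h⟩ m hm
    · simp only [hpdef, dif_neg h, h1, h2]
      apply qe.strictMono
      rw [Fin.mk_lt_mk]
      omega
  -- the set E
  set Xc : Fin (n+1) → Set ℝ := fun j => Xset (p j) T with hXc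
  set E : Set (Fin (n+1) → ℝ) := univ.pi Xc with hE
  have hEmeas : MeasurableSet E := MeasurableSet.univ_pi (fun j => measurableSet_Xset _ _)
  have hEbd : Bornology.IsBounded E := by
    apply Bornology.IsBounded.subset
      (Bornology.IsBounded.pi (S := fun j => Ico (0:ℝ) ((2:ℝ)^(p j T)))
        (fun j => Metric.isBounded_Ico 0 ((2:ℝ)^(p j T))))
    rw [hE]
    exact Set.pi_mono (fun j _ => Xset_subset _ _)
  set PP : ℝ := ∏ j : Fin (n+1), (2:ℝ)^(p j T) with hPP
  have hPPpos : 0 < PP := Finset.prod_pos fun j _ => two_zpow_pos _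
  have hvolE : volume E = ENNReal.ofReal (PP * (1/2)^((n+1)*T)) := by
    rw [hE, volume_pi_pi]
    calc (∏ j, volume (Xc j))
        = ∏ j : Fin (n+1), ENNReal.ofReal ((2:ℝ)^(p j T) * (1/2)^T) := by
          apply Finset.prod_congr rfl
          intro j _
          exact volume_Xset (p j) T (hp j)
      _ = ENNReal.ofReal (∏ j : Fin (n+1), ((2:ℝ)^(p j T) * (1/2)^T)) :=
          (ENNReal.ofReal_prod_of_nonneg (fun j _ => by positivity)).symm
      _ = _ := by
          rw [Finset.prod_mul_distrib, Finset.prod_const, Finset.card_univ,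
            Fintype.card_fin, ← pow_mul, ← hPP, Nat.mul_comm T (n+1)]
  have hvolEpos : 0 < volume E := by
    rw [hvolE]
    exact ENNReal.ofReal_pos.mpr (mul_pos hPPpos (by positivity))
  -- tuple family
  set Bd : Fin n → ℕ := fun l => T / (n * ((l:ℕ)+1)) with hBd
  set μf : ((l : Fin n) → Fin (Bd l + 1)) → Fin (n+1) → ℕ := fun b j =>
    if (j:ℕ) < n then mfun (fun l => (b l : ℕ)) (j:ℕ)
    else T - (∑ l : Fin n, ((l:ℕ)+1) * (b l : ℕ)) with hμf
  have hMsum_le : ∀ b : ((l : Fin n) → Fin (Bd l + 1)),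
      (∑ l : Fin n, ((l:ℕ)+1) * ((b l : ℕ))) ≤ T := by
    intro b
    calc ∑ l : Fin n, ((l:ℕ)+1) * (b l : ℕ) ≤ ∑ _l : Fin n, T / n := by
          apply Finset.sum_le_sum
          intro l _
          have hbl : (b l : ℕ) ≤ T / (n * ((l:ℕ)+1)) := by
            have hlt := (b l).isLt
            simp only [hBd] at hlt
            omega
          have e : T / (n * ((l:ℕ)+1)) = T / n / ((l:ℕ)+1) := by
            rw [Nat.div_div_eq_div_mul]
          calc ((l:ℕ)+1) * (b l : ℕ) ≤ ((l:ℕ)+1) * (T / n / ((l:ℕ)+1)) :=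
                Nat.mul_le_mul_left _ (by rw [← e]; exact hbl)
            _ ≤ T / n := by
                rw [mul_comm]
                exact Nat.div_mul_le_self _ _
      _ ≤ T := by
          rw [Finset.sum_const, Finset.card_univ, Fintype.card_fin, smul_eq_mul, mul_comm]
          exact Nat.div_mul_le_self _ _
  have hμ_le : ∀ b j, μf b j ≤ T := by
    intro b j
    simp only [hμf]
    by_cases h : (j:ℕ) < n
    · rw [if_pos h]
      exact le_trans (mfun_le_sum _ _) (hMsum_le b)
    · rw [if_neg h]
      omega
  have hμ_sum : ∀ b, ∑ j : Fin (n+1), μf b j = T := by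
    intro b
    rw [Fin.sum_univ_castSucc]
    have h1 : ∀ i : Fin n, μf b (Fin.castSucc i) = mfun (fun l => ((b l : ℕ))) (i:ℕ) := by
      intro i
      simp only [hμf, Fin.coe_castSucc]
      rw [if_pos i.isLt]
    have h2 : μf b (Fin.last n) = T - ∑ l : Fin n, ((l:ℕ)+1)*((b l : ℕ)) := by
      simp only [hμf, Fin.val_last]
      rw [if_neg (by omega)]
    rw [Finset.sum_congr rfl (fun i _ => h1 i), h2, sum_mfun]
    have := hMsum_le b
    omega
  have hμ_inj : Function.Injective μf := by
    intro b b' hbb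
    have hg : (fun l => ((b l : ℕ))) = (fun l => ((b' l : ℕ))) := by
      apply mfun_inj
      intro j
      by_cases hj : j < n
      · have hjj := congrFun hbb ⟨j, by omega⟩
        rw [hμf] at hjj
        simp only at hjj
        rwa [if_pos hj, if_pos hj] at hjj
      · rw [mfun_zero_of_ge _ (by omega), mfun_zero_of_ge _ (by omega)]
    funext l
    exact Fin.ext (congrFun hg l)
  -- events
  set Ev : ((l : Fin n) → Fin (Bd l + 1)) → Set (Fin (n+1) → ℝ) := fun b =>
    univ.pi fun j => Uset (p j) T (μf b j) with hEv
  have hEvmeas : ∀ b, MeasurableSet (Ev b) :=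
    fun b => MeasurableSet.univ_pi fun j => measurableSet_Uset _ _ _
  have hEvdisj : ∀ b b', b ≠ b' → Disjoint (Ev b) (Ev b') := by
    intro b b' hne
    have hμne : μf b ≠ μf b' := fun h => hne (hμ_inj h)
    obtain ⟨j, hj⟩ : ∃ j, μf b j ≠ μf b' j := by
      by_contra hcon
      push_neg at hcon
      exact hμne (funext hcon)
    rw [Set.disjoint_left]
    intro x hx hx'
    have h1 : x j ∈ Uset (p j) T (μf b j) := hx j (mem_univ _)
    have h2 : x j ∈ Uset (p j) T (μf b' j) := hx' j (mem_univ _)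
    rcases Nat.lt_or_ge (μf b j) (μf b' j) with h | h
    · exact (Uset_disjoint (p j) T h (hμ_le b' j)).le_bot ⟨h1, h2⟩
    · have h' : μf b' j < μf b j := by omega
      exact (Uset_disjoint (p j) T h' (hμ_le b j)).le_bot ⟨h2, h1⟩
  -- events are inside the level set
  have hEvLevel : ∀ b, Ev b ⊆ {x | ENNReal.ofReal α <
      maxOp (prodBasis B1 B2) (E.indicator fun _ => (1:ℝ)) x} := by
    intro b x hx
    have hxj : ∀ j, x j ∈ Uset (p j) T (μf b j) := fun j => hx j (mem_univ _)
    have hcell := fun j : Fin (n+1) =>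
      Uset_avg_cell (p j) T (hp j) (hμ_le b j) (hxj j)
    choose z hz1 hz2 hz3 hz4 using hcell
    set len : Fin (n+1) → ℝ := fun j => (2:ℝ)^(p j (μf b j)) with hlen
    set C : Fin (n+1) → ℝ := fun j => (z j : ℝ) * len j with hC
    have hlenpos : ∀ j, 0 < len j := fun j => two_zpow_pos _
    -- J1
    set m1 : Fin n → ℕ := fun i => μf b (Fin.castSucc i) with hm1
    have hm1val : ∀ i : Fin n, m1 i = mfun (fun l => ((b l : ℕ))) (i:ℕ) := by
      intro i
      simp only [hm1, hμf, Fin.coe_castSucc]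
      rw [if_pos i.isLt]
    have hJ1mem : (⟨fun _ => 0, fun i => (2:ℝ) ^ s i (m1 i), fun i => by positivity⟩ :
        BoxInterval n) ∈ B1 := by
      apply hs_mem
      · intro i
        exact hμ_le b _
      · intro i i' hii
        rw [hm1val i, hm1val i']
        exact mfun_antitone _ hii
    set J1 : BoxInterval n := BoxInterval.translate
      ⟨fun _ => 0, fun i => (2:ℝ) ^ s i (m1 i), fun i => by positivity⟩
      (fun i => C (Fin.castSucc i)) with hJ1
    have hJ1mem' : J1 ∈ B1 := hB1.2 _ hJ1mem _
    -- J2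
    have hμlast : μf b (Fin.last n) ≤ T := hμ_le b _
    obtain ⟨I2, hI2B, hI2side⟩ := hqeB2 ⟨μf b (Fin.last n), by omega⟩
    set J2 : BoxInterval 1 := I2.translate (fun _ => C (Fin.last n) - I2.a 0) with hJ2
    have hJ2mem : J2 ∈ B2 := hB2trans _ hI2B _
    set R : BoxInterval (n+1) := prodBox J1 J2 with hR
    have hRB : R ∈ prodBasis B1 B2 := ⟨J1, hJ1mem', J2, hJ2mem, rfl⟩
    -- endpoint identification
    have hlen_cast : ∀ i : Fin n, len (Fin.castSucc i) = (2:ℝ) ^ s i (m1 i) := by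
      intro i
      have hmin : min (μf b (Fin.castSucc i)) T = μf b (Fin.castSucc i) :=
        min_eq_left (hμ_le b _)
      simp only [hlen, hpdef, Fin.coe_castSucc, dif_pos i.isLt, hmin, Fin.eta]
      rfl
    have hlen_last : len (Fin.last n) = I2.side 0 := by
      have hmin : min (μf b (Fin.last n)) T = μf b (Fin.last n) := min_eq_left hμlast
      simp only [hlen, hpdef, Fin.val_last, hmin]
      rw [dif_neg (by omega), hI2side]
    have ha : ∀ j, R.a j = C j := by
      intro j
      induction j using Fin.lastCases with
      | last =>
        show (Fin.snoc J1.a (J2.a 0) : Fin (n+1) → ℝ) (Fin.last n) = _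
        rw [Fin.snoc_last]
        simp only [hJ2, BoxInterval.translate]
        ring
      | cast i =>
        show (Fin.snoc J1.a (J2.a 0) : Fin (n+1) → ℝ) (Fin.castSucc i) = _
        rw [Fin.snoc_castSucc]
        simp only [hJ1, BoxInterval.translate]
        ring
    have hbb : ∀ j, R.b j = C j + len j := by
      intro j
      induction j using Fin.lastCases with
      | last =>
        show (Fin.snoc J1.b (J2.b 0) : Fin (n+1) → ℝ) (Fin.last n) = _
        rw [Fin.snoc_last]
        simp only [hJ2, BoxInterval.translate]
        rw [hlen_last]
        simp only [BoxInterval.side]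
        ring
      | cast i =>
        show (Fin.snoc J1.b (J2.b 0) : Fin (n+1) → ℝ) (Fin.castSucc i) = _
        rw [Fin.snoc_castSucc]
        simp only [hJ1, BoxInterval.translate]
        rw [hlen_cast i]
        ring
    have hRset : R.toSet = univ.pi fun j => Icc (C j) (C j + len j) := by
      show univ.pi (fun j => Icc (R.a j) (R.b j)) = _
      rw [show (fun j => Icc (R.a j) (R.b j)) = fun j => Icc (C j) (C j + len j) from
        funext fun j => by rw [ha j, hbb j]]
    have hxR : x ∈ R.toSet := by
      rw [hRset]
      intro j _
      exact ⟨(hz1 j).1, ((hz1 j).2).le⟩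
    have hnum : ENNReal.ofReal ((∏ j, len j) * (1/2:ℝ)^T) ≤ volume (E ∩ R.toSet) := by
      rw [hRset, hE, ← Set.pi_inter_distrib, volume_pi_pi]
      calc ENNReal.ofReal ((∏ j, len j) * (1/2:ℝ)^T)
          = ENNReal.ofReal (∏ j, (len j * (1/2:ℝ)^(μf b j))) := by
            congr 1
            rw [Finset.prod_mul_distrib, Finset.prod_pow_eq_pow_sum, hμ_sum b]
        _ = ∏ j, ENNReal.ofReal (len j * (1/2:ℝ)^(μf b j)) :=
            ENNReal.ofReal_prod_of_nonneg (fun j _ => by positivity)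
        _ = ∏ j, volume (Xset (p j) T ∩ Ico (C j) (C j + len j)) := by
            apply Finset.prod_congr rfl
            intro j _
            exact (hz4 j).symm
        _ ≤ ∏ j, volume (Xc j ∩ Icc (C j) (C j + len j)) := by
            apply Finset.prod_le_prod'
            intro j _
            exact measure_mono (inter_subset_inter_right _ Ico_subset_Icc_self)
    have hden : volume R.toSet = ENNReal.ofReal (∏ j, len j) := by
      rw [hRset, volume_pi_pi]
      calc (∏ j, volume (Icc (C j) (C j + len j)))
          = ∏ j, ENNReal.ofReal (len j) := by
            apply Finset.prod_congr rfl
            intro j _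
            rw [Real.volume_Icc]
            congr 1
            ring
        _ = ENNReal.ofReal (∏ j, len j) :=
            (ENNReal.ofReal_prod_of_nonneg (fun j _ => (hlenpos j).le)).symm
    have hint : (∫⁻ y in R.toSet, ENNReal.ofReal |E.indicator (fun _ => (1:ℝ)) y| ∂volume)
        = volume (E ∩ R.toSet) := by
      have hfeq : (fun y => ENNReal.ofReal |E.indicator (fun _ => (1:ℝ)) y|)
          = E.indicator (fun _ => (1:ℝ≥0∞)) := by
        funext y
        by_cases hy : y ∈ E
        · simp [hy]
        · simp [hy]
      rw [hfeq, lintegral_indicator hEmeas, setLIntegral_one, Measure.restrict_apply hEmeas]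
    have hprodpos : (0:ℝ) < ∏ j, len j := Finset.prod_pos fun j _ => hlenpos j
    have hden0 : ENNReal.ofReal (∏ j, len j) ≠ 0 :=
      (ENNReal.ofReal_pos.mpr hprodpos).ne'
    have hub : ENNReal.ofReal ((1/2:ℝ)^T)
        ≤ (∫⁻ y in R.toSet, ENNReal.ofReal |E.indicator (fun _ => (1:ℝ)) y| ∂volume)
          / volume R.toSet := by
      rw [hint, hden, ENNReal.le_div_iff_mul_le (Or.inl hden0) (Or.inl ENNReal.ofReal_ne_top),
        ← ENNReal.ofReal_mul (by positivity)]
      refine le_trans (le_of_eq ?_) hnum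
      rw [mul_comm]
    have hαinv : ((2:ℝ)^L)⁻¹ = α := by
      rw [← hαL]
      simp [one_div]
    have hTα : α < (1/2:ℝ)^T := by
      have h2T : (2:ℝ)^((T:ℕ):ℝ) < (2:ℝ)^L := (Real.rpow_lt_rpow_left_iff one_lt_two).mpr hTL
      rw [Real.rpow_natCast 2 T] at h2T
      have h2Tpos : (0:ℝ) < 2^(T:ℕ) := by positivity
      have hinv : ((2:ℝ)^L)⁻¹ < ((2:ℝ)^(T:ℕ))⁻¹ := by
        apply inv_strictAnti₀ h2Tpos h2T
      rw [hαinv] at hinv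
      calc α < ((2:ℝ)^(T:ℕ))⁻¹ := hinv
        _ = (1/2:ℝ)^T := by rw [one_div, inv_pow]
    show ENNReal.ofReal α < maxOp (prodBasis B1 B2) (E.indicator fun _ => (1:ℝ)) x
    calc ENNReal.ofReal α < ENNReal.ofReal ((1/2:ℝ)^T) :=
          (ENNReal.ofReal_lt_ofReal_iff (by positivity)).mpr hTα
      _ ≤ (∫⁻ y in R.toSet, ENNReal.ofReal |E.indicator (fun _ => (1:ℝ)) y| ∂volume)
            / volume R.toSet := hub
      _ ≤ maxOp (prodBasis B1 B2) (E.indicator fun _ => (1:ℝ)) x :=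
          le_iSup_of_le R (le_iSup_of_le hRB (le_iSup_of_le hxR le_rfl))
  refine ⟨E, hEbd, hEmeas, hvolEpos, ?_⟩
  set N : ℕ := ∏ l : Fin n, (Bd l + 1) with hN
  have hcard : Fintype.card ((l : Fin n) → Fin (Bd l + 1)) = N := by
    rw [Fintype.card_pi]
    apply Finset.prod_congr rfl
    intro l _
    exact Fintype.card_fin _
  have hUnion : (∑ b : ((l : Fin n) → Fin (Bd l + 1)), volume (Ev b))
      ≤ volume {x | ENNReal.ofReal α <
        maxOp (prodBasis B1 B2) (E.indicator fun _ => (1:ℝ)) x} := by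
    rw [← measure_biUnion_finset (fun b _ b' _ hne => hEvdisj b b' hne)
      (fun b _ => hEvmeas b)]
    apply measure_mono
    intro y hy
    simp only [mem_iUnion] at hy
    obtain ⟨b, -, hb⟩ := hy
    exact hEvLevel b hb
  have hEvVol : ∀ b, ENNReal.ofReal (PP * (1/2:ℝ)^((n+1)*(T+1) - T)) ≤ volume (Ev b) := by
    intro b
    have hexp : (∑ j : Fin (n+1), (T + 1 - μf b j)) = (n+1)*(T+1) - T := by
      have h2 : (∑ j : Fin (n+1), (T + 1 - μf b j)) + (∑ j : Fin (n+1), μf b j)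
          = (n+1) * (T+1) := by
        rw [← Finset.sum_add_distrib]
        have hterm : ∀ j ∈ (Finset.univ : Finset (Fin (n+1))),
            (T + 1 - μf b j) + μf b j = T + 1 := by
          intro j _
          have := hμ_le b j
          omega
        rw [Finset.sum_congr rfl hterm, Finset.sum_const, Finset.card_univ,
          Fintype.card_fin, smul_eq_mul]
      have h3 := hμ_sum b
      omega
    calc ENNReal.ofReal (PP * (1/2:ℝ)^((n+1)*(T+1) - T))
        = ENNReal.ofReal (∏ j : Fin (n+1), ((2:ℝ)^(p j T) * (1/2:ℝ)^(T + 1 - μf b j))) := by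
          congr 1
          rw [Finset.prod_mul_distrib, Finset.prod_pow_eq_pow_sum, hexp, ← hPP]
      _ = ∏ j : Fin (n+1), ENNReal.ofReal ((2:ℝ)^(p j T) * (1/2:ℝ)^(T + 1 - μf b j)) :=
          ENNReal.ofReal_prod_of_nonneg (fun j _ => by positivity)
      _ ≤ ∏ j, volume (Uset (p j) T (μf b j)) := by
          apply Finset.prod_le_prod'
          intro j _
          exact volume_Uset_ge (p j) T (hp j) (hμ_le b j)
      _ = volume (Ev b) := by
          rw [hEv]
          rw [volume_pi_pi]
  have hNlower : (N : ℝ≥0∞) * ENNReal.ofReal (PP * (1/2:ℝ)^((n+1)*(T+1) - T))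
      ≤ ∑ b : ((l : Fin n) → Fin (Bd l + 1)), volume (Ev b) := by
    have hh := Finset.card_nsmul_le_sum Finset.univ (fun b => volume (Ev b))
      (ENNReal.ofReal (PP * (1/2:ℝ)^((n+1)*(T+1) - T))) (fun b _ => hEvVol b)
    rw [Finset.card_univ, hcard] at hh
    simpa [nsmul_eq_mul] using hh
  have hN_ge : (((T:ℝ)+1)/(n:ℝ)^2)^n ≤ (N:ℝ) := by
    have hNcast : (N:ℝ) = ∏ l : Fin n, ((Bd l : ℝ) + 1) := by
      rw [hN]
      push_cast
      rfl
    rw [hNcast]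
    calc (((T:ℝ)+1)/(n:ℝ)^2)^n = ∏ _l : Fin n, (((T:ℝ)+1)/(n:ℝ)^2) := by
          rw [Finset.prod_const, Finset.card_univ, Fintype.card_fin]
      _ ≤ ∏ l : Fin n, ((Bd l : ℝ) + 1) := by
          apply Finset.prod_le_prod
          · intro l _
            positivity
          · intro l _
            have hnl : 0 < n * ((l:ℕ)+1) := by positivity
            have hnat : T + 1 ≤ (n * ((l:ℕ)+1)) * (Bd l + 1) := by
              have hlt := Nat.lt_mul_div_succ T hnl
              simp only [hBd]
              exact hlt
            have hreal : ((T:ℝ)+1) ≤ ((n:ℝ) * (((l:ℕ):ℝ)+1)) * ((Bd l : ℝ) + 1) := by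
              exact_mod_cast hnat
            have hle2 : ((n:ℝ) * (((l:ℕ):ℝ)+1)) ≤ (n:ℝ)^2 := by
              have hli : ((l:ℕ):ℝ) + 1 ≤ (n:ℝ) := by
                have := l.isLt
                exact_mod_cast this
              nlinarith
            rw [div_le_iff₀ (by positivity)]
            have hBdpos : (0:ℝ) ≤ (Bd l : ℝ) + 1 := by positivity
            nlinarith
  have h2T : (1:ℝ)/α ≤ 2 * 2^T := by
    rw [hαL]
    calc (2:ℝ)^L ≤ (2:ℝ)^(((T:ℕ):ℝ)+1) := (Real.rpow_le_rpow_left_iff one_lt_two).mpr hLT1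
      _ = 2 * 2^(T:ℕ) := by
        rw [show ((T:ℕ):ℝ)+1 = (((T+1:ℕ)):ℝ) by push_cast; ring, Real.rpow_natCast]
        ring
  have hL2 : 1 + L ≤ 2*((T:ℝ)+1) := by linarith
  have hc0 : 0 ≤ c := by
    rw [hcdef]
    positivity
  have hKEY : c * (1/α) * (1 + L)^n * (PP * (1/2:ℝ)^((n+1)*T))
      ≤ (N:ℝ) * (PP * (1/2:ℝ)^((n+1)*(T+1) - T)) := by
    have hcan : ((1:ℝ)/2)^T * 2^T = 1 := by
      rw [one_div, inv_pow, inv_mul_cancel₀ (by positivity)]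
    have hX : (1/2:ℝ)^((n+1)*(T+1) - T) = (1/2)^((n+1)*T) * (1/2)^(n+1) * 2^T := by
      have hpow : ((1:ℝ)/2)^((n+1)*(T+1) - T) * (1/2)^T = (1/2)^((n+1)*T) * (1/2)^(n+1) := by
        rw [← pow_add, ← pow_add]
        congr 1
        have hT' : T ≤ (n+1)*(T+1) := by
          calc T ≤ T + 1 := by omega
            _ ≤ (n+1)*(T+1) := Nat.le_mul_of_pos_left _ (by omega)
        rw [Nat.sub_add_cancel hT']
        ring
      calc (1/2:ℝ)^((n+1)*(T+1) - T)
          = (1/2)^((n+1)*(T+1) - T) * ((1/2)^T * 2^T) := by rw [hcan, mul_one]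
        _ = ((1/2)^((n+1)*(T+1) - T) * (1/2)^T) * 2^T := by ring
        _ = _ := by rw [hpow]
    have hstep1 : c * (1/α) * (1+L)^n * (1/2:ℝ)^T ≤ (N:ℝ) * (1/2:ℝ)^(n+1) := by
      have e1 : (1+L)^n ≤ (2*((T:ℝ)+1))^n := pow_le_pow_left₀ (by linarith) hL2 n
      have e2 : (1/α) * (1/2:ℝ)^T ≤ 2 := by
        have hh : (1/2:ℝ)^T = ((2:ℝ)^T)⁻¹ := by rw [one_div, inv_pow]
        rw [hh, ← div_eq_mul_inv, div_le_iff₀ (by positivity)]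
        linarith [h2T]
      calc c * (1/α) * (1+L)^n * (1/2:ℝ)^T
          = c * ((1/α) * (1/2)^T) * (1+L)^n := by ring
        _ ≤ c * 2 * (2*((T:ℝ)+1))^n := by
            apply mul_le_mul _ e1 (pow_nonneg (by linarith) n)
              (mul_nonneg hc0 (by norm_num))
            exact mul_le_mul_of_nonneg_left e2 hc0
        _ = (((T:ℝ)+1)/(n:ℝ)^2)^n * (1/2:ℝ)^(n+1) := by
            rw [hcdef]
            have hnne : (n:ℝ) ≠ 0 := by positivity
            rw [mul_pow 2 ((T:ℝ)+1) n, div_pow, mul_pow 2 ((n:ℝ)^2) n]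
            field_simp
            ring
            rw [← mul_pow]; norm_num
        _ ≤ (N:ℝ) * (1/2:ℝ)^(n+1) :=
            mul_le_mul_of_nonneg_right hN_ge (by positivity)
    have hmul := mul_le_mul_of_nonneg_right hstep1
      (show (0:ℝ) ≤ PP * (1/2:ℝ)^((n+1)*T) * 2^T from by
        have := hPPpos
        positivity)
    rw [hX]
    calc c * (1/α) * (1 + L)^n * (PP * (1/2:ℝ)^((n+1)*T))
        = c * (1/α) * (1 + L)^n * (PP * (1/2:ℝ)^((n+1)*T)) * ((1/2:ℝ)^T * 2^T) := by
          rw [hcan, mul_one]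
      _ = (c * (1/α) * (1+L)^n * (1/2:ℝ)^T) * (PP * (1/2:ℝ)^((n+1)*T) * 2^T) := by ring
      _ ≤ ((N:ℝ) * (1/2:ℝ)^(n+1)) * (PP * (1/2:ℝ)^((n+1)*T) * 2^T) := hmul
      _ = (N:ℝ) * (PP * ((1/2:ℝ)^((n+1)*T) * (1/2:ℝ)^(n+1) * 2^T)) := by ring
  have hA0 : 0 ≤ c * (1/α) * (1 + L)^n :=
    mul_nonneg (mul_nonneg hc0 (by positivity)) (pow_nonneg (by linarith) n)
  calc ENNReal.ofReal (c * (1 / α) * (1 + L) ^ n) * volume E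
      = ENNReal.ofReal (c * (1/α) * (1 + L)^n * (PP * (1/2:ℝ)^((n+1)*T))) := by
        rw [hvolE, ← ENNReal.ofReal_mul hA0]
    _ ≤ ENNReal.ofReal ((N:ℝ) * (PP * (1/2:ℝ)^((n+1)*(T+1) - T))) :=
        ENNReal.ofReal_le_ofReal hKEY
    _ = (N:ℝ≥0∞) * ENNReal.ofReal (PP * (1/2:ℝ)^((n+1)*(T+1) - T)) := by
        rw [ENNReal.ofReal_mul (Nat.cast_nonneg N), ENNReal.ofReal_natCast]
    _ ≤ ∑ b : ((l : Fin n) → Fin (Bd l + 1)), volume (Ev b) := hNlower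
    _ ≤ _ := hUnion


end
end
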